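/- arXiv:2007.03814 — 10 statements merged into one kernel-verified Lean document; each statement's English description precedes it below -/
import Mathlib

section
/- For probability measures Q and P on a measurable space with Q absolutely continuous with respect to P, for any α > 1 and any bounded measurable function g, (1/(α-1)) log ∫ e^{(α-1)g} dQ ≤ (1/α) log ∫ e^{αg} dP + (1/(α(α-1))) log ∫ (dQ/dP)^α dP. -/
open MeasureTheory Real
open scoped ENNReal NNReal

lemma integrable_exp_mul_of_bounded {Ω : Type*} [MeasurableSpace Ω] (μ : Measure Ω)
    [IsProbabilityMeasure μ] (c : ℝ) {g : Ω → ℝ} (hg : Measurable g) {C : ℝ}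
    (hgb : ∀ x, |g x| ≤ C) :
    Integrable (fun x => Real.exp (c * g x)) μ := by
  refine Integrable.mono' (integrable_const (Real.exp (|c| * C))) ?_ ?_
  · exact ((Real.measurable_exp.comp (hg.const_mul c))).aestronglyMeasurable
  · refine Filter.Eventually.of_forall fun x => ?_
    rw [Real.norm_eq_abs, abs_of_pos (Real.exp_pos _)]
    apply Real.exp_le_exp.2
    calc c * g x ≤ |c * g x| := le_abs_self _
    _ = |c| * |g x| := abs_mul _ _
    _ ≤ |c| * C := by
        have h0 : (0:ℝ) ≤ |g x| := abs_nonneg _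
        nlinarith [abs_nonneg c, hgb x]

/-- For probability measures `Q ≪ P`, `α > 1` and bounded measurable `g`,
`(1/(α-1)) log ∫ e^{(α-1)g} dQ ≤ (1/α) log ∫ e^{αg} dP + (1/(α(α-1))) log ∫ (dQ/dP)^α dP`,
where the last term (hence the RHS) may be `+∞`. -/
theorem renyi_holder_bound {Ω : Type*} [MeasurableSpace Ω]
    (Q P : Measure Ω) [IsProbabilityMeasure Q] [IsProbabilityMeasure P]
    (hQP : Q ≪ P) {α : ℝ} (hα : 1 < α)
    (g : Ω → ℝ) (hg : Measurable g) (hgb : ∃ C, ∀ x, |g x| ≤ C) :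
    (((α - 1)⁻¹ * Real.log (∫ x, Real.exp ((α - 1) * g x) ∂Q) : ℝ) : EReal)
      ≤ ((α⁻¹ * Real.log (∫ x, Real.exp (α * g x) ∂P) : ℝ) : EReal)
        + ((α * (α - 1))⁻¹ : ℝ) * ENNReal.log (∫⁻ x, (Q.rnDeriv P x) ^ α ∂P) := by
  obtain ⟨C, hgb⟩ := hgb
  have hα0 : (0:ℝ) < α := lt_trans one_pos hα
  have hα1 : (0:ℝ) < α - 1 := sub_pos.2 hα
  set I : ℝ≥0∞ := ∫⁻ x, (Q.rnDeriv P x) ^ α ∂P with hI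
  by_cases hItop : I = ⊤
  · rw [hItop, ENNReal.log_top, EReal.coe_mul_top_of_pos (by positivity),
      EReal.add_top_of_ne_bot (EReal.coe_ne_bot _)]
    exact le_top
  -- I ≠ ⊤ case
  have hrn : Measurable (Q.rnDeriv P) := Measure.measurable_rnDeriv Q P
  have hI0 : I ≠ 0 := by
    intro h0
    have := (lintegral_eq_zero_iff (hrn.pow_const α)).1 h0
    have hae : Q.rnDeriv P =ᵐ[P] 0 := this.mono fun x hx => by
      simp only [Pi.zero_apply] at hx ⊢
      rcases (ENNReal.rpow_eq_zero_iff.1 hx) with ⟨h, _⟩ | ⟨h, hneg⟩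
      · exact h
      · exact absurd hneg (by linarith)
    have hQ0 : ∫⁻ x, Q.rnDeriv P x ∂P = 0 := by
      rw [lintegral_congr_ae hae]; simp
    have := Measure.lintegral_rnDeriv hQP
    rw [hQ0] at this
    simp [measure_univ] at this
  -- integrability
  have hint1 : Integrable (fun x => Real.exp ((α-1) * g x)) Q :=
    integrable_exp_mul_of_bounded Q (α-1) hg hgb
  have hint2 : Integrable (fun x => Real.exp (α * g x)) P :=
    integrable_exp_mul_of_bounded P α hg hgb
  set A : ℝ := ∫ x, Real.exp ((α - 1) * g x) ∂Q with hA
  set B : ℝ := ∫ x, Real.exp (α * g x) ∂P with hB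
  have hApos : 0 < A := integral_exp_pos hint1
  have hBpos : 0 < B := integral_exp_pos hint2
  have hL1 : (∫⁻ x, ENNReal.ofReal (Real.exp ((α-1) * g x)) ∂Q) = ENNReal.ofReal A :=
    (ofReal_integral_eq_lintegral_ofReal hint1
      (Filter.Eventually.of_forall fun x => (Real.exp_pos _).le)).symm
  have hL2 : (∫⁻ x, ENNReal.ofReal (Real.exp (α * g x)) ∂P) = ENNReal.ofReal B :=
    (ofReal_integral_eq_lintegral_ofReal hint2
      (Filter.Eventually.of_forall fun x => (Real.exp_pos _).le)).symm
  -- conjugate exponents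
  set p : ℝ := α / (α - 1) with hp
  have hpq : p.HolderConjugate α := by
    rw [Real.holderConjugate_iff]
    constructor
    · rw [hp]; rw [lt_div_iff₀ hα1]; linarith
    · rw [hp]; field_simp; ring
  -- Hölder
  have hf : AEMeasurable (fun x => ENNReal.ofReal (Real.exp ((α-1) * g x))) P :=
    (ENNReal.measurable_ofReal.comp (Real.measurable_exp.comp
      (hg.const_mul (α-1)))).aemeasurable
  have holder := ENNReal.lintegral_mul_le_Lp_mul_Lq P hpq hf hrn.aemeasurable
  have hmulQ : (∫⁻ x, ((fun x => ENNReal.ofReal (Real.exp ((α-1) * g x))) *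
      (Q.rnDeriv P)) x ∂P) = ENNReal.ofReal A := by
    rw [← hL1]
    simp only [Pi.mul_apply]
    rw [← MeasureTheory.lintegral_rnDeriv_mul hQP hf]
    congr 1
    ext x
    ring
  have hpow : ∀ x, (ENNReal.ofReal (Real.exp ((α-1) * g x))) ^ p
      = ENNReal.ofReal (Real.exp (α * g x)) := by
    intro x
    rw [ENNReal.ofReal_rpow_of_pos (Real.exp_pos _), ← Real.exp_mul]
    congr 1
    rw [hp]; field_simp
  rw [hmulQ] at holder
  simp only [hpow] at holder
  rw [hL2, ← hI] at holder
  -- pass to reals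
  have hIR : 0 < I.toReal := ENNReal.toReal_pos hI0 hItop
  have hreal : A ≤ B ^ (1/p) * I.toReal ^ (1/α) := by
    have := ENNReal.toReal_mono ?_ holder
    · rwa [ENNReal.toReal_mul, ← ENNReal.toReal_rpow, ← ENNReal.toReal_rpow,
        ENNReal.toReal_ofReal hApos.le, ENNReal.toReal_ofReal hBpos.le] at this
    · exact ENNReal.mul_ne_top (ENNReal.rpow_ne_top_of_nonneg (by positivity)
        ENNReal.ofReal_ne_top) (ENNReal.rpow_ne_top_of_nonneg (by positivity) hItop)
  have hlog : Real.log A ≤ (1/p) * Real.log B + (1/α) * Real.log I.toReal := by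
    calc Real.log A ≤ Real.log (B ^ (1/p) * I.toReal ^ (1/α)) :=
          Real.log_le_log hApos hreal
    _ = (1/p) * Real.log B + (1/α) * Real.log I.toReal := by
        rw [Real.log_mul (by positivity) (by positivity), Real.log_rpow hBpos,
          Real.log_rpow hIR]
  -- final real inequality
  have hfinal : (α - 1)⁻¹ * Real.log A
      ≤ α⁻¹ * Real.log B + (α * (α - 1))⁻¹ * Real.log I.toReal := by
    have h2 : (α-1)⁻¹ * ((1/p) * Real.log B + (1/α) * Real.log I.toReal)
        = α⁻¹ * Real.log B + (α * (α - 1))⁻¹ * Real.log I.toReal := by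
      rw [hp]; field_simp
    rw [← h2]
    exact mul_le_mul_of_nonneg_left hlog (by positivity)
  rw [ENNReal.log_pos_real hI0 hItop]
  rw [← EReal.coe_mul, ← EReal.coe_add]
  exact_mod_cast hfinal
end

section
/- For probability measures Q and P on a measurable space, for any α ∈ (0,1) and any bounded measurable function g, (1/(α-1)) log ∫ e^{(α-1)g} dQ - (1/α) log ∫ e^{αg} dP ≤ R_α(Q‖P), where R_α(Q‖P) = (1/(α(α-1))) log ∫_{p>0} q^α p^{1-α} dν for any common dominating σ-finite measure ν with dQ = q dν, dP = p dν. -/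
open MeasureTheory Real
open scoped ENNReal NNReal

/-- For `α ∈ (0,1)` and bounded measurable `g`,
`(1/(α-1)) log ∫ e^{(α-1)g} dQ - (1/α) log ∫ e^{αg} dP ≤ R_α(Q‖P)`, where
`R_α(Q‖P) = (1/(α(α-1))) log ∫_{p>0} q^α p^{1-α} dν` for a common dominating
σ-finite measure `ν` with densities `q`, `p`. -/
theorem renyi_lower_bound_alpha_lt_one {Ω : Type*} [MeasurableSpace Ω]
    (Q P ν : Measure Ω) [IsProbabilityMeasure Q] [IsProbabilityMeasure P] [SigmaFinite ν]
    (q p : Ω → ℝ≥0∞) (hq : Measurable q) (hp : Measurable p)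
    (hQ : Q = ν.withDensity q) (hP : P = ν.withDensity p)
    {α : ℝ} (hα0 : 0 < α) (hα1 : α < 1)
    (g : Ω → ℝ) (hg : Measurable g) (hgb : ∃ C, ∀ x, |g x| ≤ C) :
    (((α - 1)⁻¹ * Real.log (∫ x, Real.exp ((α - 1) * g x) ∂Q)
        - α⁻¹ * Real.log (∫ x, Real.exp (α * g x) ∂P) : ℝ) : EReal)
      ≤ ((α * (α - 1))⁻¹ : ℝ)
          * ENNReal.log (∫⁻ x in {x | p x ≠ 0}, (q x) ^ α * (p x) ^ (1 - α) ∂ν) := by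
  obtain ⟨C, hC⟩ := hgb
  have hα1' : (0:ℝ) < 1 - α := by linarith
  set E1 : Ω → ℝ≥0∞ := fun x => ENNReal.ofReal (Real.exp ((α - 1) * g x)) with hE1
  set E2 : Ω → ℝ≥0∞ := fun x => ENNReal.ofReal (Real.exp (α * g x)) with hE2
  have hmE1 : Measurable E1 := ENNReal.measurable_ofReal.comp
    (Real.measurable_exp.comp (measurable_const.mul hg))
  have hmE2 : Measurable E2 := ENNReal.measurable_ofReal.comp
    (Real.measurable_exp.comp (measurable_const.mul hg))
  -- integrability of the exponentials
  have hint : ∀ (μ : Measure Ω) [IsProbabilityMeasure μ] (c : ℝ),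
      Integrable (fun x => Real.exp (c * g x)) μ := by
    intro μ _ c
    refine Integrable.mono' (integrable_const (Real.exp (|c| * C))) ?_ ?_
    · exact (Real.measurable_exp.comp (measurable_const.mul hg)).aestronglyMeasurable
    · filter_upwards with x
      rw [Real.norm_eq_abs, abs_of_pos (Real.exp_pos _)]
      refine Real.exp_le_exp.2 ?_
      calc c * g x ≤ |c * g x| := le_abs_self _
        _ = |c| * |g x| := abs_mul _ _
        _ ≤ |c| * C := mul_le_mul_of_nonneg_left (hC x) (abs_nonneg _)
  have hint1 : Integrable (fun x => Real.exp ((α - 1) * g x)) Q := hint Q (α - 1)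
  have hint2 : Integrable (fun x => Real.exp (α * g x)) P := hint P α
  set A := ∫ x, Real.exp ((α - 1) * g x) ∂Q with hAdef
  set B := ∫ x, Real.exp (α * g x) ∂P with hBdef
  have hA : 0 < A := integral_exp_pos hint1
  have hB : 0 < B := integral_exp_pos hint2
  have hQl : ENNReal.ofReal A = ∫⁻ x, E1 x ∂Q :=
    ofReal_integral_eq_lintegral_ofReal hint1 (ae_of_all _ fun x => (Real.exp_pos _).le)
  have hPl : ENNReal.ofReal B = ∫⁻ x, E2 x ∂P :=
    ofReal_integral_eq_lintegral_ofReal hint2 (ae_of_all _ fun x => (Real.exp_pos _).le)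
  -- Hölder
  have hconj : Real.HolderConjugate (1/α) (1/(1-α)) := by
    exact Real.holderConjugate_one_div hα0 hα1' (by ring)
  set I := ∫⁻ x in {x | p x ≠ 0}, (q x) ^ α * (p x) ^ (1 - α) ∂ν with hIdef
  set ν' := ν.restrict {x | p x ≠ 0} with hν'
  have key : I ≤ (∫⁻ x, (q * E1) x ∂ν) ^ α * (∫⁻ x, (p * E2) x ∂ν) ^ (1-α) := by
    have h := ENNReal.lintegral_mul_le_Lp_mul_Lq ν' hconj
      ((hq.mul hmE1).pow_const α).aemeasurable ((hp.mul hmE2).pow_const (1-α)).aemeasurable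
    have hlhs : ∀ x, ((fun x => (q x * E1 x) ^ α) * fun x => (p x * E2 x) ^ (1-α)) x
        = q x ^ α * p x ^ (1 - α) := by
      intro x
      have e1 : E1 x ^ α = ENNReal.ofReal (Real.exp ((α - 1) * g x * α)) := by
        rw [hE1, ENNReal.ofReal_rpow_of_pos (Real.exp_pos _), ← Real.exp_mul]
      have e2 : E2 x ^ (1-α) = ENNReal.ofReal (Real.exp (α * g x * (1-α))) := by
        rw [hE2, ENNReal.ofReal_rpow_of_pos (Real.exp_pos _), ← Real.exp_mul]
      have : E1 x ^ α * E2 x ^ (1-α) = 1 := by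
        rw [e1, e2, ← ENNReal.ofReal_mul (Real.exp_pos _).le, ← Real.exp_add]
        have : (α - 1) * g x * α + α * g x * (1 - α) = 0 := by ring
        rw [this, Real.exp_zero, ENNReal.ofReal_one]
      simp only [Pi.mul_apply]
      rw [ENNReal.mul_rpow_of_nonneg _ _ hα0.le, ENNReal.mul_rpow_of_nonneg _ _ hα1'.le]
      calc q x ^ α * E1 x ^ α * (p x ^ (1-α) * E2 x ^ (1-α))
          = q x ^ α * p x ^ (1-α) * (E1 x ^ α * E2 x ^ (1-α)) := by ring
        _ = q x ^ α * p x ^ (1 - α) := by rw [this, mul_one]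
    have hfpow : ∀ x, ((q x * E1 x) ^ α) ^ (1/α) = q x * E1 x := by
      intro x
      rw [← ENNReal.rpow_mul, mul_one_div_cancel hα0.ne', ENNReal.rpow_one]
    have hgpow : ∀ x, ((p x * E2 x) ^ (1-α)) ^ (1/(1-α)) = p x * E2 x := by
      intro x
      rw [← ENNReal.rpow_mul, mul_one_div_cancel hα1'.ne', ENNReal.rpow_one]
    simp only [Pi.mul_apply] at hlhs h
    simp only [hlhs, hfpow, hgpow, one_div_one_div] at h
    refine h.trans (mul_le_mul'
      (ENNReal.rpow_le_rpow (lintegral_mono' Measure.restrict_le_self le_rfl) hα0.le)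
      (ENNReal.rpow_le_rpow (lintegral_mono' Measure.restrict_le_self le_rfl) hα1'.le))
  have hQint : ∫⁻ x, (q * E1) x ∂ν = ENNReal.ofReal A := by
    rw [hQl, hQ, lintegral_withDensity_eq_lintegral_mul ν hq hmE1]
  have hPint : ∫⁻ x, (p * E2) x ∂ν = ENNReal.ofReal B := by
    rw [hPl, hP, lintegral_withDensity_eq_lintegral_mul ν hp hmE2]
  set D := A ^ α * B ^ (1-α) with hDdef
  have hD : 0 < D := mul_pos (Real.rpow_pos_of_pos hA _) (Real.rpow_pos_of_pos hB _)
  have key' : I ≤ ENNReal.ofReal D := by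
    rw [hDdef, ENNReal.ofReal_mul (Real.rpow_nonneg hA.le _),
      ← ENNReal.ofReal_rpow_of_pos hA, ← ENNReal.ofReal_rpow_of_pos hB]
    rw [hQint, hPint] at key
    exact key
  have hcneg : (α * (α - 1))⁻¹ < 0 :=
    inv_lt_zero.2 (mul_neg_of_pos_of_neg hα0 (by linarith))
  by_cases hI0 : I = 0
  · rw [hI0, ENNReal.log_zero, EReal.coe_mul_bot_of_neg hcneg]
    exact le_top
  · have hItop : I ≠ ⊤ := (lt_of_le_of_lt key' ENNReal.ofReal_lt_top).ne
    rw [ENNReal.log_pos_real hI0 hItop, ← EReal.coe_mul, EReal.coe_le_coe_iff]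
    have hIpos : 0 < I.toReal := ENNReal.toReal_pos hI0 hItop
    have hIle : I.toReal ≤ D := ENNReal.toReal_le_of_le_ofReal hD.le key'
    have hlog : Real.log I.toReal ≤ α * Real.log A + (1-α) * Real.log B := by
      calc Real.log I.toReal ≤ Real.log D := Real.log_le_log hIpos hIle
        _ = α * Real.log A + (1-α) * Real.log B := by
          rw [hDdef, Real.log_mul (Real.rpow_pos_of_pos hA _).ne'
            (Real.rpow_pos_of_pos hB _).ne', Real.log_rpow hA, Real.log_rpow hB]
    have h2 := mul_le_mul_of_nonpos_left hlog hcneg.le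
    have heq : (α * (α - 1))⁻¹ * (α * Real.log A + (1-α) * Real.log B)
        = (α - 1)⁻¹ * Real.log A - α⁻¹ * Real.log B := by
      have h1 : α ≠ 0 := hα0.ne'
      have h2 : α - 1 ≠ 0 := by linarith
      field_simp
      ring
    linarith
end

section
/- For α > 1 and probability measures Q ≪ P, the supremum over bounded measurable g of {(1/(α-1)) log ∫ e^{(α-1)g} dQ - (1/α) log ∫ e^{αg} dP} equals (1/(α(α-1))) log ∫ (dQ/dP)^α dP. -/
open MeasureTheory Real Filter
open scoped ENNReal NNReal Topology

namespace RenyiAux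

variable {Ω : Type*} [MeasurableSpace Ω]

lemma meas_exp_ofReal {g : Ω → ℝ} (hg : Measurable g) (β : ℝ) :
    Measurable fun x => ENNReal.ofReal (Real.exp (β * g x)) :=
  ((hg.const_mul β).exp).ennreal_ofReal

lemma integral_exp_eq (μ : Measure Ω) {g : Ω → ℝ} (hg : Measurable g) (β : ℝ) :
    ∫ x, Real.exp (β * g x) ∂μ
      = (∫⁻ x, ENNReal.ofReal (Real.exp (β * g x)) ∂μ).toReal :=
  integral_eq_lintegral_of_nonneg_ae (Eventually.of_forall fun x => (Real.exp_pos _).le)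
    ((hg.const_mul β).exp).aestronglyMeasurable

lemma lint_exp_le (μ : Measure Ω) [IsProbabilityMeasure μ] {φ : Ω → ℝ} {K : ℝ}
    (h : ∀ x, φ x ≤ K) :
    ∫⁻ x, ENNReal.ofReal (Real.exp (φ x)) ∂μ ≤ ENNReal.ofReal (Real.exp K) := by
  calc ∫⁻ x, ENNReal.ofReal (Real.exp (φ x)) ∂μ
      ≤ ∫⁻ _, ENNReal.ofReal (Real.exp K) ∂μ :=
        lintegral_mono fun x => ENNReal.ofReal_le_ofReal (Real.exp_le_exp.2 (h x))
    _ = ENNReal.ofReal (Real.exp K) := by simp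

lemma le_lint_exp (μ : Measure Ω) [IsProbabilityMeasure μ] {φ : Ω → ℝ} {k : ℝ}
    (h : ∀ x, k ≤ φ x) :
    ENNReal.ofReal (Real.exp k) ≤ ∫⁻ x, ENNReal.ofReal (Real.exp (φ x)) ∂μ := by
  calc ENNReal.ofReal (Real.exp k)
      = ∫⁻ _, ENNReal.ofReal (Real.exp k) ∂μ := by simp
    _ ≤ _ := lintegral_mono fun x => ENNReal.ofReal_le_ofReal (Real.exp_le_exp.2 (h x))

lemma lint_exp_ne_top (μ : Measure Ω) [IsProbabilityMeasure μ] {φ : Ω → ℝ} {K : ℝ}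
    (h : ∀ x, φ x ≤ K) :
    ∫⁻ x, ENNReal.ofReal (Real.exp (φ x)) ∂μ ≠ ⊤ :=
  ne_top_of_le_ne_top ENNReal.ofReal_ne_top (lint_exp_le μ h)

lemma lint_exp_pos (μ : Measure Ω) [IsProbabilityMeasure μ] {φ : Ω → ℝ} {k : ℝ}
    (h : ∀ x, k ≤ φ x) :
    0 < ∫⁻ x, ENNReal.ofReal (Real.exp (φ x)) ∂μ :=
  lt_of_lt_of_le (by simp [ENNReal.ofReal_pos, Real.exp_pos]) (le_lint_exp μ h)

lemma lint_exp_toReal_pos (μ : Measure Ω) [IsProbabilityMeasure μ] {φ : Ω → ℝ} {k K : ℝ}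
    (hk : ∀ x, k ≤ φ x) (hK : ∀ x, φ x ≤ K) :
    0 < (∫⁻ x, ENNReal.ofReal (Real.exp (φ x)) ∂μ).toReal :=
  ENNReal.toReal_pos (lint_exp_pos μ hk).ne' (lint_exp_ne_top μ hK)

lemma self_mul_rpow {α : ℝ} (hα : 1 < α) (y : ℝ≥0∞) : y * y ^ (α - 1) = y ^ α := by
  rcases eq_or_ne y 0 with rfl | h0
  · rw [ENNReal.zero_rpow_of_pos (by linarith), ENNReal.zero_rpow_of_pos (by linarith), mul_zero]
  rcases eq_or_ne y ⊤ with rfl | htop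
  · rw [ENNReal.top_rpow_of_pos (by linarith), ENNReal.top_rpow_of_pos (by linarith),
      ENNReal.top_mul_top]
  · have : y ^ (1 + (α - 1)) = y ^ (1:ℝ) * y ^ (α - 1) := ENNReal.rpow_add _ _ h0 htop
    rw [ENNReal.rpow_one] at this
    rw [← this]
    norm_num

lemma lint_Q_eq (Q P : Measure Ω) [SigmaFinite Q] [SigmaFinite P] (hQP : Q ≪ P)
    {h : Ω → ℝ≥0∞} (hh : Measurable h) :
    ∫⁻ x, h x ∂Q = ∫⁻ x, Q.rnDeriv P x * h x ∂P := by
  conv_lhs => rw [← Measure.withDensity_rnDeriv_eq Q P hQP]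
  rw [lintegral_withDensity_eq_lintegral_mul P (Measure.measurable_rnDeriv Q P) hh]
  rfl

/-- The key identity `∫ f^{α-1} dQ = ∫ f^α dP`. -/
lemma lint_rpow_eq (Q P : Measure Ω) [SigmaFinite Q] [SigmaFinite P] (hQP : Q ≪ P)
    {α : ℝ} (hα : 1 < α) :
    ∫⁻ x, Q.rnDeriv P x ^ (α - 1) ∂Q = ∫⁻ x, Q.rnDeriv P x ^ α ∂P := by
  rw [lint_Q_eq Q P hQP ((Measure.measurable_rnDeriv Q P).pow_const (α - 1))]
  exact lintegral_congr fun x => self_mul_rpow hα _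

lemma I_ne_zero (Q P : Measure Ω) [IsProbabilityMeasure Q] [SigmaFinite P] (hQP : Q ≪ P)
    {α : ℝ} (hα : 1 < α) :
    ∫⁻ x, Q.rnDeriv P x ^ α ∂P ≠ 0 := by
  intro h
  have hmeas := (Measure.measurable_rnDeriv Q P).pow_const α
  have h0 : (fun x => Q.rnDeriv P x ^ α) =ᵐ[P] 0 := (lintegral_eq_zero_iff hmeas).1 h
  have h1 : Q.rnDeriv P =ᵐ[P] 0 := by
    filter_upwards [h0] with x hx
    simp only [Pi.zero_apply] at hx ⊢
    rcases ENNReal.rpow_eq_zero_iff.1 hx with ⟨h, _⟩ | ⟨_, hneg⟩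
    · exact h
    · linarith
  have := Measure.lintegral_rnDeriv hQP
  rw [lintegral_congr_ae h1] at this
  simp at this

/-- Hölder upper bound. -/
lemma holder_bound (Q P : Measure Ω) [IsProbabilityMeasure Q] [IsProbabilityMeasure P]
    {α : ℝ} (hα : 1 < α) (hQP : Q ≪ P) {g : Ω → ℝ} (hg : Measurable g) :
    ∫⁻ x, ENNReal.ofReal (Real.exp ((α - 1) * g x)) ∂Q
      ≤ (∫⁻ x, ENNReal.ofReal (Real.exp (α * g x)) ∂P) ^ ((α - 1) / α)
        * (∫⁻ x, Q.rnDeriv P x ^ α ∂P) ^ (1 / α) := by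
  have hα1 : (0:ℝ) < α - 1 := by linarith
  have hα0 : (0:ℝ) < α := by linarith
  have hpq : (α / (α - 1)).HolderConjugate α := (Real.HolderConjugate.conjExponent hα).symm
  have hu : Measurable fun x => ENNReal.ofReal (Real.exp ((α - 1) * g x)) :=
    meas_exp_ofReal hg (α - 1)
  have hf := Measure.measurable_rnDeriv Q P
  rw [lint_Q_eq Q P hQP hu]
  have key := ENNReal.lintegral_mul_le_Lp_mul_Lq P hpq hu.aemeasurable hf.aemeasurable
  have e1 : ∀ x, (Q.rnDeriv P x) * ENNReal.ofReal (Real.exp ((α - 1) * g x))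
      = ((fun x => ENNReal.ofReal (Real.exp ((α - 1) * g x))) * Q.rnDeriv P) x :=
    fun x => mul_comm _ _
  calc ∫⁻ x, Q.rnDeriv P x * ENNReal.ofReal (Real.exp ((α - 1) * g x)) ∂P
      = ∫⁻ x, ((fun x => ENNReal.ofReal (Real.exp ((α - 1) * g x))) * Q.rnDeriv P) x ∂P :=
        lintegral_congr e1
    _ ≤ (∫⁻ x, ENNReal.ofReal (Real.exp ((α - 1) * g x)) ^ (α / (α - 1)) ∂P)
          ^ (1 / (α / (α - 1))) * (∫⁻ x, Q.rnDeriv P x ^ α ∂P) ^ (1 / α) := key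
    _ = (∫⁻ x, ENNReal.ofReal (Real.exp (α * g x)) ∂P) ^ ((α - 1) / α)
          * (∫⁻ x, Q.rnDeriv P x ^ α ∂P) ^ (1 / α) := by
        congr 1
        · congr 1
          · apply lintegral_congr
            intro x
            rw [ENNReal.ofReal_rpow_of_pos (Real.exp_pos _), ← Real.exp_mul]
            congr 1
            field_simp
          · rw [one_div, inv_div]


/-! ### Truncation sequences -/

/-- Truncated log of `f`, used in the finite case. -/
noncomputable def gseq (f : Ω → ℝ≥0∞) (n : ℕ) (x : Ω) : ℝ :=
  if f x = 0 then -(n : ℝ) else max (-(n : ℝ)) (min (n : ℝ) (Real.log (f x).toReal))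

lemma gseq_measurable {f : Ω → ℝ≥0∞} (hf : Measurable f) (n : ℕ) :
    Measurable (gseq f n) := by
  unfold gseq
  exact Measurable.ite (hf (measurableSet_singleton 0)) measurable_const
    (measurable_const.max (measurable_const.min
      (Real.measurable_log.comp (ENNReal.measurable_toReal.comp hf))))

lemma gseq_abs_le (f : Ω → ℝ≥0∞) (n : ℕ) (x : Ω) : |gseq f n x| ≤ (n : ℝ) := by
  unfold gseq
  split_ifs
  · simp
  · rw [abs_le]
    refine ⟨le_max_left _ _, max_le (neg_le_self (Nat.cast_nonneg n)) (min_le_left _ _)⟩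

lemma ofReal_exp_mul_log {β : ℝ} {y : ℝ≥0∞} (h0 : y ≠ 0) (htop : y ≠ ⊤) :
    ENNReal.ofReal (Real.exp (β * Real.log y.toReal)) = y ^ β := by
  have hs : 0 < y.toReal := ENNReal.toReal_pos h0 htop
  rw [mul_comm, Real.exp_mul, Real.exp_log hs, ← ENNReal.ofReal_rpow_of_pos hs,
    ENNReal.ofReal_toReal htop]

lemma ofReal_exp_le_rpow_add_one {β : ℝ} (hβ : 0 < β) {y : ℝ≥0∞} (htop : y ≠ ⊤) {G : ℝ}
    (hG : G ≤ max 0 (Real.log y.toReal)) :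
    ENNReal.ofReal (Real.exp (β * G)) ≤ 1 + y ^ β := by
  rcases le_or_gt (Real.log y.toReal) 0 with ht | ht
  · have hG0 : G ≤ 0 := le_trans hG (by simp [ht])
    have : Real.exp (β * G) ≤ 1 := Real.exp_le_one_iff.2 (by nlinarith)
    calc ENNReal.ofReal (Real.exp (β * G)) ≤ ENNReal.ofReal 1 := ENNReal.ofReal_le_ofReal this
      _ = 1 := by simp
      _ ≤ 1 + y ^ β := le_self_add
  · have h0 : y ≠ 0 := by
      intro h; rw [h] at ht; simp at ht
    have hGt : G ≤ Real.log y.toReal := le_trans hG (by simp [ht.le])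
    calc ENNReal.ofReal (Real.exp (β * G))
        ≤ ENNReal.ofReal (Real.exp (β * Real.log y.toReal)) :=
          ENNReal.ofReal_le_ofReal (Real.exp_le_exp.2 (by nlinarith))
      _ = y ^ β := ofReal_exp_mul_log h0 htop
      _ ≤ 1 + y ^ β := le_add_self

lemma gseq_le_max (f : Ω → ℝ≥0∞) (n : ℕ) (x : Ω) :
    gseq f n x ≤ max 0 (Real.log (f x).toReal) := by
  unfold gseq
  split_ifs with h
  · simp [neg_nonpos, le_max_iff, Nat.cast_nonneg]
  · exact max_le (le_max_of_le_left (neg_nonpos.2 (Nat.cast_nonneg n)))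
      (le_max_of_le_right (min_le_right _ _))

/-- Dominated convergence for the truncated sequence, finite case. -/
lemma tendsto_lint_gseq (μ : Measure Ω) [IsProbabilityMeasure μ] {f : Ω → ℝ≥0∞}
    (hf : Measurable f) (hfin : ∀ᵐ x ∂μ, f x ≠ ⊤) {β : ℝ} (hβ : 0 < β)
    (hI : ∫⁻ x, f x ^ β ∂μ ≠ ⊤) :
    Tendsto (fun n : ℕ => ∫⁻ x, ENNReal.ofReal (Real.exp (β * gseq f n x)) ∂μ) atTop
      (𝓝 (∫⁻ x, f x ^ β ∂μ)) := by
  apply tendsto_lintegral_of_dominated_convergence (fun x => 1 + f x ^ β)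
  · exact fun n => meas_exp_ofReal (gseq_measurable hf n) β
  · intro n
    filter_upwards [hfin] with x hx
    exact ofReal_exp_le_rpow_add_one hβ hx (gseq_le_max f n x)
  · rw [lintegral_add_left measurable_const]
    simp only [lintegral_one, measure_univ, one_mul]
    exact ENNReal.add_ne_top.2 ⟨ENNReal.one_ne_top, hI⟩
  · filter_upwards [hfin] with x hx
    by_cases h0 : f x = 0
    · have hval : ∀ n : ℕ, gseq f n x = -(n : ℝ) := fun n => by simp [gseq, h0]
      simp only [hval, h0, ENNReal.zero_rpow_of_pos hβ]
      have h1 : Tendsto (fun n : ℕ => β * -(n : ℝ)) atTop atBot := by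
        have : Tendsto (fun n : ℕ => (n : ℝ)) atTop atTop := tendsto_natCast_atTop_atTop
        have h2 : Tendsto (fun n : ℕ => β * (n : ℝ)) atTop atTop := this.const_mul_atTop hβ
        exact (tendsto_neg_atTop_atBot.comp h2).congr fun n => by
          simp [Function.comp, mul_neg]
      have h3 : Tendsto (fun n : ℕ => Real.exp (β * -(n : ℝ))) atTop (𝓝 0) :=
        Real.tendsto_exp_atBot.comp h1
      have h4 := (ENNReal.continuous_ofReal.tendsto 0).comp h3
      simpa [Function.comp_def] using h4
    · -- eventually constant
      have hval : ∀ n : ℕ, (n : ℝ) ≥ |Real.log (f x).toReal| → gseq f n x = Real.log (f x).toReal := by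
        intro n hn
        rw [ge_iff_le, abs_le] at hn
        simp only [gseq, h0, if_false]
        rw [min_eq_right hn.2, max_eq_right hn.1]
      apply Tendsto.congr' _ (tendsto_const_nhds (x := f x ^ β))
      obtain ⟨N, hN⟩ := exists_nat_ge |Real.log (f x).toReal|
      filter_upwards [eventually_ge_atTop N] with n hn
      rw [hval n (le_trans hN (Nat.cast_le.2 hn)), ofReal_exp_mul_log h0 hx]

/-- Truncated positive part of log of `f`, used in the infinite case. -/
noncomputable def gseq2 (f : Ω → ℝ≥0∞) (n : ℕ) (x : Ω) : ℝ :=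
  min (n : ℝ) (max 0 (Real.log (f x).toReal))

lemma gseq2_measurable {f : Ω → ℝ≥0∞} (hf : Measurable f) (n : ℕ) :
    Measurable (gseq2 f n) :=
  measurable_const.min (measurable_const.max
    (Real.measurable_log.comp (ENNReal.measurable_toReal.comp hf)))

lemma gseq2_nonneg (f : Ω → ℝ≥0∞) (n : ℕ) (x : Ω) : 0 ≤ gseq2 f n x :=
  le_min (Nat.cast_nonneg n) (le_max_left _ _)

lemma gseq2_abs_le (f : Ω → ℝ≥0∞) (n : ℕ) (x : Ω) : |gseq2 f n x| ≤ (n : ℝ) := by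
  rw [abs_of_nonneg (gseq2_nonneg f n x)]
  exact min_le_left _ _

lemma gseq2_mono (f : Ω → ℝ≥0∞) (x : Ω) : Monotone fun n : ℕ => gseq2 f n x :=
  fun m n hmn => min_le_min (Nat.cast_le.2 hmn) le_rfl

lemma gseq2_le_max (f : Ω → ℝ≥0∞) (n : ℕ) (x : Ω) :
    gseq2 f n x ≤ max 0 (Real.log (f x).toReal) := min_le_right _ _

/-- In the infinite case the integrals blow up. -/
lemma iSup_lint_gseq2 (μ : Measure Ω) {f : Ω → ℝ≥0∞}
    (hf : Measurable f) (hfin : ∀ᵐ x ∂μ, f x ≠ ⊤) {β : ℝ} (hβ : 0 < β)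
    (hI : ∫⁻ x, f x ^ β ∂μ = ⊤) :
    ⨆ n : ℕ, ∫⁻ x, ENNReal.ofReal (Real.exp (β * gseq2 f n x)) ∂μ = ⊤ := by
  rw [← lintegral_iSup (fun n => meas_exp_ofReal (gseq2_measurable hf n) β)
      (fun m n hmn x => ENNReal.ofReal_le_ofReal
        (Real.exp_le_exp.2 (mul_le_mul_of_nonneg_left (gseq2_mono f x hmn) hβ.le)))]
  rw [eq_top_iff, ← hI]
  apply lintegral_mono_ae
  filter_upwards [hfin] with x hx
  -- f x ^ β ≤ ⨆ n, ofReal (exp (β * gseq2 f n x))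
  by_cases h0 : f x = 0
  · simp [h0, ENNReal.zero_rpow_of_pos hβ]
  · obtain ⟨N, hN⟩ := exists_nat_ge (max 0 (Real.log (f x).toReal))
    have hval : gseq2 f N x = max 0 (Real.log (f x).toReal) := min_eq_right hN
    have hle : f x ^ β ≤ ENNReal.ofReal (Real.exp (β * gseq2 f N x)) := by
      rw [hval, ← ofReal_exp_mul_log h0 hx]
      exact ENNReal.ofReal_le_ofReal (Real.exp_le_exp.2
        (mul_le_mul_of_nonneg_left (le_max_right _ _) hβ.le))
    exact le_trans hle (le_iSup (fun n => ENNReal.ofReal (Real.exp (β * gseq2 f n x))) N)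

/-- The crucial comparison `B_n ≤ A_n + 1` in the infinite case. -/
lemma lint_gseq2_P_le (Q P : Measure Ω) [IsProbabilityMeasure Q] [IsProbabilityMeasure P]
    (hQP : Q ≪ P) {α : ℝ} (hα : 1 < α) (n : ℕ) :
    ∫⁻ x, ENNReal.ofReal (Real.exp (α * gseq2 (Q.rnDeriv P) n x)) ∂P
      ≤ (∫⁻ x, ENNReal.ofReal (Real.exp ((α - 1) * gseq2 (Q.rnDeriv P) n x)) ∂Q) + 1 := by
  set f := Q.rnDeriv P with hfdef
  have hf : Measurable f := Measure.measurable_rnDeriv Q P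
  rw [lint_Q_eq Q P hQP (meas_exp_ofReal (gseq2_measurable hf n) (α - 1))]
  have hmeas : Measurable fun x => f x * ENNReal.ofReal (Real.exp ((α - 1) * gseq2 f n x)) :=
    hf.mul (meas_exp_ofReal (gseq2_measurable hf n) (α - 1))
  calc ∫⁻ x, ENNReal.ofReal (Real.exp (α * gseq2 f n x)) ∂P
      ≤ ∫⁻ x, f x * ENNReal.ofReal (Real.exp ((α - 1) * gseq2 f n x)) + 1 ∂P := by
        apply lintegral_mono_ae
        filter_upwards [Measure.rnDeriv_lt_top Q P] with x hx
        set G := gseq2 f n x with hGdef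
        have hG0 : 0 ≤ G := gseq2_nonneg f n x
        rcases eq_or_lt_of_le hG0 with hG | hG
        · rw [← hG, mul_zero, Real.exp_zero]
          simp only [ENNReal.ofReal_one]
          exact le_add_left le_rfl
        · -- G > 0, so log (f x).toReal > 0 and G ≤ log (f x).toReal
          have hmax : 0 < max 0 (Real.log (f x).toReal) := lt_of_lt_of_le hG (min_le_right _ _)
          have ht : 0 < Real.log (f x).toReal := by
            rcases max_cases 0 (Real.log (f x).toReal) with ⟨h1, _⟩ | ⟨h1, _⟩
            · rw [h1] at hmax; exact absurd hmax (lt_irrefl 0)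
            · rwa [h1] at hmax
          have h0 : f x ≠ 0 := by
            intro h; rw [hfdef] at h
            rw [show (f x).toReal = 0 by rw [hfdef] at *; rw [h]; simp] at ht
            simp at ht
          have hs : 0 < (f x).toReal := ENNReal.toReal_pos h0 hx.ne
          have hGt : G ≤ Real.log (f x).toReal :=
            le_trans (min_le_right _ _) (by rw [max_eq_right ht.le])
          have hexp : Real.exp G ≤ (f x).toReal := by
            calc Real.exp G ≤ Real.exp (Real.log (f x).toReal) := Real.exp_le_exp.2 hGt
              _ = (f x).toReal := Real.exp_log hs
          have key : Real.exp (α * G) ≤ (f x).toReal * Real.exp ((α - 1) * G) := by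
            have : Real.exp (α * G) = Real.exp G * Real.exp ((α - 1) * G) := by
              rw [← Real.exp_add]; ring_nf
            rw [this]
            exact mul_le_mul_of_nonneg_right hexp (Real.exp_pos _).le
          calc ENNReal.ofReal (Real.exp (α * G))
              ≤ ENNReal.ofReal ((f x).toReal * Real.exp ((α - 1) * G)) :=
                ENNReal.ofReal_le_ofReal key
            _ = f x * ENNReal.ofReal (Real.exp ((α - 1) * G)) := by
                rw [ENNReal.ofReal_mul hs.le, ENNReal.ofReal_toReal hx.ne]
            _ ≤ f x * ENNReal.ofReal (Real.exp ((α - 1) * G)) + 1 := le_self_add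
    _ = (∫⁻ x, f x * ENNReal.ofReal (Real.exp ((α - 1) * gseq2 f n x)) ∂P) + 1 := by
        rw [lintegral_add_right _ measurable_const]
        simp

end RenyiAux

open RenyiAux

/-- For `α > 1` and `Q ≪ P`, the supremum over bounded measurable `g` of the
Rényi–Donsker–Varadhan objective equals `(1/(α(α-1))) log ∫ (dQ/dP)^α dP` (possibly `+∞`). -/
theorem renyi_sup_eq_of_ac {Ω : Type*} [MeasurableSpace Ω]
    (Q P : Measure Ω) [IsProbabilityMeasure Q] [IsProbabilityMeasure P]
    {α : ℝ} (hα : 1 < α) (hQP : Q ≪ P) :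
    sSup {r : EReal | ∃ g : Ω → ℝ, Measurable g ∧ (∃ C, ∀ x, |g x| ≤ C) ∧
        r = (((α - 1)⁻¹ * Real.log (∫ x, Real.exp ((α - 1) * g x) ∂Q)
              - α⁻¹ * Real.log (∫ x, Real.exp (α * g x) ∂P) : ℝ) : EReal)}
      = ((α * (α - 1))⁻¹ : ℝ) * ENNReal.log (∫⁻ x, (Q.rnDeriv P x) ^ α ∂P) := by
  classical
  have hα1 : (0:ℝ) < α - 1 := by linarith
  have hα0 : (0:ℝ) < α := by linarith
  set f := Q.rnDeriv P with hfdef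
  have hf : Measurable f := Measure.measurable_rnDeriv Q P
  set I : ℝ≥0∞ := ∫⁻ x, f x ^ α ∂P with hIdef
  have hI0 : I ≠ 0 := I_ne_zero Q P hQP hα
  have hfinP : ∀ᵐ x ∂P, f x ≠ ⊤ := (Measure.rnDeriv_lt_top Q P).mono fun x hx => hx.ne
  have hfinQ : ∀ᵐ x ∂Q, f x ≠ ⊤ := hQP.ae_le hfinP
  have hIQ : ∫⁻ x, f x ^ (α - 1) ∂Q = I := lint_rpow_eq Q P hQP hα
  by_cases hItop : I = ⊤
  · -- infinite case
    rw [hItop, ENNReal.log_top, EReal.coe_mul_top_of_pos (inv_pos.2 (mul_pos hα0 hα1))]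
    rw [sSup_eq_top]
    intro b hb
    obtain ⟨M, hbM, _⟩ := EReal.exists_between_coe_real hb
    obtain ⟨c, hcdef⟩ : ∃ c : ℝ, c = (α - 1)⁻¹ - α⁻¹ := ⟨_, rfl⟩
    have hc : 0 < c := by
      have h1 : α⁻¹ < (α - 1)⁻¹ := inv_strictAnti₀ hα1 (by linarith)
      rw [hcdef]
      linarith
    obtain ⟨q, hqdef⟩ : ∃ q : ℝ, q = (M + α⁻¹ * Real.log 2 + 1) / c := ⟨_, rfl⟩
    obtain ⟨a, hadef⟩ : ∃ a : ℝ, a = max 1 (Real.exp q) := ⟨_, rfl⟩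
    have ha1 : (1:ℝ) ≤ a := by rw [hadef]; exact le_max_left _ _
    have hexpa : Real.exp q ≤ a := by rw [hadef]; exact le_max_right _ _
    have haq : q ≤ Real.log a :=
      calc q = Real.log (Real.exp q) := (Real.log_exp q).symm
        _ ≤ Real.log a := Real.log_le_log (Real.exp_pos q) hexpa
    set A : ℕ → ℝ≥0∞ :=
      fun n => ∫⁻ x, ENNReal.ofReal (Real.exp ((α - 1) * gseq2 f n x)) ∂Q with hAdef
    set B : ℕ → ℝ≥0∞ :=
      fun n => ∫⁻ x, ENNReal.ofReal (Real.exp (α * gseq2 f n x)) ∂P with hBdef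
    have hAne : ∀ n, A n ≠ ⊤ := fun n => lint_exp_ne_top Q (K := (α - 1) * n) (fun x => by
      have h := abs_le.1 (gseq2_abs_le f n x); nlinarith [h.2])
    have hBne : ∀ n, B n ≠ ⊤ := fun n => lint_exp_ne_top P (K := α * n) (fun x => by
      have h := abs_le.1 (gseq2_abs_le f n x); nlinarith [h.2])
    have hA1 : ∀ n, 1 ≤ A n := fun n => by
      have h := le_lint_exp Q (k := 0) (φ := fun x => (α - 1) * gseq2 f n x)
        (fun x => mul_nonneg hα1.le (gseq2_nonneg f n x))
      simpa using h
    have hB1 : ∀ n, 1 ≤ B n := fun n => by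
      have h := le_lint_exp P (k := 0) (φ := fun x => α * gseq2 f n x)
        (fun x => mul_nonneg hα0.le (gseq2_nonneg f n x))
      simpa using h
    have hsup : ⨆ n, A n = ⊤ := iSup_lint_gseq2 Q hf hfinQ hα1 (by rw [hIQ]; exact hItop)
    have hlt : ENNReal.ofReal a < ⨆ n, A n := by rw [hsup]; exact ENNReal.ofReal_lt_top
    obtain ⟨n, hn⟩ := lt_iSup_iff.1 hlt
    obtain ⟨aR, haRdef⟩ : ∃ y : ℝ, y = (A n).toReal := ⟨_, rfl⟩
    obtain ⟨bR, hbRdef⟩ : ∃ y : ℝ, y = (B n).toReal := ⟨_, rfl⟩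
    have haR : a ≤ aR := by
      have h := ENNReal.toReal_mono (hAne n) hn.le
      rw [ENNReal.toReal_ofReal (by linarith : (0:ℝ) ≤ a)] at h
      rw [haRdef]
      exact h
    have haR1 : (1:ℝ) ≤ aR := le_trans ha1 haR
    have hbR1 : (1:ℝ) ≤ bR := by
      have h := ENNReal.toReal_mono (hBne n) (hB1 n)
      rw [hbRdef]
      simpa using h
    have hba : bR ≤ aR + 1 := by
      have h1 : B n ≤ A n + 1 := lint_gseq2_P_le Q P hQP hα n
      have h2 := ENNReal.toReal_mono (ENNReal.add_ne_top.2 ⟨hAne n, ENNReal.one_ne_top⟩) h1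
      rw [ENNReal.toReal_add (hAne n) ENNReal.one_ne_top, ENNReal.toReal_one] at h2
      rw [haRdef, hbRdef]
      exact h2
    obtain ⟨v, hvdef⟩ : ∃ v : ℝ, v = (α - 1)⁻¹ * Real.log aR - α⁻¹ * Real.log bR := ⟨_, rfl⟩
    refine ⟨(v : EReal), ⟨gseq2 f n, gseq2_measurable hf n, ⟨n, gseq2_abs_le f n⟩, ?_⟩, ?_⟩
    · rw [integral_exp_eq Q (gseq2_measurable hf n) (α - 1),
        integral_exp_eq P (gseq2_measurable hf n) α, hvdef, haRdef, hbRdef]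
    · refine lt_of_lt_of_le hbM (EReal.coe_le_coe_iff.2 ?_)
      have l1 : Real.log bR ≤ Real.log 2 + Real.log aR := by
        have h2 : bR ≤ 2 * aR := by linarith
        calc Real.log bR ≤ Real.log (2 * aR) := Real.log_le_log (by linarith) h2
          _ = Real.log 2 + Real.log aR := Real.log_mul two_ne_zero (by linarith)
      have l2 : Real.log a ≤ Real.log aR := Real.log_le_log (by linarith) haR
      have l3 : M + 1 ≤ c * Real.log a - α⁻¹ * Real.log 2 := by
        have hcq : c * q = M + α⁻¹ * Real.log 2 + 1 := by
          rw [hqdef]; field_simp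
        have h4 := mul_le_mul_of_nonneg_left haq hc.le
        linarith
      have hαinv : (0:ℝ) ≤ α⁻¹ := by positivity
      have e1 : α⁻¹ * Real.log bR ≤ α⁻¹ * Real.log 2 + α⁻¹ * Real.log aR := by
        nlinarith [mul_le_mul_of_nonneg_left l1 hαinv]
      have e2 : c * Real.log a ≤ c * Real.log aR := mul_le_mul_of_nonneg_left l2 hc.le
      have e3 : (α - 1)⁻¹ * Real.log aR - α⁻¹ * Real.log aR = c * Real.log aR := by
        rw [hcdef]; ring
      rw [hvdef]
      linarith
  · -- finite case
    have hJ : 0 < I.toReal := ENNReal.toReal_pos hI0 hItop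
    set J : ℝ := I.toReal with hJdef
    set T : ℝ := (α * (α - 1))⁻¹ * Real.log J with hTdef
    have hRHS : (((α * (α - 1))⁻¹ : ℝ) : EReal) * ENNReal.log I = (T : EReal) := by
      rw [ENNReal.log_pos_real hI0 hItop, ← EReal.coe_mul]
    rw [hRHS]
    apply le_antisymm
    · -- upper bound via Hölder
      apply sSup_le
      rintro r ⟨g, hg, ⟨C, hC⟩, rfl⟩
      rw [EReal.coe_le_coe_iff]
      set A' := ∫⁻ x, ENNReal.ofReal (Real.exp ((α - 1) * g x)) ∂Q with hA'def
      set B' := ∫⁻ x, ENNReal.ofReal (Real.exp (α * g x)) ∂P with hB'def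
      have hAub : ∀ x, (α - 1) * g x ≤ (α - 1) * C := fun x => by
        nlinarith [(abs_le.1 (hC x)).2]
      have hAlb : ∀ x, -((α - 1) * C) ≤ (α - 1) * g x := fun x => by
        nlinarith [(abs_le.1 (hC x)).1]
      have hBub : ∀ x, α * g x ≤ α * C := fun x => by
        nlinarith [(abs_le.1 (hC x)).2]
      have hBlb : ∀ x, -(α * C) ≤ α * g x := fun x => by
        nlinarith [(abs_le.1 (hC x)).1]
      have hA'netop : A' ≠ ⊤ := lint_exp_ne_top Q hAub
      have hB'netop : B' ≠ ⊤ := lint_exp_ne_top P hBub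
      have hARpos : 0 < A'.toReal := lint_exp_toReal_pos Q hAlb hAub
      have hBRpos : 0 < B'.toReal := lint_exp_toReal_pos P hBlb hBub
      have hold := holder_bound Q P hα hQP hg
      rw [← hA'def, ← hB'def, ← hIdef] at hold
      have hrhs_ne : B' ^ ((α - 1) / α) * I ^ (1 / α) ≠ ⊤ :=
        ENNReal.mul_ne_top (ENNReal.rpow_ne_top_of_nonneg (by positivity) hB'netop)
          (ENNReal.rpow_ne_top_of_nonneg (by positivity) hItop)
      have htr := ENNReal.toReal_mono hrhs_ne hold
      rw [ENNReal.toReal_mul, ← ENNReal.toReal_rpow, ← ENNReal.toReal_rpow] at htr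
      have hlog := Real.log_le_log hARpos htr
      rw [Real.log_mul (ne_of_gt (Real.rpow_pos_of_pos hBRpos _))
          (ne_of_gt (Real.rpow_pos_of_pos hJ _)),
        Real.log_rpow hBRpos, Real.log_rpow hJ] at hlog
      rw [integral_exp_eq Q hg (α - 1), integral_exp_eq P hg α, ← hA'def, ← hB'def]
      have h2 := mul_le_mul_of_nonneg_left hlog (inv_pos.2 hα1).le
      have e1 : (α - 1)⁻¹ * ((α - 1) / α * Real.log B'.toReal + 1 / α * Real.log J)
          = α⁻¹ * Real.log B'.toReal + (α * (α - 1))⁻¹ * Real.log J := by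
        field_simp
      rw [e1] at h2
      rw [hTdef]
      linarith
    · -- lower bound via the truncated sequence
      set A : ℕ → ℝ≥0∞ :=
        fun n => ∫⁻ x, ENNReal.ofReal (Real.exp ((α - 1) * gseq f n x)) ∂Q with hAdef
      set B : ℕ → ℝ≥0∞ :=
        fun n => ∫⁻ x, ENNReal.ofReal (Real.exp (α * gseq f n x)) ∂P with hBdef
      have hTA : Tendsto A atTop (𝓝 I) := by
        have h := tendsto_lint_gseq Q hf hfinQ hα1 (by rw [hIQ]; exact hItop)
        rwa [hIQ] at h
      have hTB : Tendsto B atTop (𝓝 I) := by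
        have h := tendsto_lint_gseq P hf hfinP hα0 (by rw [← hIdef]; exact hItop)
        rwa [← hIdef] at h
      have hTa : Tendsto (fun n => (A n).toReal) atTop (𝓝 J) :=
        (ENNReal.tendsto_toReal hItop).comp hTA
      have hTb : Tendsto (fun n => (B n).toReal) atTop (𝓝 J) :=
        (ENNReal.tendsto_toReal hItop).comp hTB
      have hlogcont : ContinuousAt Real.log J := Real.continuousAt_log (ne_of_gt hJ)
      have hTv : Tendsto (fun n => (α - 1)⁻¹ * Real.log (A n).toReal
          - α⁻¹ * Real.log (B n).toReal) atTop (𝓝 T) := by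
        have h1 := hlogcont.tendsto.comp hTa
        have h2 := hlogcont.tendsto.comp hTb
        have h3 := (h1.const_mul ((α - 1)⁻¹)).sub (h2.const_mul α⁻¹)
        have e : (α - 1)⁻¹ * Real.log J - α⁻¹ * Real.log J = T := by
          rw [hTdef]
          field_simp
          ring
        rw [← e]
        exact h3
      refine le_of_tendsto' (EReal.tendsto_coe.2 hTv) ?_
      intro n
      apply le_sSup
      refine ⟨gseq f n, gseq_measurable hf n, ⟨n, gseq_abs_le f n⟩, ?_⟩
      rw [integral_exp_eq Q (gseq_measurable hf n) (α - 1),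
        integral_exp_eq P (gseq_measurable hf n) α]
end

section
/- For α ∈ (0,1) and probability measures Q, P with common dominating σ-finite measure ν (densities q, p), the supremum over bounded measurable g of {(1/(α-1)) log ∫ e^{(α-1)g} dQ - (1/α) log ∫ e^{αg} dP} equals (1/(α(α-1))) log ∫_{p>0} q^α p^{1-α} dν. -/
open MeasureTheory Real Filter
open scoped ENNReal NNReal Topology

lemma aux_rpow_ne_top {a : ℝ≥0∞} (ha0 : a ≠ 0) (hatop : a ≠ ⊤) (c : ℝ) : a ^ c ≠ ⊤ := by
  simp [ENNReal.rpow_eq_top_iff, ha0, hatop]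

lemma aux_exp_log {a : ℝ≥0∞} (ha0 : a ≠ 0) (hatop : a ≠ ⊤) (c : ℝ) :
    ENNReal.ofReal (Real.exp (c * Real.log a.toReal)) = a ^ c := by
  have hapos : 0 < a.toReal := ENNReal.toReal_pos ha0 hatop
  rw [mul_comm, ← Real.rpow_def_of_pos hapos, ENNReal.toReal_rpow,
    ENNReal.ofReal_toReal (aux_rpow_ne_top ha0 hatop c)]

lemma aux_idA {α : ℝ} {a b : ℝ≥0∞} (ha0 : a ≠ 0) (hatop : a ≠ ⊤) (hb0 : b ≠ 0)
    (hbtop : b ≠ ⊤) :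
    a * ENNReal.ofReal (Real.exp ((α - 1) * (Real.log a.toReal - Real.log b.toReal)))
      = a ^ α * b ^ (1 - α) := by
  have h : (α - 1) * (Real.log a.toReal - Real.log b.toReal)
      = (α - 1) * Real.log a.toReal + (1 - α) * Real.log b.toReal := by ring
  rw [h, Real.exp_add, ENNReal.ofReal_mul (Real.exp_pos _).le,
    aux_exp_log ha0 hatop (α - 1), aux_exp_log hb0 hbtop (1 - α), ← mul_assoc]
  congr 1
  nth_rewrite 1 [← ENNReal.rpow_one a]
  rw [← ENNReal.rpow_add _ _ ha0 hatop]
  norm_num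

lemma aux_idB {α : ℝ} {a b : ℝ≥0∞} (ha0 : a ≠ 0) (hatop : a ≠ ⊤) (hb0 : b ≠ 0)
    (hbtop : b ≠ ⊤) :
    b * ENNReal.ofReal (Real.exp (α * (Real.log a.toReal - Real.log b.toReal)))
      = a ^ α * b ^ (1 - α) := by
  have h : α * (Real.log a.toReal - Real.log b.toReal)
      = α * Real.log a.toReal + (-α) * Real.log b.toReal := by ring
  rw [h, Real.exp_add, ENNReal.ofReal_mul (Real.exp_pos _).le,
    aux_exp_log ha0 hatop α, aux_exp_log hb0 hbtop (-α)]
  rw [← mul_assoc, mul_comm b (a ^ α), mul_assoc]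
  congr 1
  nth_rewrite 1 [← ENNReal.rpow_one b]
  rw [← ENNReal.rpow_add _ _ hb0 hbtop]
  ring_nf

noncomputable def clampSeq {Ω : Type*} (q p : Ω → ℝ≥0∞) (n : ℕ) (x : Ω) : ℝ :=
  if p x = 0 then (n : ℝ) else if q x = 0 then -(n : ℝ)
  else max (-(n : ℝ)) (min (n : ℝ) (Real.log (q x).toReal - Real.log (p x).toReal))

lemma clampSeq_measurable {Ω : Type*} [MeasurableSpace Ω] {q p : Ω → ℝ≥0∞}
    (hq : Measurable q) (hp : Measurable p) (n : ℕ) : Measurable (clampSeq q p n) := by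
  unfold clampSeq
  refine Measurable.ite (hp (measurableSet_singleton 0)) measurable_const ?_
  refine Measurable.ite (hq (measurableSet_singleton 0)) measurable_const ?_
  exact measurable_const.max (measurable_const.min
    ((Real.measurable_log.comp hq.ennreal_toReal).sub
      (Real.measurable_log.comp hp.ennreal_toReal)))

lemma clampSeq_abs_le {Ω : Type*} (q p : Ω → ℝ≥0∞) (n : ℕ) (x : Ω) :
    |clampSeq q p n x| ≤ (n : ℝ) := by
  unfold clampSeq
  split_ifs with h1 h2
  · rw [abs_of_nonneg (Nat.cast_nonneg n)]
  · rw [abs_neg, abs_of_nonneg (Nat.cast_nonneg n)]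
  · rw [abs_le]
    exact ⟨le_max_left _ _, max_le (neg_le_self (Nat.cast_nonneg n)) (min_le_left _ _)⟩

lemma clampSeq_eventually_eq {Ω : Type*} {q p : Ω → ℝ≥0∞} {x : Ω}
    (hp0 : p x ≠ 0) (hq0 : q x ≠ 0) :
    ∀ᶠ n in atTop, clampSeq q p n x = Real.log (q x).toReal - Real.log (p x).toReal := by
  set t := Real.log (q x).toReal - Real.log (p x).toReal with ht
  refine eventually_atTop.2 ⟨⌈|t|⌉₊, fun n hn => ?_⟩
  have habs : |t| ≤ (n : ℝ) := le_trans (Nat.le_ceil _) (Nat.cast_le.2 hn)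
  obtain ⟨h1, h2⟩ := abs_le.1 habs
  rw [clampSeq, if_neg hp0, if_neg hq0, ← ht, min_eq_right h2, max_eq_right h1]

/-- Representation of the Bochner integral of `exp (c * g)` over `ν.withDensity f`
as a lower integral. -/
lemma aux_repr {Ω : Type*} [MeasurableSpace Ω] (ν : Measure Ω) {f : Ω → ℝ≥0∞}
    (hf : Measurable f) {g : Ω → ℝ} (hg : Measurable g) (c : ℝ) :
    ∫ x, Real.exp (c * g x) ∂(ν.withDensity f)
      = (∫⁻ x, f x * ENNReal.ofReal (Real.exp (c * g x)) ∂ν).toReal := by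
  rw [integral_eq_lintegral_of_nonneg_ae (ae_of_all _ fun x => (Real.exp_pos _).le)
    ((Real.measurable_exp.comp (hg.const_mul c)).aestronglyMeasurable)]
  have h := lintegral_withDensity_eq_lintegral_mul ν hf
    ((ENNReal.measurable_ofReal.comp (Real.measurable_exp.comp (hg.const_mul c))) :
      Measurable fun x => ENNReal.ofReal (Real.exp (c * g x)))
  simp only [Function.comp_apply, Pi.mul_apply] at h
  rw [h]

lemma aux_bounds {Ω : Type*} [MeasurableSpace Ω] (ν : Measure Ω) {f : Ω → ℝ≥0∞}
    (hf : Measurable f) (hf1 : ∫⁻ x, f x ∂ν = 1) {g : Ω → ℝ} {C : ℝ}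
    (hgC : ∀ x, |g x| ≤ C) (c : ℝ) :
    ENNReal.ofReal (Real.exp (-(|c| * C))) ≤ ∫⁻ x, f x * ENNReal.ofReal (Real.exp (c * g x)) ∂ν
      ∧ ∫⁻ x, f x * ENNReal.ofReal (Real.exp (c * g x)) ∂ν ≤ ENNReal.ofReal (Real.exp (|c| * C)) := by
  have hbd : ∀ x, |c * g x| ≤ |c| * C := by
    intro x
    rw [abs_mul]
    exact mul_le_mul_of_nonneg_left (hgC x) (abs_nonneg c)
  constructor
  · calc ENNReal.ofReal (Real.exp (-(|c| * C)))
        = ∫⁻ x, f x * ENNReal.ofReal (Real.exp (-(|c| * C))) ∂ν := by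
          rw [lintegral_mul_const _ hf, hf1, one_mul]
      _ ≤ _ := by
          refine lintegral_mono fun x => mul_le_mul_right (ENNReal.ofReal_le_ofReal ?_) _
          exact Real.exp_le_exp.2 (neg_le_of_abs_le (hbd x))
  · calc ∫⁻ x, f x * ENNReal.ofReal (Real.exp (c * g x)) ∂ν
        ≤ ∫⁻ x, f x * ENNReal.ofReal (Real.exp (|c| * C)) ∂ν := by
          refine lintegral_mono fun x => mul_le_mul_right (ENNReal.ofReal_le_ofReal ?_) _
          exact Real.exp_le_exp.2 (le_of_abs_le (hbd x))
      _ = ENNReal.ofReal (Real.exp (|c| * C)) := by rw [lintegral_mul_const _ hf, hf1, one_mul]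

/-- pointwise factorization -/
lemma aux_pt {α : ℝ} (hα0 : 0 < α) (hα1 : α < 1) (a b : ℝ≥0∞) (t : ℝ) :
    a ^ α * b ^ (1 - α)
      = (a * ENNReal.ofReal (Real.exp ((α - 1) * t))) ^ α
        * (b * ENNReal.ofReal (Real.exp (α * t))) ^ (1 - α) := by
  rw [ENNReal.mul_rpow_of_nonneg _ _ hα0.le, ENNReal.mul_rpow_of_nonneg _ _ (by linarith : (0:ℝ) ≤ 1 - α)]
  rw [ENNReal.ofReal_rpow_of_pos (Real.exp_pos _), ENNReal.ofReal_rpow_of_pos (Real.exp_pos _)]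
  rw [← Real.exp_mul, ← Real.exp_mul]
  have : a ^ α * ENNReal.ofReal (Real.exp ((α - 1) * t * α)) *
      (b ^ (1 - α) * ENNReal.ofReal (Real.exp (α * t * (1 - α))))
      = a ^ α * b ^ (1 - α) *
        (ENNReal.ofReal (Real.exp ((α - 1) * t * α)) * ENNReal.ofReal (Real.exp (α * t * (1 - α)))) := by
    ring
  rw [this, ← ENNReal.ofReal_mul (Real.exp_pos _).le, ← Real.exp_add]
  have : (α - 1) * t * α + α * t * (1 - α) = 0 := by ring
  rw [this, Real.exp_zero, ENNReal.ofReal_one, mul_one]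

/-- Hölder step -/
lemma aux_holder {Ω : Type*} [MeasurableSpace Ω] (ν : Measure Ω) {q p : Ω → ℝ≥0∞}
    (hq : Measurable q) (hp : Measurable p) {α : ℝ} (hα0 : 0 < α) (hα1 : α < 1)
    {g : Ω → ℝ} (hg : Measurable g) :
    ∫⁻ x, q x ^ α * p x ^ (1 - α) ∂ν
      ≤ (∫⁻ x, q x * ENNReal.ofReal (Real.exp ((α - 1) * g x)) ∂ν) ^ α
        * (∫⁻ x, p x * ENNReal.ofReal (Real.exp (α * g x)) ∂ν) ^ (1 - α) := by
  set u : Ω → ℝ≥0∞ := fun x => q x * ENNReal.ofReal (Real.exp ((α - 1) * g x)) with hu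
  set v : Ω → ℝ≥0∞ := fun x => p x * ENNReal.ofReal (Real.exp (α * g x)) with hv
  have hum : Measurable u := hq.mul (ENNReal.measurable_ofReal.comp (Real.measurable_exp.comp (hg.const_mul _)))
  have hvm : Measurable v := hp.mul (ENNReal.measurable_ofReal.comp (Real.measurable_exp.comp (hg.const_mul _)))
  have hconj : (1 / α).HolderConjugate (1 / (1 - α)) := by
    rw [Real.holderConjugate_iff]
    constructor
    · rw [lt_div_iff₀ hα0]; linarith
    · rw [one_div, one_div, inv_inv, inv_inv]; ring
  have key := ENNReal.lintegral_mul_le_Lp_mul_Lq ν hconj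
    ((hum.pow_const α).aemeasurable) ((hvm.pow_const (1 - α)).aemeasurable)
  have h1α : (1:ℝ)/(1/α) = α := by field_simp
  have h1β : (1:ℝ)/(1/(1-α)) = 1 - α := by
    rw [one_div_one_div]
  have heq : ∀ x, (u x ^ α) ^ (1/α) = u x := by
    intro x; rw [← ENNReal.rpow_mul]
    rw [mul_one_div_cancel hα0.ne', ENNReal.rpow_one]
  have heq' : ∀ x, (v x ^ (1-α)) ^ (1/(1-α)) = v x := by
    intro x; rw [← ENNReal.rpow_mul]
    rw [mul_one_div_cancel (by linarith : (1:ℝ) - α ≠ 0), ENNReal.rpow_one]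
  simp only [Pi.mul_apply, heq, heq', h1α, h1β] at key
  calc ∫⁻ x, q x ^ α * p x ^ (1 - α) ∂ν
      = ∫⁻ x, u x ^ α * v x ^ (1 - α) ∂ν := by
        refine lintegral_congr fun x => ?_
        exact aux_pt hα0 hα1 (q x) (p x) (g x)
    _ ≤ _ := key

lemma aux_tendstoA {Ω : Type*} [MeasurableSpace Ω] (ν : Measure Ω) {q p : Ω → ℝ≥0∞}
    (hq : Measurable q) (hp : Measurable p) {α : ℝ} (hα0 : 0 < α) (hα1 : α < 1)
    (hQ1 : ∫⁻ x, q x ∂ν = 1) (hP1 : ∫⁻ x, p x ∂ν = 1)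
    (hI_ne_top : ∫⁻ x in {x | p x ≠ 0}, q x ^ α * p x ^ (1 - α) ∂ν ≠ ⊤) :
    Tendsto (fun n => ∫⁻ x, q x * ENNReal.ofReal (Real.exp ((α - 1) * clampSeq q p n x)) ∂ν)
      atTop (𝓝 (∫⁻ x in {x | p x ≠ 0}, q x ^ α * p x ^ (1 - α) ∂ν)) := by
  have hE : MeasurableSet {x | p x ≠ 0} := (hp (measurableSet_singleton 0)).compl
  have hq_fin : ∀ᵐ x ∂ν, q x ≠ ⊤ := by
    filter_upwards [ae_lt_top hq (by rw [hQ1]; exact ENNReal.one_ne_top)] with x h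
    exact h.ne
  have hp_fin : ∀ᵐ x ∂ν, p x ≠ ⊤ := by
    filter_upwards [ae_lt_top hp (by rw [hP1]; exact ENNReal.one_ne_top)] with x h
    exact h.ne
  have hind : ∫⁻ x, Set.indicator {x | p x ≠ 0} (fun x => q x ^ α * p x ^ (1 - α)) x ∂ν
      = ∫⁻ x in {x | p x ≠ 0}, q x ^ α * p x ^ (1 - α) ∂ν := lintegral_indicator hE _
  rw [← hind]
  refine tendsto_lintegral_of_dominated_convergence
    (fun x => q x + Set.indicator {x | p x ≠ 0} (fun x => q x ^ α * p x ^ (1 - α)) x)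
    (fun n => hq.mul (ENNReal.measurable_ofReal.comp
      (Real.measurable_exp.comp ((clampSeq_measurable hq hp n).const_mul _)))) ?_ ?_ ?_
  · -- bound
    intro n
    filter_upwards [hq_fin, hp_fin] with x hqx hpx
    by_cases hp0 : p x = 0
    · rw [clampSeq, if_pos hp0]
      calc q x * ENNReal.ofReal (Real.exp ((α - 1) * (n : ℝ)))
          ≤ q x * 1 := by
            refine mul_le_mul_right (ENNReal.ofReal_le_one.2 (Real.exp_le_one_iff.2 ?_)) _
            exact mul_nonpos_iff.2 (Or.inr ⟨by linarith, Nat.cast_nonneg n⟩)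
        _ = q x := mul_one _
        _ ≤ _ := le_self_add
    · by_cases hq0 : q x = 0
      · simp [hq0]
      · have hmem : x ∈ {x | p x ≠ 0} := hp0
        set t := Real.log (q x).toReal - Real.log (p x).toReal with ht
        have hcl : clampSeq q p n x = max (-(n : ℝ)) (min (n : ℝ) t) := by
          rw [clampSeq, if_neg hp0, if_neg hq0]
        have hexp : Real.exp ((α - 1) * clampSeq q p n x)
            ≤ Real.exp ((α - 1) * t) + 1 := by
          rcases le_total t 0 with h | h
          · have h1 : t ≤ clampSeq q p n x := by
              rw [hcl]
              exact le_max_of_le_right (le_min (h.trans (Nat.cast_nonneg n)) le_rfl)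
            have : (α - 1) * clampSeq q p n x ≤ (α - 1) * t :=
              mul_le_mul_of_nonpos_left h1 (by linarith)
            exact (Real.exp_le_exp.2 this).trans (le_add_of_nonneg_right zero_le_one)
          · have h1 : (0 : ℝ) ≤ clampSeq q p n x := by
              rw [hcl]
              exact le_max_of_le_right (le_min (Nat.cast_nonneg n) h)
            have : (α - 1) * clampSeq q p n x ≤ 0 :=
              mul_nonpos_iff.2 (Or.inr ⟨by linarith, h1⟩)
            calc Real.exp ((α - 1) * clampSeq q p n x) ≤ 1 := Real.exp_le_one_iff.2 this
              _ ≤ _ := le_add_of_nonneg_left (Real.exp_pos _).le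
        calc q x * ENNReal.ofReal (Real.exp ((α - 1) * clampSeq q p n x))
            ≤ q x * ENNReal.ofReal (Real.exp ((α - 1) * t) + 1) :=
              mul_le_mul_right (ENNReal.ofReal_le_ofReal hexp) _
          _ = q x * ENNReal.ofReal (Real.exp ((α - 1) * t)) + q x := by
              rw [ENNReal.ofReal_add (Real.exp_pos _).le zero_le_one, mul_add,
                ENNReal.ofReal_one, mul_one]
          _ = q x ^ α * p x ^ (1 - α) + q x := by rw [aux_idA hq0 hqx hp0 hpx]
          _ = _ := by rw [Set.indicator_of_mem hmem, add_comm]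
  · -- finiteness of the bound
    rw [lintegral_add_left hq, hQ1, hind]
    exact ENNReal.add_ne_top.2 ⟨ENNReal.one_ne_top, hI_ne_top⟩
  · -- pointwise limit
    filter_upwards [hq_fin, hp_fin] with x hqx hpx
    by_cases hp0 : p x = 0
    · have hnot : x ∉ {x | p x ≠ 0} := by simp [hp0]
      simp only [clampSeq, if_pos hp0, Set.indicator_of_notMem hnot]
      have h1 : Tendsto (fun n : ℕ => (α - 1) * (n : ℝ)) atTop atBot :=
        (tendsto_const_mul_atBot_of_neg (by linarith)).2 tendsto_natCast_atTop_atTop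
      have h2 : Tendsto (fun n : ℕ => ENNReal.ofReal (Real.exp ((α - 1) * (n : ℝ))))
          atTop (𝓝 0) := by
        rw [← ENNReal.ofReal_zero]
        exact (ENNReal.continuous_ofReal.tendsto 0).comp (Real.tendsto_exp_atBot.comp h1)
      simpa using ENNReal.Tendsto.const_mul h2 (Or.inr hqx)
    · by_cases hq0 : q x = 0
      · have hmem : x ∈ {x | p x ≠ 0} := hp0
        simp only [hq0, zero_mul, Set.indicator_of_mem hmem,
          ENNReal.zero_rpow_of_pos hα0]
        exact tendsto_const_nhds
      · have hmem : x ∈ {x | p x ≠ 0} := hp0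
        rw [Set.indicator_of_mem hmem]
        refine Tendsto.congr' ?_ tendsto_const_nhds
        filter_upwards [clampSeq_eventually_eq hp0 hq0] with n hn
        rw [hn, aux_idA hq0 hqx hp0 hpx]

lemma aux_tendstoB {Ω : Type*} [MeasurableSpace Ω] (ν : Measure Ω) {q p : Ω → ℝ≥0∞}
    (hq : Measurable q) (hp : Measurable p) {α : ℝ} (hα0 : 0 < α) (hα1 : α < 1)
    (hQ1 : ∫⁻ x, q x ∂ν = 1) (hP1 : ∫⁻ x, p x ∂ν = 1)
    (hI_ne_top : ∫⁻ x in {x | p x ≠ 0}, q x ^ α * p x ^ (1 - α) ∂ν ≠ ⊤) :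
    Tendsto (fun n => ∫⁻ x, p x * ENNReal.ofReal (Real.exp (α * clampSeq q p n x)) ∂ν)
      atTop (𝓝 (∫⁻ x in {x | p x ≠ 0}, q x ^ α * p x ^ (1 - α) ∂ν)) := by
  have hE : MeasurableSet {x | p x ≠ 0} := (hp (measurableSet_singleton 0)).compl
  have hq_fin : ∀ᵐ x ∂ν, q x ≠ ⊤ := by
    filter_upwards [ae_lt_top hq (by rw [hQ1]; exact ENNReal.one_ne_top)] with x h
    exact h.ne
  have hp_fin : ∀ᵐ x ∂ν, p x ≠ ⊤ := by
    filter_upwards [ae_lt_top hp (by rw [hP1]; exact ENNReal.one_ne_top)] with x h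
    exact h.ne
  have hind : ∫⁻ x, Set.indicator {x | p x ≠ 0} (fun x => q x ^ α * p x ^ (1 - α)) x ∂ν
      = ∫⁻ x in {x | p x ≠ 0}, q x ^ α * p x ^ (1 - α) ∂ν := lintegral_indicator hE _
  rw [← hind]
  refine tendsto_lintegral_of_dominated_convergence
    (fun x => p x + Set.indicator {x | p x ≠ 0} (fun x => q x ^ α * p x ^ (1 - α)) x)
    (fun n => hp.mul (ENNReal.measurable_ofReal.comp
      (Real.measurable_exp.comp ((clampSeq_measurable hq hp n).const_mul _)))) ?_ ?_ ?_
  · -- bound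
    intro n
    filter_upwards [hq_fin, hp_fin] with x hqx hpx
    by_cases hp0 : p x = 0
    · simp [hp0]
    · by_cases hq0 : q x = 0
      · rw [clampSeq, if_neg hp0, if_pos hq0]
        calc p x * ENNReal.ofReal (Real.exp (α * (-(n : ℝ))))
            ≤ p x * 1 := by
              refine mul_le_mul_right (ENNReal.ofReal_le_one.2 (Real.exp_le_one_iff.2 ?_)) _
              exact mul_nonpos_iff.2 (Or.inl ⟨hα0.le, neg_nonpos.2 (Nat.cast_nonneg n)⟩)
          _ = p x := mul_one _
          _ ≤ _ := le_self_add
      · have hmem : x ∈ {x | p x ≠ 0} := hp0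
        set t := Real.log (q x).toReal - Real.log (p x).toReal with ht
        have hcl : clampSeq q p n x = max (-(n : ℝ)) (min (n : ℝ) t) := by
          rw [clampSeq, if_neg hp0, if_neg hq0]
        have hexp : Real.exp (α * clampSeq q p n x) ≤ Real.exp (α * t) + 1 := by
          rcases le_total t 0 with h | h
          · have h1 : clampSeq q p n x ≤ 0 := by
              rw [hcl]
              exact max_le (neg_nonpos.2 (Nat.cast_nonneg n)) (min_le_of_right_le h)
            have : α * clampSeq q p n x ≤ 0 :=
              mul_nonpos_iff.2 (Or.inl ⟨hα0.le, h1⟩)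
            calc Real.exp (α * clampSeq q p n x) ≤ 1 := Real.exp_le_one_iff.2 this
              _ ≤ _ := le_add_of_nonneg_left (Real.exp_pos _).le
          · have h1 : clampSeq q p n x ≤ t := by
              rw [hcl]
              exact max_le (neg_nonpos.2 (Nat.cast_nonneg n) |>.trans h) (min_le_right _ _)
            have : α * clampSeq q p n x ≤ α * t :=
              mul_le_mul_of_nonneg_left h1 hα0.le
            exact (Real.exp_le_exp.2 this).trans (le_add_of_nonneg_right zero_le_one)
        calc p x * ENNReal.ofReal (Real.exp (α * clampSeq q p n x))
            ≤ p x * ENNReal.ofReal (Real.exp (α * t) + 1) :=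
              mul_le_mul_right (ENNReal.ofReal_le_ofReal hexp) _
          _ = p x * ENNReal.ofReal (Real.exp (α * t)) + p x := by
              rw [ENNReal.ofReal_add (Real.exp_pos _).le zero_le_one, mul_add,
                ENNReal.ofReal_one, mul_one]
          _ = q x ^ α * p x ^ (1 - α) + p x := by rw [aux_idB hq0 hqx hp0 hpx]
          _ = _ := by rw [Set.indicator_of_mem hmem, add_comm]
  · -- finiteness of the bound
    rw [lintegral_add_left hp, hP1, hind]
    exact ENNReal.add_ne_top.2 ⟨ENNReal.one_ne_top, hI_ne_top⟩
  · -- pointwise limit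
    filter_upwards [hq_fin, hp_fin] with x hqx hpx
    by_cases hp0 : p x = 0
    · have hnot : x ∉ {x | p x ≠ 0} := by simp [hp0]
      simp only [hp0, zero_mul, Set.indicator_of_notMem hnot]
      exact tendsto_const_nhds
    · by_cases hq0 : q x = 0
      · have hmem : x ∈ {x | p x ≠ 0} := hp0
        simp only [clampSeq, if_neg hp0, if_pos hq0, Set.indicator_of_mem hmem, hq0,
          ENNReal.zero_rpow_of_pos hα0, zero_mul]
        have h0 : Tendsto (fun n : ℕ => -(n : ℝ)) atTop atBot :=
          tendsto_neg_atBot_iff.2 tendsto_natCast_atTop_atTop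
        have h1 : Tendsto (fun n : ℕ => α * (-(n : ℝ))) atTop atBot :=
          (tendsto_const_mul_atBot_of_pos hα0).2 h0
        have h2 : Tendsto (fun n : ℕ => ENNReal.ofReal (Real.exp (α * (-(n : ℝ)))))
            atTop (𝓝 0) := by
          rw [← ENNReal.ofReal_zero]
          exact (ENNReal.continuous_ofReal.tendsto 0).comp (Real.tendsto_exp_atBot.comp h1)
        simpa using ENNReal.Tendsto.const_mul h2 (Or.inr hpx)
      · have hmem : x ∈ {x | p x ≠ 0} := hp0
        rw [Set.indicator_of_mem hmem]
        refine Tendsto.congr' ?_ tendsto_const_nhds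
        filter_upwards [clampSeq_eventually_eq hp0 hq0] with n hn
        rw [hn, aux_idB hq0 hqx hp0 hpx]


/-- For `α ∈ (0,1)`, the supremum over bounded measurable `g` of the
Rényi–Donsker–Varadhan objective equals `(1/(α(α-1))) log ∫_{p>0} q^α p^{1-α} dν`. -/
theorem renyi_sup_eq_alpha_lt_one {Ω : Type*} [MeasurableSpace Ω]
    (Q P ν : Measure Ω) [IsProbabilityMeasure Q] [IsProbabilityMeasure P] [SigmaFinite ν]
    (q p : Ω → ℝ≥0∞) (hq : Measurable q) (hp : Measurable p)
    (hQ : Q = ν.withDensity q) (hP : P = ν.withDensity p)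
    {α : ℝ} (hα0 : 0 < α) (hα1 : α < 1) :
    sSup {r : EReal | ∃ g : Ω → ℝ, Measurable g ∧ (∃ C, ∀ x, |g x| ≤ C) ∧
        r = (((α - 1)⁻¹ * Real.log (∫ x, Real.exp ((α - 1) * g x) ∂Q)
              - α⁻¹ * Real.log (∫ x, Real.exp (α * g x) ∂P) : ℝ) : EReal)}
      = ((α * (α - 1))⁻¹ : ℝ)
          * ENNReal.log (∫⁻ x in {x | p x ≠ 0}, (q x) ^ α * (p x) ^ (1 - α) ∂ν) := by
  have hα1' : α - 1 < 0 := by linarith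
  have hαne : α ≠ 0 := hα0.ne'
  have hα1ne : α - 1 ≠ 0 := hα1'.ne
  have hc_neg : (α * (α - 1))⁻¹ < 0 := inv_neg''.2 (mul_neg_of_pos_of_neg hα0 hα1')
  have hE : MeasurableSet {x | p x ≠ 0} := (hp (measurableSet_singleton 0)).compl
  set E : Set Ω := {x | p x ≠ 0} with hEdef
  set I : ℝ≥0∞ := ∫⁻ x in E, q x ^ α * p x ^ (1 - α) ∂ν with hIdef
  have hQ1 : ∫⁻ x, q x ∂ν = 1 := by
    have h := measure_univ (μ := Q)
    rwa [hQ, withDensity_apply _ MeasurableSet.univ, Measure.restrict_univ] at h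
  have hP1 : ∫⁻ x, p x ∂ν = 1 := by
    have h := measure_univ (μ := P)
    rwa [hP, withDensity_apply _ MeasurableSet.univ, Measure.restrict_univ] at h
  have hI_le_one : I ≤ 1 := by
    have h0 := aux_holder ν hq hp hα0 hα1 (g := fun _ => 0) measurable_const
    simp only [mul_zero, Real.exp_zero, ENNReal.ofReal_one, mul_one, hQ1, hP1,
      ENNReal.one_rpow, one_mul] at h0
    exact le_trans (setLIntegral_le_lintegral _ _) h0
  have hI_ne_top : I ≠ ⊤ := ne_top_of_le_ne_top ENNReal.one_ne_top hI_le_one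
  refine le_antisymm (sSup_le ?_) ?_
  · rintro r ⟨g, hgm, ⟨C, hgC⟩, rfl⟩
    set A : ℝ≥0∞ := ∫⁻ x, q x * ENNReal.ofReal (Real.exp ((α - 1) * g x)) ∂ν with hAdef
    set B : ℝ≥0∞ := ∫⁻ x, p x * ENNReal.ofReal (Real.exp (α * g x)) ∂ν with hBdef
    obtain ⟨hA_lb, hA_ub⟩ := aux_bounds ν hq hQ1 hgC (α - 1)
    obtain ⟨hB_lb, hB_ub⟩ := aux_bounds ν hp hP1 hgC α
    rw [← hAdef] at hA_lb hA_ub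
    rw [← hBdef] at hB_lb hB_ub
    have hA0 : A ≠ 0 := fun h => by
      simp only [h, le_zero_iff, ENNReal.ofReal_eq_zero] at hA_lb
      exact absurd hA_lb (not_le.2 (Real.exp_pos _))
    have hB0 : B ≠ 0 := fun h => by
      simp only [h, le_zero_iff, ENNReal.ofReal_eq_zero] at hB_lb
      exact absurd hB_lb (not_le.2 (Real.exp_pos _))
    have hAtop : A ≠ ⊤ := ne_top_of_le_ne_top ENNReal.ofReal_ne_top hA_ub
    have hBtop : B ≠ ⊤ := ne_top_of_le_ne_top ENNReal.ofReal_ne_top hB_ub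
    have hApos : 0 < A.toReal := ENNReal.toReal_pos hA0 hAtop
    have hBpos : 0 < B.toReal := ENNReal.toReal_pos hB0 hBtop
    rw [hQ, hP, aux_repr ν hq hgm (α - 1), aux_repr ν hp hgm α, ← hAdef, ← hBdef]
    by_cases hI0 : I = 0
    · rw [hI0, ENNReal.log_zero, EReal.coe_mul_bot_of_neg hc_neg]
      exact le_top
    · rw [ENNReal.log_pos_real hI0 hI_ne_top, ← EReal.coe_mul, EReal.coe_le_coe_iff]
      have hHolder : I ≤ A ^ α * B ^ (1 - α) :=
        le_trans (setLIntegral_le_lintegral _ _) (aux_holder ν hq hp hα0 hα1 hgm)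
      have hABtop : A ^ α * B ^ (1 - α) ≠ ⊤ :=
        ENNReal.mul_ne_top (ENNReal.rpow_ne_top_of_nonneg hα0.le hAtop)
          (ENNReal.rpow_ne_top_of_nonneg (by linarith) hBtop)
      have htor : I.toReal ≤ A.toReal ^ α * B.toReal ^ (1 - α) := by
        have h := ENNReal.toReal_mono hABtop hHolder
        rwa [ENNReal.toReal_mul, ← ENNReal.toReal_rpow, ← ENNReal.toReal_rpow] at h
      have hIpos : 0 < I.toReal := ENNReal.toReal_pos hI0 hI_ne_top
      have hlog : Real.log I.toReal ≤ α * Real.log A.toReal + (1 - α) * Real.log B.toReal := by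
        calc Real.log I.toReal ≤ Real.log (A.toReal ^ α * B.toReal ^ (1 - α)) :=
              Real.log_le_log hIpos htor
          _ = _ := by
              rw [Real.log_mul (Real.rpow_pos_of_pos hApos α).ne'
                (Real.rpow_pos_of_pos hBpos (1 - α)).ne', Real.log_rpow hApos,
                Real.log_rpow hBpos]
      have hkey : (α * (α - 1))⁻¹ * (α * Real.log A.toReal + (1 - α) * Real.log B.toReal)
          = (α - 1)⁻¹ * Real.log A.toReal - α⁻¹ * Real.log B.toReal := by
        field_simp
        ring
      calc (α - 1)⁻¹ * Real.log A.toReal - α⁻¹ * Real.log B.toReal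
          = (α * (α - 1))⁻¹ * (α * Real.log A.toReal + (1 - α) * Real.log B.toReal) := hkey.symm
        _ ≤ (α * (α - 1))⁻¹ * Real.log I.toReal := mul_le_mul_of_nonpos_left hlog hc_neg.le
  · by_cases hI0 : I = 0
    · -- mutually singular case: the supremum is ⊤
      rw [hI0, ENNReal.log_zero, EReal.coe_mul_bot_of_neg hc_neg, top_le_iff,
        EReal.eq_top_iff_forall_lt]
      intro y
      have hq0E : ∀ᵐ x ∂ν, x ∈ E → q x = 0 := by
        have h2 : (fun x => q x ^ α * p x ^ (1 - α)) =ᵐ[ν.restrict E] 0 :=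
          (lintegral_eq_zero_iff ((hq.pow_const α).mul (hp.pow_const (1 - α)))).1 hI0
        filter_upwards [(ae_restrict_iff' hE).1 h2] with x hx hxE
        have h3 := hx hxE
        simp only [Pi.zero_apply, mul_eq_zero] at h3
        rcases h3 with h | h
        · rcases ENNReal.rpow_eq_zero_iff.1 h with ⟨h', _⟩ | ⟨_, h'⟩
          · exact h'
          · linarith
        · rcases ENNReal.rpow_eq_zero_iff.1 h with ⟨h', _⟩ | ⟨_, h'⟩
          · exact absurd h' hxE
          · linarith
      have hQE : Q E = 0 := by
        rw [hQ, withDensity_apply _ hE, setLIntegral_congr_fun_ae hE hq0E, lintegral_zero]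
      have hPEc : P Eᶜ = 0 := by
        rw [hP, withDensity_apply _ hE.compl,
          setLIntegral_congr_fun_ae hE.compl (ae_of_all _ fun x hx => not_not.1 hx),
          lintegral_zero]
      set M : ℝ := y + 1 with hMdef
      set g : Ω → ℝ := fun x => if p x = 0 then M else 0 with hgdef
      have hgm : Measurable g :=
        Measurable.ite (hp (measurableSet_singleton 0)) measurable_const measurable_const
      have hgb : ∀ x, |g x| ≤ |M| := fun x => by
        by_cases h : p x = 0 <;> simp [hgdef, h, abs_nonneg]
      have hQae : ∀ᵐ x ∂Q, p x = 0 := by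
        rw [ae_iff]
        exact hQE
      have hPae : ∀ᵐ x ∂P, ¬ p x = 0 := by
        rw [ae_iff]
        convert hPEc using 2
        ext x; simp [E]
      have hIQ : ∫ x, Real.exp ((α - 1) * g x) ∂Q = Real.exp ((α - 1) * M) := by
        rw [integral_congr_ae (g := fun _ => Real.exp ((α - 1) * M))
          (hQae.mono fun x hx => by simp [hgdef, hx])]
        simp
      have hIP : ∫ x, Real.exp (α * g x) ∂P = 1 := by
        rw [integral_congr_ae (g := fun _ => (1 : ℝ))
          (hPae.mono fun x hx => by simp [hgdef, hx])]
        simp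
      refine lt_of_lt_of_le ?_ (le_sSup ⟨g, hgm, ⟨|M|, hgb⟩, rfl⟩)
      rw [hIQ, hIP, Real.log_exp, Real.log_one, mul_zero, sub_zero, ← mul_assoc,
        inv_mul_cancel₀ hα1ne, one_mul]
      exact_mod_cast EReal.coe_lt_coe_iff.2 (by linarith : y < M)
    · -- main case
      have hIpos : 0 < I.toReal := ENNReal.toReal_pos hI0 hI_ne_top
      rw [ENNReal.log_pos_real hI0 hI_ne_top, ← EReal.coe_mul]
      have hrepr : ∀ n : ℕ,
          ((α - 1)⁻¹ * Real.log (∫ x, Real.exp ((α - 1) * clampSeq q p n x) ∂Q)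
            - α⁻¹ * Real.log (∫ x, Real.exp (α * clampSeq q p n x) ∂P))
          = (α - 1)⁻¹ * Real.log
              ((∫⁻ x, q x * ENNReal.ofReal (Real.exp ((α - 1) * clampSeq q p n x)) ∂ν).toReal)
            - α⁻¹ * Real.log
              ((∫⁻ x, p x * ENNReal.ofReal (Real.exp (α * clampSeq q p n x)) ∂ν).toReal) := by
        intro n
        rw [hQ, hP, aux_repr ν hq (clampSeq_measurable hq hp n) (α - 1),
          aux_repr ν hp (clampSeq_measurable hq hp n) α]
      have hA := aux_tendstoA ν hq hp hα0 hα1 hQ1 hP1 hI_ne_top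
      have hB := aux_tendstoB ν hq hp hα0 hα1 hQ1 hP1 hI_ne_top
      have hA2 := (ENNReal.tendsto_toReal hI_ne_top).comp hA
      have hB2 := (ENNReal.tendsto_toReal hI_ne_top).comp hB
      have hA3 := ((Real.continuousAt_log hIpos.ne').tendsto).comp hA2
      have hB3 := ((Real.continuousAt_log hIpos.ne').tendsto).comp hB2
      have htendreal : Tendsto (fun n : ℕ =>
          (α - 1)⁻¹ * Real.log
              ((∫⁻ x, q x * ENNReal.ofReal (Real.exp ((α - 1) * clampSeq q p n x)) ∂ν).toReal)
            - α⁻¹ * Real.log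
              ((∫⁻ x, p x * ENNReal.ofReal (Real.exp (α * clampSeq q p n x)) ∂ν).toReal))
          atTop (𝓝 ((α - 1)⁻¹ * Real.log I.toReal - α⁻¹ * Real.log I.toReal)) :=
        (hA3.const_mul _).sub (hB3.const_mul _)
      have hval : (α * (α - 1))⁻¹ * Real.log I.toReal
          = (α - 1)⁻¹ * Real.log I.toReal - α⁻¹ * Real.log I.toReal := by
        field_simp
        ring
      rw [hval]
      refine le_of_tendsto ((continuous_coe_real_ereal.tendsto _).comp htendreal)
        (Filter.Eventually.of_forall fun n => ?_)
      show (((α - 1)⁻¹ * Real.log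
              ((∫⁻ x, q x * ENNReal.ofReal (Real.exp ((α - 1) * clampSeq q p n x)) ∂ν).toReal)
            - α⁻¹ * Real.log
              ((∫⁻ x, p x * ENNReal.ofReal (Real.exp (α * clampSeq q p n x)) ∂ν).toReal) : ℝ)
          : EReal) ≤ _
      rw [← hrepr n]
      exact le_sSup ⟨clampSeq q p n, clampSeq_measurable hq hp n,
        ⟨(n : ℝ), clampSeq_abs_le q p n⟩, rfl⟩
end

section
/- Let Ω be a metric space with Borel σ-algebra, Q, P Borel probability measures, and α ∈ ℝ \ {0,1}. Then the supremum of the Rényi–Donsker–Varadhan objective g ↦ (1/(α-1)) log ∫ e^{(α-1)g} dQ - (1/α) log ∫ e^{αg} dP over bounded continuous functions equals the supremum over bounded measurable functions. -/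
open MeasureTheory Real
open scoped ENNReal NNReal

lemma my_exp_lip {a b M : ℝ} (ha : a ≤ M) (hb : b ≤ M) :
    |Real.exp a - Real.exp b| ≤ Real.exp M * |a - b| := by
  wlog h : b ≤ a generalizing a b
  · rw [abs_sub_comm, abs_sub_comm a b]; exact this hb ha (le_of_not_ge h)
  rw [abs_of_nonneg (sub_nonneg.2 (Real.exp_le_exp.2 h)), abs_of_nonneg (sub_nonneg.2 h)]
  have h1 : Real.exp a - Real.exp b = Real.exp a * (1 - Real.exp (b - a)) := by
    rw [mul_sub, mul_one, ← Real.exp_add]; ring_nf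
  rw [h1]
  have h2 : 1 - Real.exp (b - a) ≤ a - b := by
    have := Real.add_one_le_exp (b - a); linarith
  calc Real.exp a * (1 - Real.exp (b - a)) ≤ Real.exp a * (a - b) := by
        apply mul_le_mul_of_nonneg_left h2 (Real.exp_nonneg a)
    _ ≤ Real.exp M * (a - b) := by
        apply mul_le_mul_of_nonneg_right (Real.exp_le_exp.2 ha) (by linarith)

lemma my_log_lip {x y m : ℝ} (hm : 0 < m) (hx : m ≤ x) (hy : m ≤ y) :
    |Real.log x - Real.log y| ≤ m⁻¹ * |x - y| := by
  wlog h : y ≤ x generalizing x y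
  · rw [abs_sub_comm, abs_sub_comm x y]; exact this hy hx (le_of_not_ge h)
  have hy0 : 0 < y := lt_of_lt_of_le hm hy
  have hx0 : 0 < x := lt_of_lt_of_le hm hx
  rw [abs_of_nonneg (sub_nonneg.2 (Real.log_le_log hy0 h)),
    abs_of_nonneg (sub_nonneg.2 h)]
  rw [← Real.log_div hx0.ne' hy0.ne']
  have h1 : Real.log (x / y) ≤ x / y - 1 := Real.log_le_sub_one_of_pos (by positivity)
  have h2 : x / y - 1 = (x - y) / y := by field_simp
  calc Real.log (x / y) ≤ (x - y) / y := by rw [← h2]; exact h1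
    _ ≤ m⁻¹ * (x - y) := by
        rw [div_eq_inv_mul]
        exact mul_le_mul_of_nonneg_right (by
          exact inv_anti₀ hm hy) (by linarith)

lemma my_int_bdd {Ω : Type*} [MeasurableSpace Ω] (μ : Measure Ω) [IsFiniteMeasure μ]
    {h : Ω → ℝ} (hm : AEStronglyMeasurable h μ) {C : ℝ} (hb : ∀ x, |h x| ≤ C) :
    Integrable h μ :=
  (integrable_const C).mono' hm (Filter.Eventually.of_forall fun x => by
    simpa [Real.norm_eq_abs] using hb x)

lemma my_exp_int {Ω : Type*} [MeasurableSpace Ω] (μ : Measure Ω) [IsFiniteMeasure μ]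
    {h : Ω → ℝ} (hm : AEStronglyMeasurable h μ) {c C : ℝ} (hb : ∀ x, |h x| ≤ C) :
    Integrable (fun x => Real.exp (c * h x)) μ := by
  apply my_int_bdd μ (Real.continuous_exp.comp_aestronglyMeasurable (hm.const_mul c))
    (C := Real.exp (|c| * C))
  intro x
  rw [abs_of_nonneg (Real.exp_nonneg _)]
  apply Real.exp_le_exp.2
  calc c * h x ≤ |c * h x| := le_abs_self _
    _ = |c| * |h x| := abs_mul _ _
    _ ≤ |c| * C := mul_le_mul_of_nonneg_left (hb x) (abs_nonneg c)

lemma my_exp_lb {Ω : Type*} [MeasurableSpace Ω] (μ : Measure Ω) [IsProbabilityMeasure μ]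
    {h : Ω → ℝ} (hm : AEStronglyMeasurable h μ) {c C : ℝ} (hb : ∀ x, |h x| ≤ C) :
    Real.exp (-(|c| * C)) ≤ ∫ x, Real.exp (c * h x) ∂μ := by
  have h1 : ∀ x, Real.exp (-(|c| * C)) ≤ Real.exp (c * h x) := by
    intro x
    apply Real.exp_le_exp.2
    have : |c * h x| ≤ |c| * C := by
      rw [abs_mul]; exact mul_le_mul_of_nonneg_left (hb x) (abs_nonneg c)
    linarith [(abs_le.1 this).1]
  calc Real.exp (-(|c| * C)) = ∫ _x, Real.exp (-(|c| * C)) ∂μ := by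
        simp [integral_const]
    _ ≤ ∫ x, Real.exp (c * h x) ∂μ :=
        integral_mono (integrable_const _) (my_exp_int μ hm hb) h1

lemma my_key_est {Ω : Type*} [MeasurableSpace Ω] (μ : Measure Ω) [IsProbabilityMeasure μ]
    {c C : ℝ} (hC : 0 ≤ C) {h1 h2 : Ω → ℝ}
    (m1 : AEStronglyMeasurable h1 μ) (m2 : AEStronglyMeasurable h2 μ)
    (b1 : ∀ x, |h1 x| ≤ C) (b2 : ∀ x, |h2 x| ≤ C) :
    |Real.log (∫ x, Real.exp (c * h1 x) ∂μ) - Real.log (∫ x, Real.exp (c * h2 x) ∂μ)|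
      ≤ |c| * Real.exp (2 * (|c| * C)) * ∫ x, |h1 x - h2 x| ∂μ := by
  set M := |c| * C with hM
  have hM0 : 0 ≤ M := mul_nonneg (abs_nonneg c) hC
  have i1 : Integrable (fun x => Real.exp (c * h1 x)) μ := my_exp_int μ m1 b1
  have i2 : Integrable (fun x => Real.exp (c * h2 x)) μ := my_exp_int μ m2 b2
  have idiff : Integrable (fun x => h1 x - h2 x) μ :=
    (my_int_bdd μ m1 b1).sub (my_int_bdd μ m2 b2)
  have lb1 := my_exp_lb μ m1 (c := c) b1
  have lb2 := my_exp_lb μ m2 (c := c) b2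
  have step1 : |(∫ x, Real.exp (c * h1 x) ∂μ) - ∫ x, Real.exp (c * h2 x) ∂μ|
      ≤ |c| * Real.exp M * ∫ x, |h1 x - h2 x| ∂μ := by
    rw [← integral_sub i1 i2]
    calc |∫ x, (Real.exp (c * h1 x) - Real.exp (c * h2 x)) ∂μ|
        ≤ ∫ x, |Real.exp (c * h1 x) - Real.exp (c * h2 x)| ∂μ := by
          simpa [Real.norm_eq_abs] using
            norm_integral_le_integral_norm (fun x => Real.exp (c * h1 x) - Real.exp (c * h2 x)) (μ := μ)
      _ ≤ ∫ x, |c| * Real.exp M * |h1 x - h2 x| ∂μ := by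
          apply integral_mono (i1.sub i2).abs (idiff.abs.const_mul _)
          intro x
          have hx1 : c * h1 x ≤ M := by
            calc c * h1 x ≤ |c * h1 x| := le_abs_self _
              _ = |c| * |h1 x| := abs_mul _ _
              _ ≤ M := mul_le_mul_of_nonneg_left (b1 x) (abs_nonneg c)
          have hx2 : c * h2 x ≤ M := by
            calc c * h2 x ≤ |c * h2 x| := le_abs_self _
              _ = |c| * |h2 x| := abs_mul _ _
              _ ≤ M := mul_le_mul_of_nonneg_left (b2 x) (abs_nonneg c)
          calc |Real.exp (c * h1 x) - Real.exp (c * h2 x)|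
              ≤ Real.exp M * |c * h1 x - c * h2 x| := my_exp_lip hx1 hx2
            _ = |c| * Real.exp M * |h1 x - h2 x| := by
                rw [← mul_sub, abs_mul]; ring
      _ = |c| * Real.exp M * ∫ x, |h1 x - h2 x| ∂μ := by
          rw [integral_const_mul]
  have step2 := my_log_lip (Real.exp_pos (-M)) lb1 lb2
  calc |Real.log (∫ x, Real.exp (c * h1 x) ∂μ) - Real.log (∫ x, Real.exp (c * h2 x) ∂μ)|
      ≤ (Real.exp (-M))⁻¹ * |(∫ x, Real.exp (c * h1 x) ∂μ) - ∫ x, Real.exp (c * h2 x) ∂μ| :=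
        step2
    _ ≤ (Real.exp (-M))⁻¹ * (|c| * Real.exp M * ∫ x, |h1 x - h2 x| ∂μ) :=
        mul_le_mul_of_nonneg_left step1 (by positivity)
    _ = |c| * Real.exp (2 * M) * ∫ x, |h1 x - h2 x| ∂μ := by
        rw [← Real.exp_neg]
        rw [show (2:ℝ) * M = M + M by ring, Real.exp_add]
        ring

lemma my_clamp_est {C a b : ℝ} (hb : |b| ≤ C) :
    |max (-C) (min C a) - b| ≤ |a - b| := by
  obtain ⟨hb1, hb2⟩ := abs_le.1 hb
  have step1 : |min C a - b| ≤ |a - b| := by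
    rcases le_total a C with h | h
    · rw [min_eq_right h]
    · rw [min_eq_left h, abs_of_nonneg (by linarith), abs_of_nonneg (by linarith)]
      linarith
  rcases le_total (-C) (min C a) with h | h
  · rw [max_eq_right h]; exact step1
  · rw [max_eq_left h]
    have hm : min C a ≤ -C := h
    rw [abs_of_nonpos (by linarith)]
    calc -(-C - b) = b + C := by ring
      _ ≤ b - min C a := by linarith
      _ ≤ |a - b| := by
          rw [show b - min C a = -(min C a - b) by ring]
          exact (neg_le_abs _).trans step1

/-- On a metric space with its Borel σ-algebra, the supremum of the
Rényi–Donsker–Varadhan objective over bounded continuous functions equals the supremum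
over bounded measurable functions. -/
theorem renyi_sup_continuous_eq_sup_measurable {Ω : Type*} [MetricSpace Ω]
    [MeasurableSpace Ω] [BorelSpace Ω]
    (Q P : Measure Ω) [IsProbabilityMeasure Q] [IsProbabilityMeasure P]
    {α : ℝ} (hα0 : α ≠ 0) (hα1 : α ≠ 1) :
    sSup {r : EReal | ∃ g : Ω → ℝ, Continuous g ∧ (∃ C, ∀ x, |g x| ≤ C) ∧
        r = (((α - 1)⁻¹ * Real.log (∫ x, Real.exp ((α - 1) * g x) ∂Q)
              - α⁻¹ * Real.log (∫ x, Real.exp (α * g x) ∂P) : ℝ) : EReal)}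
      = sSup {r : EReal | ∃ g : Ω → ℝ, Measurable g ∧ (∃ C, ∀ x, |g x| ≤ C) ∧
        r = (((α - 1)⁻¹ * Real.log (∫ x, Real.exp ((α - 1) * g x) ∂Q)
              - α⁻¹ * Real.log (∫ x, Real.exp (α * g x) ∂P) : ℝ) : EReal)} := by

  have hα1' : α - 1 ≠ 0 := sub_ne_zero.2 hα1
  set v : (Ω → ℝ) → ℝ := fun g =>
    (α - 1)⁻¹ * Real.log (∫ x, Real.exp ((α - 1) * g x) ∂Q)
      - α⁻¹ * Real.log (∫ x, Real.exp (α * g x) ∂P) with hv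
  set S := {r : EReal | ∃ g : Ω → ℝ, Continuous g ∧ (∃ C, ∀ x, |g x| ≤ C) ∧
      r = ((v g : ℝ) : EReal)} with hS
  show sSup S = _
  apply le_antisymm
  · exact sSup_le_sSup (fun r ⟨g, hc, hb, hr⟩ => ⟨g, hc.measurable, hb, hr⟩)
  · apply sSup_le
    rintro r ⟨g, hgm, ⟨C₀, hgb₀⟩, rfl⟩
    show ((v g : ℝ) : EReal) ≤ sSup S
    set C := max C₀ 0 with hCdef
    have hC : 0 ≤ C := le_max_right _ _
    have hgb : ∀ x, |g x| ≤ C := fun x => (hgb₀ x).trans (le_max_left _ _)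
    rw [← EReal.ge_of_forall_gt_iff_ge]
    intro z hz
    have hz' : z < v g := by exact_mod_cast hz
    set ε : ℝ := v g - z with hε
    have hε0 : 0 < ε := by simp [hε]; linarith
    set L : ℝ := Real.exp (2 * (|α - 1| * C)) + Real.exp (2 * (|α| * C)) with hL
    have hL0 : 0 < L := by positivity
    -- integrability of g w.r.t. P + Q
    have hgm' : AEStronglyMeasurable g (P + Q) := hgm.aestronglyMeasurable
    have hg_int : Integrable g (P + Q) := my_int_bdd _ hgm' hgb
    obtain ⟨f, hf_le, hf_int⟩ :=
      hg_int.exists_boundedContinuous_integral_sub_le (div_pos hε0 hL0)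
    set f' : Ω → ℝ := fun x => max (-C) (min C (f x)) with hf'
    have hf'c : Continuous f' := continuous_const.max (continuous_const.min f.continuous)
    have hf'b : ∀ x, |f' x| ≤ C := by
      intro x
      rw [abs_le]
      refine ⟨le_max_left _ _, max_le (by linarith) (min_le_left _ _)⟩
    have hf'm : AEStronglyMeasurable f' (P + Q) := hf'c.aestronglyMeasurable
    have hf'_int : Integrable f' (P + Q) := my_int_bdd _ hf'm hf'b
    -- pointwise bound and integral comparison
    have hI_le : (∫ x, |f' x - g x| ∂(P + Q)) ≤ ε / L := by
      refine le_trans ?_ hf_le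
      apply integral_mono (hf'_int.sub hg_int).abs (hg_int.sub hf_int).norm
      intro x
      simp only [Real.norm_eq_abs, Pi.sub_apply]
      rw [abs_sub_comm (g x)]
      exact my_clamp_est (hgb x)
    have hint_abs : Integrable (fun x => |f' x - g x|) (P + Q) := (hf'_int.sub hg_int).abs
    have hsplit : (∫ x, |f' x - g x| ∂(P + Q))
        = (∫ x, |f' x - g x| ∂P) + ∫ x, |f' x - g x| ∂Q :=
      integral_add_measure hint_abs.left_of_add_measure hint_abs.right_of_add_measure
    have hP_nonneg : 0 ≤ ∫ x, |f' x - g x| ∂P := integral_nonneg fun x => abs_nonneg _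
    have hQ_nonneg : 0 ≤ ∫ x, |f' x - g x| ∂Q := integral_nonneg fun x => abs_nonneg _
    have hIP : (∫ x, |f' x - g x| ∂P) ≤ ∫ x, |f' x - g x| ∂(P + Q) := by
      rw [hsplit]; linarith
    have hIQ : (∫ x, |f' x - g x| ∂Q) ≤ ∫ x, |f' x - g x| ∂(P + Q) := by
      rw [hsplit]; linarith
    have hI_nonneg : 0 ≤ ∫ x, |f' x - g x| ∂(P + Q) := by rw [hsplit]; linarith
    -- key estimates
    have hkeyQ := my_key_est Q hC (c := α - 1) (hf'c.aestronglyMeasurable)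
      hgm.aestronglyMeasurable hf'b hgb
    have hkeyP := my_key_est P hC (c := α) (hf'c.aestronglyMeasurable)
      hgm.aestronglyMeasurable hf'b hgb
    -- bound |v f' - v g|
    have hvdiff : |v f' - v g| ≤ ε := by
      have e1 : v f' - v g
          = (α - 1)⁻¹ * (Real.log (∫ x, Real.exp ((α - 1) * f' x) ∂Q)
              - Real.log (∫ x, Real.exp ((α - 1) * g x) ∂Q))
            - α⁻¹ * (Real.log (∫ x, Real.exp (α * f' x) ∂P)
              - Real.log (∫ x, Real.exp (α * g x) ∂P)) := by
        simp only [hv]; ring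
      have hQ' : |(α - 1)⁻¹| * |Real.log (∫ x, Real.exp ((α - 1) * f' x) ∂Q)
            - Real.log (∫ x, Real.exp ((α - 1) * g x) ∂Q)|
          ≤ Real.exp (2 * (|α - 1| * C)) * ∫ x, |f' x - g x| ∂Q := by
        calc |(α - 1)⁻¹| * |Real.log (∫ x, Real.exp ((α - 1) * f' x) ∂Q)
              - Real.log (∫ x, Real.exp ((α - 1) * g x) ∂Q)|
            ≤ |(α - 1)⁻¹| * (|α - 1| * Real.exp (2 * (|α - 1| * C)) * ∫ x, |f' x - g x| ∂Q) :=
              mul_le_mul_of_nonneg_left hkeyQ (abs_nonneg _)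
          _ = Real.exp (2 * (|α - 1| * C)) * ∫ x, |f' x - g x| ∂Q := by
              rw [abs_inv, ← mul_assoc, ← mul_assoc, inv_mul_cancel₀ (abs_ne_zero.2 hα1')]
              ring
      have hP' : |α⁻¹| * |Real.log (∫ x, Real.exp (α * f' x) ∂P)
            - Real.log (∫ x, Real.exp (α * g x) ∂P)|
          ≤ Real.exp (2 * (|α| * C)) * ∫ x, |f' x - g x| ∂P := by
        calc |α⁻¹| * |Real.log (∫ x, Real.exp (α * f' x) ∂P)
              - Real.log (∫ x, Real.exp (α * g x) ∂P)|
            ≤ |α⁻¹| * (|α| * Real.exp (2 * (|α| * C)) * ∫ x, |f' x - g x| ∂P) :=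
              mul_le_mul_of_nonneg_left hkeyP (abs_nonneg _)
          _ = Real.exp (2 * (|α| * C)) * ∫ x, |f' x - g x| ∂P := by
              rw [abs_inv, ← mul_assoc, ← mul_assoc, inv_mul_cancel₀ (abs_ne_zero.2 hα0)]
              ring
      calc |v f' - v g|
          ≤ |(α - 1)⁻¹ * (Real.log (∫ x, Real.exp ((α - 1) * f' x) ∂Q)
                - Real.log (∫ x, Real.exp ((α - 1) * g x) ∂Q))|
            + |α⁻¹ * (Real.log (∫ x, Real.exp (α * f' x) ∂P)
                - Real.log (∫ x, Real.exp (α * g x) ∂P))| := by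
            rw [e1]; exact abs_sub _ _
        _ ≤ Real.exp (2 * (|α - 1| * C)) * (∫ x, |f' x - g x| ∂Q)
            + Real.exp (2 * (|α| * C)) * ∫ x, |f' x - g x| ∂P := by
            rw [abs_mul, abs_mul]
            exact add_le_add hQ' hP'
        _ ≤ Real.exp (2 * (|α - 1| * C)) * (∫ x, |f' x - g x| ∂(P + Q))
            + Real.exp (2 * (|α| * C)) * ∫ x, |f' x - g x| ∂(P + Q) := by
            exact add_le_add (mul_le_mul_of_nonneg_left hIQ (Real.exp_nonneg _))
              (mul_le_mul_of_nonneg_left hIP (Real.exp_nonneg _))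
        _ = L * ∫ x, |f' x - g x| ∂(P + Q) := by rw [hL]; ring
        _ ≤ L * (ε / L) := mul_le_mul_of_nonneg_left hI_le hL0.le
        _ = ε := by field_simp
    -- conclude
    have hzle : z ≤ v f' := by
      have := abs_le.1 hvdiff
      simp only [hε] at this
      linarith [this.1]
    have hmem : ((v f' : ℝ) : EReal) ∈ S := ⟨f', hf'c, ⟨C, hf'b⟩, rfl⟩
    calc (z : EReal) ≤ ((v f' : ℝ) : EReal) := by exact_mod_cast hzle
      _ ≤ sSup S := le_sSup hmem
end

section
/- Let Ω be a metric space with Borel σ-algebra, Q, P Borel probability measures, α ∈ ℝ \ {0,1}. Then the supremum of the Rényi–Donsker–Varadhan objective over bounded Lipschitz functions equals the supremum over bounded continuous functions. -/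
open MeasureTheory Real Filter Topology
open scoped ENNReal NNReal

section Approx

variable {Ω : Type*} [MetricSpace Ω]

noncomputable def lipApprox (g : Ω → ℝ) (n : ℕ) (x : Ω) : ℝ :=
  ⨅ y, (g y + n * dist x y)

variable {g : Ω → ℝ} {C : ℝ} (hC : ∀ x, |g x| ≤ C) (h0 : 0 ≤ C)

include hC in
lemma lipApprox_bddBelow (n : ℕ) (x : Ω) :
    BddBelow (Set.range fun y => g y + n * dist x y) := by
  refine ⟨-C, fun r hr => ?_⟩
  obtain ⟨y, rfl⟩ := hr
  dsimp only
  have h1 := (abs_le.1 (hC y)).1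
  have h2 : (0:ℝ) ≤ n * dist x y := by positivity
  linarith

include hC in
lemma lipApprox_le (n : ℕ) (x : Ω) : lipApprox g n x ≤ g x := by
  have : Nonempty Ω := ⟨x⟩
  have := ciInf_le (lipApprox_bddBelow hC n x) x
  simpa [lipApprox] using this

include hC in
lemma lipApprox_ge (n : ℕ) (x : Ω) : -C ≤ lipApprox g n x := by
  have : Nonempty Ω := ⟨x⟩
  refine le_ciInf fun y => ?_
  have h1 := (abs_le.1 (hC y)).1
  have h2 : (0:ℝ) ≤ n * dist x y := by positivity
  linarith

include hC in
lemma lipApprox_abs_le (n : ℕ) (x : Ω) : |lipApprox g n x| ≤ C := by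
  rw [abs_le]
  refine ⟨lipApprox_ge hC n x, (lipApprox_le hC n x).trans ((abs_le.1 (hC x)).2)⟩

include hC in
lemma lipApprox_lipschitz (n : ℕ) : LipschitzWith n (lipApprox g n) := by
  refine LipschitzWith.of_le_add_mul n fun x z => ?_
  have : Nonempty Ω := ⟨x⟩
  rw [← sub_le_iff_le_add]
  refine le_ciInf fun y => ?_
  rw [sub_le_iff_le_add]
  refine (ciInf_le_of_le (lipApprox_bddBelow hC n x) y ?_)
  have h := dist_triangle x z y
  have hn : (0:ℝ) ≤ n := Nat.cast_nonneg n
  push_cast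
  nlinarith [dist_nonneg (x := x) (y := z)]

include hC in
lemma lipApprox_tendsto (hg : Continuous g) (x : Ω) :
    Tendsto (fun n => lipApprox g n x) atTop (𝓝 (g x)) := by
  rw [Metric.tendsto_atTop]
  intro ε hε
  have : Nonempty Ω := ⟨x⟩
  obtain ⟨δ, hδ, hδg⟩ := Metric.continuousAt_iff.1 hg.continuousAt (ε/2) (by linarith)
  obtain ⟨N, hN⟩ := exists_nat_ge ((2 * C) / δ)
  refine ⟨N, fun n hn => ?_⟩
  have hle := lipApprox_le hC n x
  have hge : g x - ε/2 ≤ lipApprox g n x := by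
    refine le_ciInf fun y => ?_
    rcases lt_or_ge (dist y x) δ with h | h
    · have h' := hδg h
      rw [Real.dist_eq] at h'
      have h2 : (0:ℝ) ≤ n * dist x y := by positivity
      have h3 := (abs_lt.1 h').1
      linarith
    · have hnN : (2 * C) / δ ≤ (n : ℝ) := hN.trans (by exact_mod_cast hn)
      have h2 : 2 * C ≤ (n:ℝ) * δ := by
        rw [div_le_iff₀ hδ] at hnN; linarith
      have h3 : (n:ℝ) * δ ≤ n * dist x y := by
        have : (0:ℝ) ≤ (n:ℝ) := Nat.cast_nonneg n
        rw [dist_comm]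
        exact mul_le_mul_of_nonneg_left h this
      have h4 := (abs_le.1 (hC y)).1
      have h5 := (abs_le.1 (hC x)).2
      linarith
  rw [Real.dist_eq, abs_lt]
  constructor <;> linarith

end Approx

section Int

variable {Ω : Type*} [MetricSpace Ω] [MeasurableSpace Ω] [BorelSpace Ω]
  (μ : Measure Ω) [IsProbabilityMeasure μ]
  {g : Ω → ℝ} {C : ℝ} (hg : Continuous g) (hC : ∀ x, |g x| ≤ C)

include hg hC in
lemma exp_integrable (c : ℝ) : Integrable (fun x => Real.exp (c * g x)) μ := by
  refine (integrable_const (Real.exp (|c| * C))).mono'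
    ((hg.const_smul c).rexp.aestronglyMeasurable) (ae_of_all _ fun x => ?_)
  rw [Real.norm_eq_abs, Real.abs_exp, Real.exp_le_exp]
  calc c * g x ≤ |c * g x| := le_abs_self _
    _ = |c| * |g x| := abs_mul _ _
    _ ≤ |c| * C := by
        exact mul_le_mul_of_nonneg_left (hC x) (abs_nonneg c)

include hg hC in
lemma exp_integral_pos (c : ℝ) : 0 < ∫ x, Real.exp (c * g x) ∂μ := by
  have h1 : ∀ x, Real.exp (-(|c| * C)) ≤ Real.exp (c * g x) := fun x => by
    rw [Real.exp_le_exp]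
    calc -(|c| * C) ≤ -|c * g x| := by
          rw [neg_le_neg_iff, abs_mul]
          exact mul_le_mul_of_nonneg_left (hC x) (abs_nonneg c)
      _ ≤ c * g x := neg_abs_le _
  calc (0:ℝ) < Real.exp (-(|c| * C)) := Real.exp_pos _
    _ = ∫ _, Real.exp (-(|c| * C)) ∂μ := by simp
    _ ≤ ∫ x, Real.exp (c * g x) ∂μ :=
        integral_mono (integrable_const _) (exp_integrable μ hg hC c) h1

include hg hC in
lemma exp_integral_tendsto (hC0 : 0 ≤ C) (c : ℝ) :
    Tendsto (fun n => ∫ x, Real.exp (c * lipApprox g n x) ∂μ) atTop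
      (𝓝 (∫ x, Real.exp (c * g x) ∂μ)) := by
  refine tendsto_integral_of_dominated_convergence (fun _ => Real.exp (|c| * C))
    (fun n => (((lipApprox_lipschitz hC n).continuous.const_smul c).rexp).aestronglyMeasurable)
    (integrable_const _) (fun n => ae_of_all _ fun x => ?_) (ae_of_all _ fun x => ?_)
  · rw [Real.norm_eq_abs, Real.abs_exp, Real.exp_le_exp]
    calc c * lipApprox g n x ≤ |c * lipApprox g n x| := le_abs_self _
      _ = |c| * |lipApprox g n x| := abs_mul _ _
      _ ≤ |c| * C := mul_le_mul_of_nonneg_left (lipApprox_abs_le hC n x) (abs_nonneg c)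
  · exact (Real.continuous_exp.tendsto _).comp
      (((lipApprox_tendsto hC hg x).const_mul c))

end Int

open MeasureTheory Real
open scoped ENNReal NNReal

/-- On a metric space with its Borel σ-algebra, the supremum of the
Rényi–Donsker–Varadhan objective over bounded Lipschitz functions equals the supremum
over bounded continuous functions. -/
theorem renyi_sup_lipschitz_eq_sup_continuous {Ω : Type*} [MetricSpace Ω]
    [MeasurableSpace Ω] [BorelSpace Ω]
    (Q P : Measure Ω) [IsProbabilityMeasure Q] [IsProbabilityMeasure P]
    {α : ℝ} (hα0 : α ≠ 0) (hα1 : α ≠ 1) :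
    sSup {r : EReal | ∃ g : Ω → ℝ, (∃ L : ℝ≥0, LipschitzWith L g) ∧ (∃ C, ∀ x, |g x| ≤ C) ∧
        r = (((α - 1)⁻¹ * Real.log (∫ x, Real.exp ((α - 1) * g x) ∂Q)
              - α⁻¹ * Real.log (∫ x, Real.exp (α * g x) ∂P) : ℝ) : EReal)}
      = sSup {r : EReal | ∃ g : Ω → ℝ, Continuous g ∧ (∃ C, ∀ x, |g x| ≤ C) ∧
        r = (((α - 1)⁻¹ * Real.log (∫ x, Real.exp ((α - 1) * g x) ∂Q)
              - α⁻¹ * Real.log (∫ x, Real.exp (α * g x) ∂P) : ℝ) : EReal)} := by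
  apply le_antisymm
  · refine sSup_le_sSup fun r hr => ?_
    obtain ⟨g, ⟨L, hL⟩, hb, rfl⟩ := hr
    exact ⟨g, hL.continuous, hb, rfl⟩
  · refine sSup_le fun r hr => ?_
    obtain ⟨g, hg, ⟨C₀, hC₀⟩, rfl⟩ := hr
    set C := max C₀ 0 with hCdef
    have hC : ∀ x, |g x| ≤ C := fun x => (hC₀ x).trans (le_max_left _ _)
    have hC0 : (0:ℝ) ≤ C := le_max_right _ _
    -- value for each Lipschitz approximation belongs to the LHS set
    have hmem : ∀ n : ℕ,
        (((((α - 1)⁻¹ * Real.log (∫ x, Real.exp ((α - 1) * lipApprox g n x) ∂Q)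
            - α⁻¹ * Real.log (∫ x, Real.exp (α * lipApprox g n x) ∂P)) : ℝ)) : EReal) ∈
          {r : EReal | ∃ g : Ω → ℝ, (∃ L : ℝ≥0, LipschitzWith L g) ∧ (∃ C, ∀ x, |g x| ≤ C) ∧
            r = (((α - 1)⁻¹ * Real.log (∫ x, Real.exp ((α - 1) * g x) ∂Q)
              - α⁻¹ * Real.log (∫ x, Real.exp (α * g x) ∂P) : ℝ) : EReal)} := by
      intro n
      exact ⟨lipApprox g n, ⟨n, lipApprox_lipschitz hC n⟩,
        ⟨C, lipApprox_abs_le hC n⟩, rfl⟩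
    have hQpos := exp_integral_pos Q hg hC (α - 1)
    have hPpos := exp_integral_pos P hg hC α
    have hQt := exp_integral_tendsto Q hg hC hC0 (α - 1)
    have hPt := exp_integral_tendsto P hg hC hC0 α
    have hlogQ : Filter.Tendsto
        (fun n => Real.log (∫ x, Real.exp ((α - 1) * lipApprox g n x) ∂Q)) Filter.atTop
        (𝓝 (Real.log (∫ x, Real.exp ((α - 1) * g x) ∂Q))) :=
      ((Real.continuousAt_log hQpos.ne').tendsto).comp hQt
    have hlogP : Filter.Tendsto
        (fun n => Real.log (∫ x, Real.exp (α * lipApprox g n x) ∂P)) Filter.atTop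
        (𝓝 (Real.log (∫ x, Real.exp (α * g x) ∂P))) :=
      ((Real.continuousAt_log hPpos.ne').tendsto).comp hPt
    have hF : Filter.Tendsto
        (fun n => (((α - 1)⁻¹ * Real.log (∫ x, Real.exp ((α - 1) * lipApprox g n x) ∂Q)
            - α⁻¹ * Real.log (∫ x, Real.exp (α * lipApprox g n x) ∂P)) : ℝ)) Filter.atTop
        (𝓝 ((α - 1)⁻¹ * Real.log (∫ x, Real.exp ((α - 1) * g x) ∂Q)
            - α⁻¹ * Real.log (∫ x, Real.exp (α * g x) ∂P))) :=
      (hlogQ.const_mul _).sub (hlogP.const_mul _)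
    have hFe : Filter.Tendsto
        (fun n => ((((α - 1)⁻¹ * Real.log (∫ x, Real.exp ((α - 1) * lipApprox g n x) ∂Q)
            - α⁻¹ * Real.log (∫ x, Real.exp (α * lipApprox g n x) ∂P) : ℝ)) : EReal))
        Filter.atTop
        (𝓝 (((α - 1)⁻¹ * Real.log (∫ x, Real.exp ((α - 1) * g x) ∂Q)
            - α⁻¹ * Real.log (∫ x, Real.exp (α * g x) ∂P) : ℝ) : EReal)) :=
      EReal.tendsto_coe.2 hF
    exact le_of_tendsto hFe (Filter.Eventually.of_forall fun n => le_sSup (hmem n))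
end

section
/- For any measurable function g : Ω → ℝ with α > 1 and ∫ e^{αg} dP < ∞, one has (1/(α-1)) log ∫ e^{(α-1)g} dQ - (1/α) log ∫ e^{αg} dP ≤ R_α(Q‖P), where the left side may be -∞ or the first term may be +∞ (in which case the inequality still holds with the conventions stated). -/
open MeasureTheory Real Classical
open scoped ENNReal NNReal

/-- For measurable `g` (possibly unbounded), `α > 1` and `∫ e^{αg} dP < ∞`,
`(1/(α-1)) log ∫ e^{(α-1)g} dQ - (1/α) log ∫ e^{αg} dP ≤ R_α(Q‖P)`, where the first term
may be `+∞` (the inequality is stated in the extended reals, with Rényi divergence `+∞`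
when `Q` is not absolutely continuous w.r.t. `P`). -/
theorem renyi_lower_bound_unbounded_gt_one {Ω : Type*} [MeasurableSpace Ω]
    (Q P : Measure Ω) [IsProbabilityMeasure Q] [IsProbabilityMeasure P]
    {α : ℝ} (hα : 1 < α) (g : Ω → ℝ) (hg : Measurable g)
    (hfin : ∫⁻ x, ENNReal.ofReal (Real.exp (α * g x)) ∂P < ⊤) :
    (((α - 1)⁻¹ : ℝ) : EReal)
        * ENNReal.log (∫⁻ x, ENNReal.ofReal (Real.exp ((α - 1) * g x)) ∂Q)
      - ((α⁻¹ : ℝ) : EReal) * ENNReal.log (∫⁻ x, ENNReal.ofReal (Real.exp (α * g x)) ∂P)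
      ≤ if Q ≪ P then
          (((α * (α - 1))⁻¹ : ℝ) : EReal) * ENNReal.log (∫⁻ x, (Q.rnDeriv P x) ^ α ∂P)
      else ⊤ := by
  have hα0 : (0 : ℝ) < α := lt_trans one_pos hα
  have hα1 : (0 : ℝ) < α - 1 := by linarith
  by_cases hQP : Q ≪ P
  · rw [if_pos hQP]
    set A := ∫⁻ x, ENNReal.ofReal (Real.exp ((α - 1) * g x)) ∂Q with hA
    set B := ∫⁻ x, ENNReal.ofReal (Real.exp (α * g x)) ∂P with hB
    set C := ∫⁻ x, (Q.rnDeriv P x) ^ α ∂P with hC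
    -- measurability
    have hmf : Measurable fun x => ENNReal.ofReal (Real.exp ((α - 1) * g x)) :=
      (ENNReal.measurable_ofReal.comp (Real.measurable_exp.comp ((measurable_const.mul hg))))
    have hmr : Measurable (Q.rnDeriv P) := Measure.measurable_rnDeriv Q P
    -- C ≠ 0
    have hC0 : C ≠ 0 := by
      intro h0
      have hmeas : Measurable fun x => (Q.rnDeriv P x) ^ α :=
        hmr.pow_const α
      rw [hC, lintegral_eq_zero_iff hmeas] at h0
      have h0' : Q.rnDeriv P =ᵐ[P] 0 := by
        filter_upwards [h0] with x hx
        simpa [ENNReal.rpow_eq_zero_iff_of_pos hα0] using hx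
      have : Q Set.univ = 0 := by
        rw [← Measure.lintegral_rnDeriv hQP]
        rw [lintegral_congr_ae h0']
        simp
      simp [measure_univ] at this
    -- B positive and finite
    have hB0 : 0 < B := by
      have hmB : Measurable fun x => ENNReal.ofReal (Real.exp (α * g x)) :=
        (ENNReal.measurable_ofReal.comp (Real.measurable_exp.comp ((measurable_const.mul hg))))
      rw [hB, lintegral_pos_iff_support hmB]
      have : (Function.support fun x => ENNReal.ofReal (Real.exp (α * g x))) = Set.univ := by
        ext x
        simp [Function.support, (Real.exp_pos _).trans_le (le_refl _), ENNReal.ofReal_eq_zero,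
          not_le.mpr (Real.exp_pos _)]
      rw [this]
      simp
    -- A positive
    have hA0 : 0 < A := by
      rw [hA, lintegral_pos_iff_support hmf]
      have : (Function.support fun x => ENNReal.ofReal (Real.exp ((α - 1) * g x))) = Set.univ := by
        ext x
        simp [Function.support, ENNReal.ofReal_eq_zero, not_le.mpr (Real.exp_pos _)]
      rw [this]
      simp
    by_cases hCt : C = ⊤
    · rw [hCt]
      rw [ENNReal.log_top, EReal.coe_mul_top_of_pos (by positivity)]
      exact le_top
    -- Hölder's inequality
    have hpq : Real.HolderConjugate (α / (α - 1)) α := by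
      exact ((Real.holderConjugate_iff_eq_conjExponent hα).mpr rfl).symm
    have holder :
        (∫⁻ x, ((fun x => ENNReal.ofReal (Real.exp ((α - 1) * g x))) * Q.rnDeriv P) x ∂P)
          ≤ (∫⁻ x, ENNReal.ofReal (Real.exp ((α - 1) * g x)) ^ (α / (α - 1)) ∂P)
              ^ (1 / (α / (α - 1)))
            * (∫⁻ x, Q.rnDeriv P x ^ α ∂P) ^ (1 / α) :=
      ENNReal.lintegral_mul_le_Lp_mul_Lq P hpq hmf.aemeasurable hmr.aemeasurable
    have hlhs : (∫⁻ x, ((fun x => ENNReal.ofReal (Real.exp ((α - 1) * g x))) * Q.rnDeriv P) x ∂P)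
        = A := by
      rw [hA]
      rw [← lintegral_rnDeriv_mul hQP hmf.aemeasurable]
      congr 1
      ext x
      simp [mul_comm]
    have hpow : ∀ x, ENNReal.ofReal (Real.exp ((α - 1) * g x)) ^ (α / (α - 1))
        = ENNReal.ofReal (Real.exp (α * g x)) := by
      intro x
      rw [ENNReal.ofReal_rpow_of_pos (Real.exp_pos _)]
      congr 1
      rw [Real.rpow_def_of_pos (Real.exp_pos _), Real.log_exp]
      congr 1
      field_simp
    have hrhs : (∫⁻ x, ENNReal.ofReal (Real.exp ((α - 1) * g x)) ^ (α / (α - 1)) ∂P) = B := by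
      rw [hB]; exact lintegral_congr fun x => hpow x
    have key : A ≤ B ^ ((α - 1) / α) * C ^ (1 / α) := by
      have h1 : 1 / (α / (α - 1)) = (α - 1) / α := by
        rw [one_div_div]
      rw [← hlhs, ← h1, ← hrhs]
      exact holder
    -- A is finite
    have hBt : B ≠ ⊤ := hfin.ne
    have hAt : A ≠ ⊤ := by
      intro h
      rw [h] at key
      have : B ^ ((α - 1) / α) * C ^ (1 / α) < ⊤ :=
        ENNReal.mul_lt_top (ENNReal.rpow_lt_top_of_nonneg (by positivity) hBt)
          (ENNReal.rpow_lt_top_of_nonneg (by positivity) hCt)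
      exact absurd (top_le_iff.mp key) this.ne
    -- take logs
    have hlog : ENNReal.log A ≤ ((α - 1) / α : ℝ) * ENNReal.log B
        + ((1 / α : ℝ) : EReal) * ENNReal.log C := by
      calc ENNReal.log A ≤ ENNReal.log (B ^ ((α - 1) / α) * C ^ (1 / α)) :=
            ENNReal.log_monotone key
        _ = _ := by rw [ENNReal.log_mul_add, ENNReal.log_rpow, ENNReal.log_rpow]
    have hBlog : ENNReal.log B = ((Real.log B.toReal : ℝ) : EReal) :=
      ENNReal.log_pos_real' (ENNReal.toReal_pos hB0.ne' hBt)
    have hAlog : ENNReal.log A = ((Real.log A.toReal : ℝ) : EReal) :=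
      ENNReal.log_pos_real' (ENNReal.toReal_pos hA0.ne' hAt)
    have hClog : ENNReal.log C = ((Real.log C.toReal : ℝ) : EReal) :=
      ENNReal.log_pos_real' (ENNReal.toReal_pos hC0 hCt)
    set a := Real.log A.toReal with ha
    set b := Real.log B.toReal with hb
    set c := Real.log C.toReal with hc
    have hreal : a ≤ (α - 1) / α * b + 1 / α * c := by
      have h := hlog
      rw [hAlog, hBlog, hClog, ← EReal.coe_mul, ← EReal.coe_mul, ← EReal.coe_add] at h
      exact_mod_cast h
    have hgoal : (α - 1)⁻¹ * a - α⁻¹ * b ≤ (α * (α - 1))⁻¹ * c := by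
      have h2 : (α - 1)⁻¹ * a ≤ (α - 1)⁻¹ * ((α - 1) / α * b + 1 / α * c) :=
        mul_le_mul_of_nonneg_left hreal (by positivity)
      have h3 : (α - 1)⁻¹ * ((α - 1) / α * b + 1 / α * c)
          = α⁻¹ * b + (α * (α - 1))⁻¹ * c := by
        field_simp
      linarith [h2.trans_eq h3]
    rw [hAlog, hBlog, hClog]
    calc (((α - 1)⁻¹ : ℝ) : EReal) * (a : EReal) - ((α⁻¹ : ℝ) : EReal) * (b : EReal)
        = (((α - 1)⁻¹ * a - α⁻¹ * b : ℝ) : EReal) := by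
          rw [← EReal.coe_mul, ← EReal.coe_mul, ← EReal.coe_sub]
      _ ≤ (((α * (α - 1))⁻¹ * c : ℝ) : EReal) := EReal.coe_le_coe_iff.mpr hgoal
      _ = _ := by rw [EReal.coe_mul]
  · rw [if_neg hQP]
    exact le_top
end

section
/- For any measurable g : Ω → ℝ with α ∈ (0,1), if both ∫ e^{(α-1)g} dQ < ∞ and ∫ e^{αg} dP < ∞, then (1/(α-1)) log ∫ e^{(α-1)g} dQ - (1/α) log ∫ e^{αg} dP ≤ R_α(Q‖P). -/
open MeasureTheory Real
open scoped ENNReal NNReal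

/-- For measurable `g` (possibly unbounded) and `α ∈ (0,1)`, if both
`∫ e^{(α-1)g} dQ < ∞` and `∫ e^{αg} dP < ∞`, then
`(1/(α-1)) log ∫ e^{(α-1)g} dQ - (1/α) log ∫ e^{αg} dP ≤ R_α(Q‖P)`,
the Rényi divergence being defined via a common dominating measure `ν`. -/
theorem renyi_lower_bound_unbounded_lt_one {Ω : Type*} [MeasurableSpace Ω]
    (Q P ν : Measure Ω) [IsProbabilityMeasure Q] [IsProbabilityMeasure P] [SigmaFinite ν]
    (q p : Ω → ℝ≥0∞) (hq : Measurable q) (hp : Measurable p)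
    (hQ : Q = ν.withDensity q) (hP : P = ν.withDensity p)
    {α : ℝ} (hα0 : 0 < α) (hα1 : α < 1)
    (g : Ω → ℝ) (hg : Measurable g)
    (hintQ : Integrable (fun x => Real.exp ((α - 1) * g x)) Q)
    (hintP : Integrable (fun x => Real.exp (α * g x)) P) :
    (((α - 1)⁻¹ * Real.log (∫ x, Real.exp ((α - 1) * g x) ∂Q)
        - α⁻¹ * Real.log (∫ x, Real.exp (α * g x) ∂P) : ℝ) : EReal)
      ≤ ((α * (α - 1))⁻¹ : ℝ)
          * ENNReal.log (∫⁻ x in {x | p x ≠ 0}, (q x) ^ α * (p x) ^ (1 - α) ∂ν) := by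
  have hα1' : (0:ℝ) < 1 - α := by linarith
  have hαne : α ≠ 0 := hα0.ne'
  have hα1ne : α - 1 ≠ 0 := by linarith
  set A := ∫ x, Real.exp ((α - 1) * g x) ∂Q with hA_def
  set B := ∫ x, Real.exp (α * g x) ∂P with hB_def
  have hApos : 0 < A := integral_exp_pos hintQ
  have hBpos : 0 < B := integral_exp_pos hintP
  set c : ℝ := (α * (α - 1))⁻¹ with hc_def
  have hc_neg : c < 0 := by
    apply inv_lt_zero.2
    nlinarith
  -- the two auxiliary functions
  set F : Ω → ℝ≥0∞ := fun x => ENNReal.ofReal (Real.exp ((α - 1) * g x)) * q x with hF_def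
  set G : Ω → ℝ≥0∞ := fun x => ENNReal.ofReal (Real.exp (α * g x)) * p x with hG_def
  have hmF : Measurable F := (ENNReal.measurable_ofReal.comp
    (Real.measurable_exp.comp (hg.const_mul _))).mul hq
  have hmG : Measurable G := (ENNReal.measurable_ofReal.comp
    (Real.measurable_exp.comp (hg.const_mul _))).mul hp
  -- lintegrals of F and G
  have hFint : ∫⁻ x, F x ∂ν = ENNReal.ofReal A := by
    have h1 : ∫⁻ x, ENNReal.ofReal (Real.exp ((α - 1) * g x)) ∂Q = ENNReal.ofReal A :=
      (MeasureTheory.ofReal_integral_eq_lintegral_ofReal hintQ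
        (ae_of_all _ fun x => (Real.exp_pos _).le)).symm
    rw [hQ, lintegral_withDensity_eq_lintegral_mul ν hq
      (show Measurable fun x => ENNReal.ofReal (Real.exp ((α - 1) * g x)) from
        ENNReal.measurable_ofReal.comp (Real.measurable_exp.comp (hg.const_mul _)))] at h1
    rw [← h1]
    exact lintegral_congr fun x => mul_comm _ _
  have hGint : ∫⁻ x, G x ∂ν = ENNReal.ofReal B := by
    have h1 : ∫⁻ x, ENNReal.ofReal (Real.exp (α * g x)) ∂P = ENNReal.ofReal B :=
      (MeasureTheory.ofReal_integral_eq_lintegral_ofReal hintP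
        (ae_of_all _ fun x => (Real.exp_pos _).le)).symm
    rw [hP, lintegral_withDensity_eq_lintegral_mul ν hp
      (show Measurable fun x => ENNReal.ofReal (Real.exp (α * g x)) from
        ENNReal.measurable_ofReal.comp (Real.measurable_exp.comp (hg.const_mul _)))] at h1
    rw [← h1]
    exact lintegral_congr fun x => mul_comm _ _
  -- pointwise identity
  have hpt : ∀ x, q x ^ α * p x ^ (1 - α) = F x ^ α * G x ^ (1 - α) := by
    intro x
    rw [hF_def, hG_def]
    simp only
    rw [ENNReal.mul_rpow_of_nonneg _ _ hα0.le, ENNReal.mul_rpow_of_nonneg _ _ hα1'.le,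
      ENNReal.ofReal_rpow_of_pos (Real.exp_pos _), ENNReal.ofReal_rpow_of_pos (Real.exp_pos _),
      ← Real.exp_mul, ← Real.exp_mul, mul_mul_mul_comm, ← ENNReal.ofReal_mul (Real.exp_pos _).le,
      ← Real.exp_add]
    have : (α - 1) * g x * α + α * g x * (1 - α) = 0 := by ring
    rw [this, Real.exp_zero, ENNReal.ofReal_one, one_mul]
  -- Hölder
  have hconj : (1/α).HolderConjugate (1/(1-α)) := by
    constructor
    · rw [one_div, one_div, inv_inv, inv_inv, inv_one]; ring
    · exact one_div_pos.2 hα0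
    · exact one_div_pos.2 hα1'
  have hHolder : ∫⁻ x, q x ^ α * p x ^ (1 - α) ∂ν
      ≤ ENNReal.ofReal A ^ α * ENNReal.ofReal B ^ (1 - α) := by
    have h := ENNReal.lintegral_mul_le_Lp_mul_Lq ν hconj
      (f := fun x => F x ^ α) (g := fun x => G x ^ (1 - α))
      ((hmF.pow_const α).aemeasurable) ((hmG.pow_const (1-α)).aemeasurable)
    simp only [Pi.mul_apply] at h
    have hFe : ∀ x, (F x ^ α) ^ α⁻¹ = F x := fun x => by
      rw [← ENNReal.rpow_mul, mul_inv_cancel₀ hαne, ENNReal.rpow_one]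
    have hGe : ∀ x, (G x ^ (1-α)) ^ (1-α)⁻¹ = G x := fun x => by
      rw [← ENNReal.rpow_mul, mul_inv_cancel₀ hα1'.ne', ENNReal.rpow_one]
    simp only [one_div, inv_inv, hFe, hGe] at h
    calc ∫⁻ x, q x ^ α * p x ^ (1 - α) ∂ν = ∫⁻ x, F x ^ α * G x ^ (1-α) ∂ν :=
          lintegral_congr fun x => hpt x
      _ ≤ (∫⁻ x, F x ∂ν) ^ α * (∫⁻ x, G x ∂ν) ^ (1-α) := h
      _ = ENNReal.ofReal A ^ α * ENNReal.ofReal B ^ (1 - α) := by rw [hFint, hGint]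
  set I := ∫⁻ x in {x | p x ≠ 0}, (q x) ^ α * (p x) ^ (1 - α) ∂ν with hI_def
  have hIle : I ≤ ENNReal.ofReal (A ^ α * B ^ (1 - α)) := by
    refine le_trans (setLIntegral_le_lintegral _ _) (le_trans hHolder (le_of_eq ?_))
    rw [ENNReal.ofReal_mul (Real.rpow_nonneg hApos.le α),
      ← ENNReal.ofReal_rpow_of_pos hApos, ← ENNReal.ofReal_rpow_of_pos hBpos]
  by_cases hI0 : I = 0
  · rw [hI0, ENNReal.log_zero, EReal.coe_mul_bot_of_neg hc_neg]
    exact le_top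
  · have hItop : I ≠ ⊤ := (lt_of_le_of_lt hIle ENNReal.ofReal_lt_top).ne
    rw [ENNReal.log_pos_real hI0 hItop, ← EReal.coe_mul, EReal.coe_le_coe_iff]
    set L := Real.log I.toReal with hL_def
    have hItR : I.toReal ≤ A ^ α * B ^ (1 - α) := by
      have := ENNReal.toReal_mono ENNReal.ofReal_ne_top hIle
      rwa [ENNReal.toReal_ofReal (by positivity)] at this
    have hL : L ≤ α * Real.log A + (1 - α) * Real.log B := by
      have hIpos : 0 < I.toReal := ENNReal.toReal_pos hI0 hItop
      calc L ≤ Real.log (A ^ α * B ^ (1 - α)) := Real.log_le_log hIpos hItR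
        _ = α * Real.log A + (1 - α) * Real.log B := by
            rw [Real.log_mul (by positivity) (by positivity), Real.log_rpow hApos,
              Real.log_rpow hBpos]
    calc (α - 1)⁻¹ * Real.log A - α⁻¹ * Real.log B
        = c * (α * Real.log A + (1 - α) * Real.log B) := by
          rw [hc_def]; field_simp; ring
      _ ≤ c * L := mul_le_mul_of_nonpos_left hL hc_neg.le
end

section
/- Let P = μ_{θ_p} and Q = μ_{θ_q} belong to an exponential family dμ_θ = h(x) e^{κ(θ)·T(x) - β(θ)} dμ with Q ≪ P, dQ/dP > 0, and (dQ/dP)^α ∈ L¹(P). Then R_α(Q‖P) = sup over Δκ ∈ ℝ^k of {(1/(α-1)) log ∫ e^{(α-1)Δκ·T} dQ - (1/α) log ∫ e^{αΔκ·T} dP}, and the supremum is attained at Δκ = κ(θ_q) - κ(θ_p). -/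
open MeasureTheory Real
open scoped ENNReal NNReal BigOperators

section RenyiAux

lemma core_pos {Ω : Type*} [MeasurableSpace Ω] (ν : Measure Ω) [IsProbabilityMeasure ν]
    {φ : Ω → ℝ≥0∞} (hφ : Measurable φ) {p q : ℝ} (hp : 0 < p) (hpq : p < q) :
    ((p⁻¹ : ℝ) : EReal) * ENNReal.log (∫⁻ x, φ x ^ p ∂ν)
      ≤ ((q⁻¹ : ℝ) : EReal) * ENNReal.log (∫⁻ x, φ x ^ q ∂ν) := by
  have hq : 0 < q := hp.trans hpq
  have hconj : (q/p).HolderConjugate (q/(q-p)) := by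
    rw [Real.holderConjugate_iff]; constructor
    · rw [lt_div_iff₀ hp]; linarith
    · rw [inv_div, inv_div]; field_simp; ring
  have hold := ENNReal.lintegral_mul_le_Lp_mul_Lq ν hconj
    (f := fun x => φ x ^ p) (g := fun _ => 1)
    (hφ.pow_const p).aemeasurable aemeasurable_const
  simp only [Pi.mul_apply, mul_one, ENNReal.one_rpow, lintegral_one, measure_univ,
    one_mul] at hold
  have h1 : ∀ x, (φ x ^ p) ^ (q/p) = φ x ^ q := by
    intro x
    rw [← ENNReal.rpow_mul]
    congr 1
    field_simp
  simp only [h1, ENNReal.one_rpow] at hold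
  -- hold : ∫⁻ φ^p ≤ (∫⁻ φ^q) ^ (1/(q/p)) * 1 ?
  have hlog := ENNReal.log_monotone hold
  rw [ENNReal.log_rpow] at hlog
  have h2 : ((p⁻¹ : ℝ) : EReal) * ENNReal.log (∫⁻ x, φ x ^ p ∂ν)
      ≤ ((p⁻¹ : ℝ) : EReal) * (((1/(q/p) : ℝ)) * ENNReal.log (∫⁻ x, φ x ^ q ∂ν)) :=
    mul_le_mul_of_nonneg_left hlog (by exact_mod_cast le_of_lt (by positivity : (0:ℝ) < p⁻¹))
  refine h2.trans_eq ?_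
  rw [← mul_assoc, ← EReal.coe_mul]
  congr 2
  field_simp

lemma core_neg {Ω : Type*} [MeasurableSpace Ω] (ν : Measure Ω) [IsProbabilityMeasure ν]
    {φ : Ω → ℝ≥0∞} (hφ : Measurable φ) {p q : ℝ} (hpq : p < q) (hq : q < 0) :
    ((p⁻¹ : ℝ) : EReal) * ENNReal.log (∫⁻ x, φ x ^ p ∂ν)
      ≤ ((q⁻¹ : ℝ) : EReal) * ENNReal.log (∫⁻ x, φ x ^ q ∂ν) := by
  have key := core_pos ν (φ := fun x => (φ x)⁻¹) hφ.inv (p := -q) (q := -p)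
    (by linarith) (by linarith)
  have h1 : ∀ (s : ℝ), ∀ x, (φ x)⁻¹ ^ (-s) = φ x ^ s := by
    intro s x
    rw [ENNReal.inv_rpow, ENNReal.rpow_neg, inv_inv]
  simp only [h1] at key
  have := EReal.neg_le_neg_iff.mpr key
  rw [← neg_mul, ← neg_mul, ← EReal.coe_neg, ← EReal.coe_neg, neg_inv, neg_inv, neg_neg,
    neg_neg] at this
  exact this

lemma core_mixed {Ω : Type*} [MeasurableSpace Ω] (ν : Measure Ω) [IsProbabilityMeasure ν]
    {φ : Ω → ℝ≥0∞} (hφ : Measurable φ) (hφ0 : ∀ᵐ x ∂ν, φ x ≠ 0) (hφt : ∀ᵐ x ∂ν, φ x ≠ ⊤)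
    {p q : ℝ} (hp : p < 0) (hq : 0 < q) :
    ((p⁻¹ : ℝ) : EReal) * ENNReal.log (∫⁻ x, φ x ^ p ∂ν)
      ≤ ((q⁻¹ : ℝ) : EReal) * ENNReal.log (∫⁻ x, φ x ^ q ∂ν) := by
  have hqp : 0 < q - p := by linarith
  set θ : ℝ := q / (q - p) with hθdef
  have hθ : 0 < θ := by positivity
  have hθ1 : θ < 1 := by
    rw [hθdef, div_lt_one hqp]; linarith
  have hipneg : (p⁻¹ : ℝ) < 0 := by simpa using inv_neg''.mpr hp
  have hθq : θ * (q-p) = q := by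
    rw [hθdef, div_mul_cancel₀ _ (ne_of_gt hqp)]
  have hconj : (θ⁻¹).HolderConjugate ((1-θ)⁻¹) := by
    rw [Real.holderConjugate_iff]; constructor
    · rw [lt_inv_comm₀ one_pos hθ]; simpa using hθ1
    · simp only [one_div, inv_inv]; ring
  have hold := ENNReal.lintegral_mul_le_Lp_mul_Lq ν hconj
    (f := fun x => φ x ^ (p * θ)) (g := fun x => φ x ^ (q * (1 - θ)))
    (hφ.pow_const _).aemeasurable (hφ.pow_const _).aemeasurable
  have hsum : p * θ + q * (1 - θ) = 0 := by
    field_simp [hθdef]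
    linear_combination (-1 : ℝ) * hθq
  have hae : ∀ᵐ x ∂ν, (fun x => φ x ^ (p * θ) * φ x ^ (q * (1 - θ))) x = 1 := by
    filter_upwards [hφ0, hφt] with x h0 ht
    rw [← ENNReal.rpow_add _ _ h0 ht, hsum, ENNReal.rpow_zero]
  rw [show (fun a => ((fun x => φ x ^ (p * θ)) * fun x => φ x ^ (q * (1 - θ))) a)
      = fun x => φ x ^ (p * θ) * φ x ^ (q * (1 - θ)) from rfl, lintegral_congr_ae hae,
    lintegral_one, measure_univ] at hold
  have h1 : ∀ x, (φ x ^ (p * θ)) ^ (θ⁻¹) = φ x ^ p := by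
    intro x; rw [← ENNReal.rpow_mul]; congr 1; field_simp
  have h2 : ∀ x, (φ x ^ (q * (1-θ))) ^ ((1-θ)⁻¹) = φ x ^ q := by
    intro x; rw [← ENNReal.rpow_mul]; congr 1
    have : (1:ℝ) - θ ≠ 0 := by linarith
    field_simp
  simp only [h1, h2, one_div, inv_inv] at hold
  have hlog := ENNReal.log_monotone hold
  rw [ENNReal.log_one, ENNReal.log_mul_add, ENNReal.log_rpow, ENNReal.log_rpow] at hlog
  set Lp := ENNReal.log (∫⁻ x, φ x ^ p ∂ν) with hLp
  set Lq := ENNReal.log (∫⁻ x, φ x ^ q ∂ν) with hLq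
  rcases eq_or_ne Lq ⊤ with htop | hqne
  · rw [htop, EReal.mul_top_of_pos (by exact_mod_cast (by positivity : (0:ℝ) < q⁻¹))]
    exact le_top
  rcases eq_or_ne Lp ⊤ with htop | hpne
  · rw [htop, EReal.mul_top_of_neg (by exact_mod_cast hipneg)]
    exact bot_le
  rcases eq_or_ne Lp ⊥ with hbot | hpne'
  · exfalso
    rw [hbot, EReal.mul_bot_of_pos (by exact_mod_cast hθ), EReal.bot_add] at hlog
    simp at hlog
  rcases eq_or_ne Lq ⊥ with hbot | hqne'
  · exfalso
    rw [hbot, EReal.mul_bot_of_pos (by exact_mod_cast (by linarith : (0:ℝ) < 1 - θ)),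
      EReal.add_bot] at hlog
    simp at hlog
  lift Lp to ℝ using ⟨hpne, hpne'⟩ with a
  lift Lq to ℝ using ⟨hqne, hqne'⟩ with b
  have hlogr : (0:ℝ) ≤ θ * a + (1-θ) * b := by exact_mod_cast hlog
  rw [← EReal.coe_mul, ← EReal.coe_mul, EReal.coe_le_coe_iff]
  have he : (θ*a + (1-θ)*b)*(q-p) = q*a - p*b := by linear_combination (a - b) * hθq
  have h3 : (0:ℝ) ≤ q*a - p*b := he ▸ mul_nonneg hlogr hqp.le
  have hc : (0:ℝ) < -(p⁻¹*q⁻¹) := by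
    have : (p⁻¹ * q⁻¹ : ℝ) < 0 := mul_neg_of_neg_of_pos hipneg (by positivity)
    linarith
  have hqq : q * q⁻¹ = 1 := mul_inv_cancel₀ (ne_of_gt hq)
  have hpp : p * p⁻¹ = 1 := mul_inv_cancel₀ (ne_of_lt hp)
  have h4 : (q*a - p*b) * (-(p⁻¹*q⁻¹)) = q⁻¹*b - p⁻¹*a := by
    linear_combination (b*q⁻¹) * hpp - (a*p⁻¹) * hqq
  linarith [h4 ▸ mul_nonneg h3 hc.le]


lemma ereal_arith {a b : EReal} {p q z : ℝ} (hp : p ≠ 0) (hq : q ≠ 0) (hpq : p < q)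
    (hqp : q - p = 1) (ha : a ≠ ⊥) (hb : b ≠ ⊥)
    (hcore : ((p⁻¹ : ℝ) : EReal) * (a + ((-z : ℝ) : EReal))
      ≤ ((q⁻¹ : ℝ) : EReal) * (b + ((-z : ℝ) : EReal))) :
    ((p⁻¹ : ℝ) : EReal) * a - ((q⁻¹ : ℝ) : EReal) * b ≤ (((q * p)⁻¹ * z : ℝ) : EReal) := by
  have hid : (q*p)⁻¹ = p⁻¹ - q⁻¹ := by
    field_simp
    linear_combination (-1 : ℝ) * hqp
  rcases eq_or_ne b ⊤ with hbt | hbt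
  · subst hbt
    rcases lt_trichotomy q 0 with hq0 | hq0 | hq0
    · -- q < 0 : derive a = ⊤ from hcore
      have hrhs : ((q⁻¹ : ℝ) : EReal) * ((⊤:EReal) + ((-z : ℝ) : EReal)) = ⊥ := by
        rw [EReal.top_add_coe, EReal.mul_top_of_neg (by exact_mod_cast inv_neg''.mpr hq0)]
      rw [hrhs, le_bot_iff] at hcore
      have hat : a = ⊤ := by
        by_contra hat
        obtain ⟨w, rfl⟩ : ∃ w : ℝ, a = (w:EReal) := ⟨a.toReal, (EReal.coe_toReal hat ha).symm⟩
        rw [← EReal.coe_add, ← EReal.coe_mul] at hcore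
        exact (EReal.coe_ne_bot _) hcore
      subst hat
      have hpneg : ((p⁻¹:ℝ):EReal) * ⊤ = ⊥ :=
        EReal.mul_top_of_neg (by exact_mod_cast inv_neg''.mpr (hpq.trans hq0))
      have hqneg : ((q⁻¹:ℝ):EReal) * ⊤ = ⊥ :=
        EReal.mul_top_of_neg (by exact_mod_cast inv_neg''.mpr hq0)
      rw [hpneg, hqneg]
      rw [sub_eq_add_neg, EReal.bot_add]
      exact bot_le
    · exact absurd hq0 hq
    · have : ((q⁻¹:ℝ):EReal) * ⊤ = ⊤ :=
        EReal.mul_top_of_pos (by exact_mod_cast inv_pos.mpr hq0)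
      rw [this, sub_eq_add_neg, EReal.neg_top, EReal.add_bot]
      exact bot_le
  · obtain ⟨bb, rfl⟩ : ∃ w : ℝ, b = (w:EReal) := ⟨b.toReal, (EReal.coe_toReal hbt hb).symm⟩
    rcases eq_or_ne a ⊤ with hat | hat
    · subst hat
      rcases lt_trichotomy p 0 with hp0 | hp0 | hp0
      · rw [EReal.mul_top_of_neg (by exact_mod_cast inv_neg''.mpr hp0), sub_eq_add_neg,
          EReal.bot_add]
        exact bot_le
      · exact absurd hp0 hp
      · exfalso
        rw [EReal.top_add_coe, EReal.mul_top_of_pos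
          (by exact_mod_cast inv_pos.mpr hp0)] at hcore
        rw [top_le_iff, ← EReal.coe_add, ← EReal.coe_mul] at hcore
        exact (EReal.coe_ne_top _) hcore
    · obtain ⟨aa, rfl⟩ : ∃ w : ℝ, a = (w:EReal) := ⟨a.toReal, (EReal.coe_toReal hat ha).symm⟩
      rw [← EReal.coe_add, ← EReal.coe_add, ← EReal.coe_mul, ← EReal.coe_mul,
        EReal.coe_le_coe_iff] at hcore
      rw [← EReal.coe_mul, ← EReal.coe_mul, ← EReal.coe_sub, EReal.coe_le_coe_iff, hid]
      nlinarith [hcore]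

lemma core_all {Ω : Type*} [MeasurableSpace Ω] (ν : Measure Ω) [IsProbabilityMeasure ν]
    {φ : Ω → ℝ≥0∞} (hφ : Measurable φ) (hφ0 : ∀ᵐ x ∂ν, φ x ≠ 0) (hφt : ∀ᵐ x ∂ν, φ x ≠ ⊤)
    {p q : ℝ} (hpq : p < q) (hp0 : p ≠ 0) (hq0 : q ≠ 0) :
    ((p⁻¹ : ℝ) : EReal) * ENNReal.log (∫⁻ x, φ x ^ p ∂ν)
      ≤ ((q⁻¹ : ℝ) : EReal) * ENNReal.log (∫⁻ x, φ x ^ q ∂ν) := by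
  rcases lt_trichotomy p 0 with hp | hp | hp
  · rcases lt_trichotomy q 0 with hq | hq | hq
    · exact core_neg ν hφ hpq hq
    · exact absurd hq hq0
    · exact core_mixed ν hφ hφ0 hφt hp hq
  · exact absurd hp hp0
  · exact core_pos ν hφ hp hpq

lemma lintegral_exp_pos {Ω : Type*} [MeasurableSpace Ω] (m : Measure Ω)
    [IsProbabilityMeasure m] (u : Ω → ℝ) (hu : Measurable u) :
    0 < ∫⁻ x, ENNReal.ofReal (Real.exp (u x)) ∂m := by
  rw [pos_iff_ne_zero]
  intro hcon
  rw [lintegral_eq_zero_iff (by fun_prop)] at hcon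
  have hne : (MeasureTheory.ae m).NeBot := ae_neBot.mpr (IsProbabilityMeasure.ne_zero m)
  obtain ⟨x, hx⟩ := hcon.exists
  simp only [Pi.zero_apply, ENNReal.ofReal_eq_zero] at hx
  exact absurd hx (not_le.mpr (Real.exp_pos (u x)))

lemma renyi_ineq_general {Ω : Type*} [MeasurableSpace Ω] (P Q : Measure Ω)
    [IsProbabilityMeasure P] [IsProbabilityMeasure Q]
    {α : ℝ} (hα0 : α ≠ 0) (hα1 : α ≠ 1) (hQP : Q ≪ P)
    (hpos : ∀ᵐ x ∂P, 0 < (Q.rnDeriv P x).toReal)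
    (hint : Integrable (fun x => (Q.rnDeriv P x).toReal ^ α) P)
    (G : Ω → ℝ) (hG : Measurable G) :
    (((α - 1)⁻¹ : ℝ) : EReal) * ENNReal.log (∫⁻ x, ENNReal.ofReal (Real.exp ((α - 1) * G x)) ∂Q)
      - ((α⁻¹ : ℝ) : EReal) * ENNReal.log (∫⁻ x, ENNReal.ofReal (Real.exp (α * G x)) ∂P)
      ≤ (((α * (α - 1))⁻¹ * Real.log (∫ x, (Q.rnDeriv P x).toReal ^ α ∂P) : ℝ) : EReal) := by
  have hα1' : α - 1 ≠ 0 := sub_ne_zero.mpr hα1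
  have hrnm : Measurable (Q.rnDeriv P) := Measure.measurable_rnDeriv Q P
  have hrm : Measurable (fun x => (Q.rnDeriv P x).toReal) := hrnm.ennreal_toReal
  have hfin : ∀ᵐ x ∂P, Q.rnDeriv P x ≠ ⊤ :=
    (Measure.rnDeriv_lt_top Q P).mono (fun x hx => hx.ne)
  have hnn : 0 ≤ᵐ[P] fun x => (Q.rnDeriv P x).toReal ^ α :=
    Filter.Eventually.of_forall (fun x => Real.rpow_nonneg ENNReal.toReal_nonneg α)
  set Z := ∫ x, (Q.rnDeriv P x).toReal ^ α ∂P with hZdef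
  have hZof : ENNReal.ofReal Z = ∫⁻ x, ENNReal.ofReal ((Q.rnDeriv P x).toReal ^ α) ∂P :=
    ofReal_integral_eq_lintegral_ofReal hint hnn
  have hZpos : 0 < Z := by
    rw [hZdef, integral_pos_iff_support_of_nonneg_ae hnn hint]
    by_contra hcon
    have hz : P (Function.support fun x => (Q.rnDeriv P x).toReal ^ α) = 0 :=
      le_zero_iff.mp (not_lt.mp hcon)
    have hae0 : ∀ᵐ x ∂P, (Q.rnDeriv P x).toReal ^ α = 0 := by
      rw [MeasureTheory.ae_iff]
      simpa [Function.support, Function.notMem_support] using hz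
    have hne : (MeasureTheory.ae P).NeBot := ae_neBot.mpr (IsProbabilityMeasure.ne_zero P)
    obtain ⟨x, hx1, hx2⟩ := (hae0.and hpos).exists
    exact absurd hx1 (ne_of_gt (Real.rpow_pos_of_pos hx2 α))
  have hZ0 : ENNReal.ofReal Z ≠ 0 := by simp [hZpos, not_le]
  have hinvZt : (ENNReal.ofReal Z)⁻¹ ≠ ⊤ := by simp [hZ0]
  -- the tilted probability measure
  set dens : Ω → ℝ≥0∞ :=
    fun x => ENNReal.ofReal ((Q.rnDeriv P x).toReal ^ α) * (ENNReal.ofReal Z)⁻¹ with hdens_def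
  have hdensm : Measurable dens := by
    apply Measurable.mul _ measurable_const
    exact ENNReal.measurable_ofReal.comp (by fun_prop)
  set ν := P.withDensity dens with hν_def
  haveI hνprob : IsProbabilityMeasure ν := by
    constructor
    rw [hν_def, withDensity_apply _ MeasurableSet.univ, Measure.restrict_univ, hdens_def]
    rw [lintegral_mul_const' _ _ hinvZt, ← hZof]
    exact ENNReal.mul_inv_cancel hZ0 ENNReal.ofReal_ne_top
  -- the function φ
  set φ : Ω → ℝ≥0∞ :=
    fun x => ENNReal.ofReal (Real.exp (G x - Real.log ((Q.rnDeriv P x).toReal))) with hφ_def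
  have hφm : Measurable φ :=
    ENNReal.measurable_ofReal.comp
      (Real.measurable_exp.comp (hG.sub (Real.measurable_log.comp hrm)))
  have hφ0 : ∀ᵐ x ∂ν, φ x ≠ 0 :=
    Filter.Eventually.of_forall fun x => by
      simp [hφ_def, ENNReal.ofReal_eq_zero, not_le, Real.exp_pos]
  have hφt : ∀ᵐ x ∂ν, φ x ≠ ⊤ :=
    Filter.Eventually.of_forall fun x => ENNReal.ofReal_ne_top
  -- key integral computation
  have hIs : ∀ s : ℝ, ∫⁻ x, φ x ^ s ∂ν
      = (∫⁻ x, ENNReal.ofReal (Real.exp (s * G x) * (Q.rnDeriv P x).toReal ^ (α - s)) ∂P)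
        * (ENNReal.ofReal Z)⁻¹ := by
    intro s
    rw [hν_def, lintegral_withDensity_eq_lintegral_mul P hdensm (hφm.pow_const s),
      ← lintegral_mul_const' _ _ hinvZt]
    refine lintegral_congr_ae ?_
    filter_upwards [hpos] with x hx
    simp only [Pi.mul_apply, hdens_def, hφ_def]
    rw [mul_right_comm]
    congr 1
    rw [ENNReal.ofReal_rpow_of_pos (Real.exp_pos _), Real.rpow_def_of_pos (Real.exp_pos _),
      Real.log_exp, ← ENNReal.ofReal_mul (Real.rpow_nonneg ENNReal.toReal_nonneg α)]
    congr 1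
    rw [Real.rpow_def_of_pos hx, Real.rpow_def_of_pos hx, ← Real.exp_add, ← Real.exp_add]
    congr 1
    ring
  have hIq : ∫⁻ x, φ x ^ α ∂ν
      = (∫⁻ x, ENNReal.ofReal (Real.exp (α * G x)) ∂P) * (ENNReal.ofReal Z)⁻¹ := by
    rw [hIs α]
    congr 1
    refine lintegral_congr fun x => ?_
    rw [sub_self, Real.rpow_zero, mul_one]
  have hIp : ∫⁻ x, φ x ^ (α - 1) ∂ν
      = (∫⁻ x, ENNReal.ofReal (Real.exp ((α - 1) * G x)) ∂Q) * (ENNReal.ofReal Z)⁻¹ := by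
    rw [hIs (α - 1)]
    congr 1
    -- rewrite the Q-integral as a P-integral
    conv_rhs => rw [← Measure.withDensity_rnDeriv_eq Q P hQP]
    rw [lintegral_withDensity_eq_lintegral_mul P hrnm (by fun_prop :
      Measurable fun x => ENNReal.ofReal (Real.exp ((α - 1) * G x)))]
    refine lintegral_congr_ae ?_
    filter_upwards [hfin] with x hx
    simp only [Pi.mul_apply]
    rw [← ENNReal.ofReal_toReal hx, ← ENNReal.ofReal_mul ENNReal.toReal_nonneg]
    have : α - (α - 1) = 1 := by ring
    rw [this, Real.rpow_one, mul_comm, ENNReal.toReal_ofReal ENNReal.toReal_nonneg]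
  have hcore := core_all ν hφm hφ0 hφt (show α - 1 < α by linarith) hα1' hα0
  rw [hIp, hIq] at hcore
  -- positivity of the two integrals
  have hApos : (0:ℝ≥0∞) < ∫⁻ x, ENNReal.ofReal (Real.exp ((α - 1) * G x)) ∂Q :=
    lintegral_exp_pos Q _ (by fun_prop)
  have hBpos : (0:ℝ≥0∞) < ∫⁻ x, ENNReal.ofReal (Real.exp (α * G x)) ∂P :=
    lintegral_exp_pos P _ (by fun_prop)
  have hlogw : ENNReal.log ((ENNReal.ofReal Z)⁻¹) = ((-Real.log Z : ℝ) : EReal) := by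
    rw [ENNReal.log_inv, ENNReal.log_ofReal_of_pos hZpos, EReal.coe_neg]
  rw [ENNReal.log_mul_add, ENNReal.log_mul_add, hlogw] at hcore
  exact ereal_arith hα1' hα0 (by linarith) (by ring)
    (by simp [ne_of_gt hApos]) (by simp [ne_of_gt hBpos]) hcore


lemma lintegral_Q_eq_P {Ω : Type*} [MeasurableSpace Ω] (P Q : Measure Ω)
    [IsProbabilityMeasure P] [IsProbabilityMeasure Q] (hQP : Q ≪ P) (u : Ω → ℝ) (hu : Measurable u) :
    ∫⁻ x, ENNReal.ofReal (Real.exp (u x)) ∂Q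
      = ∫⁻ x, ENNReal.ofReal (Real.exp (u x) * (Q.rnDeriv P x).toReal) ∂P := by
  conv_lhs => rw [← Measure.withDensity_rnDeriv_eq Q P hQP]
  rw [lintegral_withDensity_eq_lintegral_mul P (Measure.measurable_rnDeriv Q P)
    (by fun_prop : Measurable fun x => ENNReal.ofReal (Real.exp (u x)))]
  refine lintegral_congr_ae ?_
  filter_upwards [(Measure.rnDeriv_lt_top Q P).mono (fun x hx => hx.ne)] with x hx
  simp only [Pi.mul_apply]
  conv_lhs => rw [← ENNReal.ofReal_toReal hx]
  rw [← ENNReal.ofReal_mul ENNReal.toReal_nonneg, mul_comm]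

lemma renyi_eq_general {Ω : Type*} [MeasurableSpace Ω] (P Q : Measure Ω)
    [IsProbabilityMeasure P] [IsProbabilityMeasure Q]
    {α : ℝ} (hα0 : α ≠ 0) (hα1 : α ≠ 1) (hQP : Q ≪ P)
    (hint : Integrable (fun x => (Q.rnDeriv P x).toReal ^ α) P)
    (G : Ω → ℝ) (hG : Measurable G) (c : ℝ)
    (hr : ∀ᵐ x ∂P, (Q.rnDeriv P x).toReal = Real.exp (G x - c)) :
    (((α - 1)⁻¹ : ℝ) : EReal) * ENNReal.log (∫⁻ x, ENNReal.ofReal (Real.exp ((α - 1) * G x)) ∂Q)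
      - ((α⁻¹ : ℝ) : EReal) * ENNReal.log (∫⁻ x, ENNReal.ofReal (Real.exp (α * G x)) ∂P)
      = (((α * (α - 1))⁻¹ * Real.log (∫ x, (Q.rnDeriv P x).toReal ^ α ∂P) : ℝ) : EReal) := by
  have hα1' : α - 1 ≠ 0 := sub_ne_zero.mpr hα1
  have hnn : 0 ≤ᵐ[P] fun x => (Q.rnDeriv P x).toReal ^ α :=
    Filter.Eventually.of_forall (fun x => Real.rpow_nonneg ENNReal.toReal_nonneg α)
  set Z := ∫ x, (Q.rnDeriv P x).toReal ^ α ∂P with hZdef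
  have hZof : ENNReal.ofReal Z = ∫⁻ x, ENNReal.ofReal ((Q.rnDeriv P x).toReal ^ α) ∂P :=
    ofReal_integral_eq_lintegral_ofReal hint hnn
  have hZpos : 0 < Z := by
    rw [hZdef, integral_pos_iff_support_of_nonneg_ae hnn hint]
    by_contra hcon
    have hz : P (Function.support fun x => (Q.rnDeriv P x).toReal ^ α) = 0 :=
      le_zero_iff.mp (not_lt.mp hcon)
    have hae0 : ∀ᵐ x ∂P, (Q.rnDeriv P x).toReal ^ α = 0 := by
      rw [MeasureTheory.ae_iff]
      simpa [Function.support, Function.notMem_support] using hz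
    have hne : (MeasureTheory.ae P).NeBot := ae_neBot.mpr (IsProbabilityMeasure.ne_zero P)
    obtain ⟨x, hx1, hx2⟩ := (hae0.and hr).exists
    rw [hx2] at hx1
    exact absurd hx1 (ne_of_gt (Real.rpow_pos_of_pos (Real.exp_pos _) α))
  have hB : ∫⁻ x, ENNReal.ofReal (Real.exp (α * G x)) ∂P
      = ENNReal.ofReal (Real.exp (α * c)) * ENNReal.ofReal Z := by
    rw [hZof, ← lintegral_const_mul (ENNReal.ofReal (Real.exp (α * c)))
      (f := fun x => ENNReal.ofReal ((Q.rnDeriv P x).toReal ^ α))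
      (ENNReal.measurable_ofReal.comp (by fun_prop :
        Measurable fun x => (Q.rnDeriv P x).toReal ^ α))]
    refine lintegral_congr_ae ?_
    filter_upwards [hr] with x hx
    rw [← ENNReal.ofReal_mul (Real.exp_pos _).le]
    congr 1
    rw [hx, Real.rpow_def_of_pos (Real.exp_pos _), Real.log_exp, ← Real.exp_add]
    congr 1
    ring
  have hA : ∫⁻ x, ENNReal.ofReal (Real.exp ((α - 1) * G x)) ∂Q
      = ENNReal.ofReal (Real.exp ((α - 1) * c)) * ENNReal.ofReal Z := by
    rw [lintegral_Q_eq_P P Q hQP _ (by fun_prop), hZof,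
      ← lintegral_const_mul (ENNReal.ofReal (Real.exp ((α - 1) * c)))
      (f := fun x => ENNReal.ofReal ((Q.rnDeriv P x).toReal ^ α))
      (ENNReal.measurable_ofReal.comp (by fun_prop :
        Measurable fun x => (Q.rnDeriv P x).toReal ^ α))]
    refine lintegral_congr_ae ?_
    filter_upwards [hr] with x hx
    rw [← ENNReal.ofReal_mul (Real.exp_pos _).le]
    congr 1
    rw [hx, Real.rpow_def_of_pos (Real.exp_pos _), Real.log_exp, ← Real.exp_add,
      ← Real.exp_add]
    congr 1
    ring
  rw [hA, hB, ENNReal.log_mul_add, ENNReal.log_mul_add,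
    ENNReal.log_ofReal_of_pos (Real.exp_pos _), ENNReal.log_ofReal_of_pos (Real.exp_pos _),
    ENNReal.log_ofReal_of_pos hZpos, Real.log_exp, Real.log_exp]
  rw [← EReal.coe_add, ← EReal.coe_add, ← EReal.coe_mul, ← EReal.coe_mul, ← EReal.coe_sub]
  norm_cast
  field_simp
  ring


end RenyiAux

/-- For members `P = μ_{θ_p}`, `Q = μ_{θ_q}` of an exponential family
`dμ_θ = h e^{κ(θ)·T - β(θ)} dμ` with `Q ≪ P`, `dQ/dP > 0` and `(dQ/dP)^α ∈ L¹(P)`,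
the Rényi divergence equals the supremum over `Δκ ∈ ℝ^k` of the Rényi–Donsker–Varadhan
objective evaluated at `g = Δκ·T`, attained at `Δκ = κ(θ_q) - κ(θ_p)`. -/
theorem renyi_exponential_family_variational {Ω Θ : Type*} [MeasurableSpace Ω] {k : ℕ}
    (μ : Measure Ω) [SigmaFinite μ]
    (T : Ω → Fin k → ℝ) (hT : Measurable T) (h : Ω → ℝ) (hh : Measurable h) (hh0 : 0 ≤ h)
    (κ : Θ → Fin k → ℝ) (β : Θ → ℝ) (θp θq : Θ)
    (P Q : Measure Ω)
    (hP : P = μ.withDensity (fun x => ENNReal.ofReal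
        (h x * Real.exp ((∑ i, κ θp i * T x i) - β θp))))
    (hQ : Q = μ.withDensity (fun x => ENNReal.ofReal
        (h x * Real.exp ((∑ i, κ θq i * T x i) - β θq))))
    [IsProbabilityMeasure P] [IsProbabilityMeasure Q]
    {α : ℝ} (hα0 : α ≠ 0) (hα1 : α ≠ 1) (hQP : Q ≪ P)
    (hpos : ∀ᵐ x ∂P, 0 < (Q.rnDeriv P x).toReal)
    (hint : Integrable (fun x => (Q.rnDeriv P x).toReal ^ α) P) :
    (∀ Δκ : Fin k → ℝ,
        (((α - 1)⁻¹ : ℝ) : EReal) * ENNReal.log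
            (∫⁻ x, ENNReal.ofReal (Real.exp ((α - 1) * ∑ i, Δκ i * T x i)) ∂Q)
          - ((α⁻¹ : ℝ) : EReal) * ENNReal.log
              (∫⁻ x, ENNReal.ofReal (Real.exp (α * ∑ i, Δκ i * T x i)) ∂P)
        ≤ (((α * (α - 1))⁻¹ * Real.log (∫ x, (Q.rnDeriv P x).toReal ^ α ∂P) : ℝ) : EReal))
    ∧ (((α - 1)⁻¹ : ℝ) : EReal) * ENNReal.log
          (∫⁻ x, ENNReal.ofReal (Real.exp ((α - 1) * ∑ i, (κ θq i - κ θp i) * T x i)) ∂Q)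
        - ((α⁻¹ : ℝ) : EReal) * ENNReal.log
            (∫⁻ x, ENNReal.ofReal (Real.exp (α * ∑ i, (κ θq i - κ θp i) * T x i)) ∂P)
      = (((α * (α - 1))⁻¹ * Real.log (∫ x, (Q.rnDeriv P x).toReal ^ α ∂P) : ℝ) : EReal) := by
  have hsum : ∀ w : Fin k → ℝ, Measurable fun x => ∑ i, w i * T x i := fun w =>
    Finset.measurable_sum _ (fun i _ => measurable_const.mul ((measurable_pi_apply i).comp hT))
  constructor
  · intro Δκ
    exact renyi_ineq_general P Q hα0 hα1 hQP hpos hint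
      (fun x => ∑ i, Δκ i * T x i) (hsum Δκ)
  · -- identify the Radon–Nikodym derivative
    set fp : Ω → ℝ≥0∞ := fun x => ENNReal.ofReal
      (h x * Real.exp ((∑ i, κ θp i * T x i) - β θp)) with hfp_def
    set fq : Ω → ℝ≥0∞ := fun x => ENNReal.ofReal
      (h x * Real.exp ((∑ i, κ θq i * T x i) - β θq)) with hfq_def
    have hfpm : Measurable fp := ENNReal.measurable_ofReal.comp
      (hh.mul (Real.measurable_exp.comp ((hsum (κ θp)).sub measurable_const)))
    have hfqm : Measurable fq := ENNReal.measurable_ofReal.comp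
      (hh.mul (Real.measurable_exp.comp ((hsum (κ θq)).sub measurable_const)))
    have hrnm : Measurable (Q.rnDeriv P) := Measure.measurable_rnDeriv Q P
    have hfin : ∀ᵐ x ∂P, Q.rnDeriv P x ≠ ⊤ :=
      (Measure.rnDeriv_lt_top Q P).mono (fun x hx => hx.ne)
    have hcomp : Q = μ.withDensity (fp * Q.rnDeriv P) := by
      rw [withDensity_mul μ hfpm hrnm, ← hP, Measure.withDensity_rnDeriv_eq Q P hQP]
    have hae_mu : fq =ᵐ[μ] fp * Q.rnDeriv P := by
      have h1 := Measure.rnDeriv_withDensity μ hfqm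
      have h2 := Measure.rnDeriv_withDensity μ
        (show Measurable (fp * Q.rnDeriv P) from hfpm.mul hrnm)
      rw [← hQ] at h1
      rw [← hcomp] at h2
      exact h1.symm.trans h2
    have hPmu : P ≪ μ := by
      rw [hP]; exact withDensity_absolutelyContinuous μ _
    have hae_P : ∀ᵐ x ∂P, fq x = fp x * Q.rnDeriv P x :=
      hae_mu.filter_mono hPmu.ae_le
    have hfp_pos : ∀ᵐ x ∂P, 0 < fp x := by
      rw [MeasureTheory.ae_iff]
      have hset : {x | ¬ 0 < fp x} = {x | fp x = 0} := by
        ext x; simp [pos_iff_ne_zero]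
      rw [hset, hP]
      have hms : MeasurableSet {x | fp x = 0} := hfpm (measurableSet_singleton 0)
      rw [withDensity_apply _ hms]
      rw [setLIntegral_congr_fun hms
        (fun x hx => hx), lintegral_zero]
    have hr : ∀ᵐ x ∂P, (Q.rnDeriv P x).toReal
        = Real.exp ((∑ i, (κ θq i - κ θp i) * T x i) - (β θq - β θp)) := by
      filter_upwards [hae_P, hfp_pos, hfin] with x h1 h2 h3
      have hhx : 0 < h x * Real.exp ((∑ i, κ θp i * T x i) - β θp) :=
        ENNReal.ofReal_pos.mp h2
      have hx0 : 0 < h x := by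
        have := Real.exp_pos ((∑ i, κ θp i * T x i) - β θp)
        nlinarith
      have hrn_eq : Q.rnDeriv P x = fq x / fp x :=
        (ENNReal.eq_div_iff (ne_of_gt h2) ENNReal.ofReal_ne_top).mpr h1.symm
      rw [hrn_eq, ENNReal.toReal_div, hfp_def, hfq_def,
        ENNReal.toReal_ofReal (mul_nonneg hx0.le (Real.exp_pos _).le),
        ENNReal.toReal_ofReal (mul_nonneg hx0.le (Real.exp_pos _).le),
        mul_div_mul_left _ _ (ne_of_gt hx0), ← Real.exp_sub]
      congr 1
      simp only [sub_mul, Finset.sum_sub_distrib]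
      ring
    exact renyi_eq_general P Q hα0 hα1 hQP hint
      (fun x => ∑ i, (κ θq i - κ θp i) * T x i) (hsum _) (β θq - β θp) hr
end

section
/- Let Θ be a compact metric space, φ : Ω × Θ → ℝ continuous in θ, with sup_{θ∈Θ} |φ(·,θ)| ≤ ψ where e^{|α-1|ψ} ∈ L¹(Q) and e^{|α|ψ} ∈ L¹(P). Given iid Q-samples X_i and iid P-samples Y_i with empirical measures Q_n, P_n, the estimator R̂ = sup_{θ} {(1/(α-1)) log ∫ e^{(α-1)φ_θ} dQ_n - (1/α) log ∫ e^{αφ_θ} dP_n} converges in probability as n → ∞ to sup_{θ} {(1/(α-1)) log ∫ e^{(α-1)φ_θ} dQ - (1/α) log ∫ e^{αφ_θ} dP}. -/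
open MeasureTheory Filter Real Set TopologicalSpace
open scoped ENNReal Topology BigOperators

lemma aux_ciSup_dense {Θ : Type*} [MetricSpace Θ] [CompactSpace Θ] [Nonempty Θ]
    {t : ℕ → Θ} (ht : DenseRange t) {h : Θ → ℝ} (hc : Continuous h) :
    ⨆ θ, h θ = ⨆ k, h (t k) := by
  have hbdd : BddAbove (Set.range h) := (isCompact_range hc).bddAbove
  have hsub : Set.range (fun k => h (t k)) ⊆ Set.range h := by
    rintro x ⟨k, rfl⟩; exact ⟨t k, rfl⟩
  have hbdd2 : BddAbove (Set.range fun k => h (t k)) := hbdd.mono hsub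
  refine le_antisymm (ciSup_le fun θ => ?_) (ciSup_le fun k => le_ciSup hbdd (t k))
  have hclosed : IsClosed {θ : Θ | h θ ≤ ⨆ k, h (t k)} := isClosed_le hc continuous_const
  have hrange : Set.range t ⊆ {θ : Θ | h θ ≤ ⨆ k, h (t k)} := by
    rintro x ⟨k, rfl⟩; exact le_ciSup hbdd2 k
  have := hclosed.closure_subset_iff.2 hrange
  rw [ht.closure_range] at this
  exact this (Set.mem_univ θ)

lemma aux_abs_ciSup_sub {Θ : Type*} [Nonempty Θ] {A B : Θ → ℝ} (hA : BddAbove (Set.range A))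
    (hB : BddAbove (Set.range B)) {d : ℝ} (h : ∀ θ, |A θ - B θ| ≤ d) :
    |(⨆ θ, A θ) - ⨆ θ, B θ| ≤ d := by
  rw [abs_sub_le_iff]
  constructor
  · rw [sub_le_iff_le_add]
    exact ciSup_le fun θ => by
      have h1 := (abs_le.1 (h θ)).2
      have h2 := le_ciSup hB θ
      linarith
  · rw [sub_le_iff_le_add]
    exact ciSup_le fun θ => by
      have h1 := (abs_le.1 (h θ)).1
      have h2 := le_ciSup hA θ
      linarith

lemma aux_abs_log_sub_log {m x y : ℝ} (hm : 0 < m) (hx : m ≤ x) (hy : m ≤ y) :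
    |Real.log x - Real.log y| ≤ |x - y| / m := by
  have hx0 : 0 < x := lt_of_lt_of_le hm hx
  have hy0 : 0 < y := lt_of_lt_of_le hm hy
  have key : ∀ u v : ℝ, m ≤ u → m ≤ v → Real.log u - Real.log v ≤ |u - v| / m := by
    intro u v hu hv
    have hu0 : 0 < u := lt_of_lt_of_le hm hu
    have hv0 : 0 < v := lt_of_lt_of_le hm hv
    have h1 : Real.log u - Real.log v = Real.log (u / v) := (Real.log_div hu0.ne' hv0.ne').symm
    have h2 : Real.log (u / v) ≤ u / v - 1 := Real.log_le_sub_one_of_pos (div_pos hu0 hv0)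
    have h3 : u / v - 1 = (u - v) / v := by field_simp
    have h4 : (u - v) / v ≤ |u - v| / m :=
      div_le_div₀ (abs_nonneg _) (le_abs_self _) hm hv
    linarith
  rw [abs_sub_le_iff]
  refine ⟨key x y hx hy, ?_⟩
  have := key y x hy hx
  rwa [abs_sub_comm] at this

lemma aux_measurable_of_dist {β γ : Type*} [MeasurableSpace β] [MetricSpace γ]
    [SeparableSpace γ] [MeasurableSpace γ] [BorelSpace γ] {f : β → γ}
    (h : ∀ g : γ, Measurable fun x => dist (f x) g) : Measurable f := by
  rcases isEmpty_or_nonempty γ with hγ | hγ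
  · haveI : IsEmpty β := ⟨fun x => IsEmpty.false (f x)⟩
    exact measurable_of_empty f
  obtain ⟨z, hz⟩ := exists_dense_seq γ
  apply measurable_of_isOpen
  intro s hs
  have hset : f ⁻¹' s = ⋃ (k : ℕ) (q : ℚ) (_ : 0 < (q : ℝ) ∧ Metric.ball (z k) q ⊆ s),
      f ⁻¹' (Metric.ball (z k) (q : ℝ)) := by
    ext x
    simp only [Set.mem_preimage, Set.mem_iUnion, Metric.mem_ball]
    constructor
    · intro hx
      obtain ⟨r, hr, hball⟩ := Metric.isOpen_iff.1 hs _ hx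
      obtain ⟨k, hk⟩ := Metric.denseRange_iff.1 hz (f x) (r / 2) (by linarith)
      obtain ⟨q, hq1, hq2⟩ := exists_rat_btwn hk
      refine ⟨k, q, ⟨lt_of_le_of_lt dist_nonneg hq1, ?_⟩, hq1⟩
      intro w hw
      apply hball
      rw [Metric.mem_ball] at hw ⊢
      have : dist w (f x) ≤ dist w (z k) + dist (f x) (z k) := dist_triangle_right _ _ _
      linarith
    · rintro ⟨k, q, ⟨_, hball⟩, hx⟩
      exact hball (Metric.mem_ball.2 hx)
  rw [hset]
  refine MeasurableSet.iUnion fun k => MeasurableSet.iUnion fun q => MeasurableSet.iUnion fun _ => ?_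
  exact h (z k) measurableSet_Iio

lemma aux_dist_eq_iSup_dense {Θ : Type*} [MetricSpace Θ] [CompactSpace Θ] [Nonempty Θ]
    {t : ℕ → Θ} (ht : DenseRange t) (f g : C(Θ, ℝ)) :
    dist f g = ⨆ k, dist (f (t k)) (g (t k)) := by
  have hc : Continuous fun θ => dist (f θ) (g θ) := f.continuous.dist g.continuous
  have h1 : dist f g = ⨆ θ, dist (f θ) (g θ) := by
    have hbdd : BddAbove (Set.range fun θ => dist (f θ) (g θ)) := (isCompact_range hc).bddAbove
    refine le_antisymm ?_ (ciSup_le fun θ => ContinuousMap.dist_apply_le_dist θ)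
    have h0 : 0 ≤ ⨆ θ, dist (f θ) (g θ) :=
      le_trans dist_nonneg (le_ciSup hbdd (Classical.arbitrary Θ))
    exact (ContinuousMap.dist_le h0).2 fun θ => le_ciSup hbdd θ
  rw [h1]
  exact aux_ciSup_dense ht hc

lemma aux_measurable_continuousMap {Ω Θ : Type*} [MeasurableSpace Ω] [MetricSpace Θ]
    [CompactSpace Θ] [Nonempty Θ] [MeasurableSpace C(Θ, ℝ)] [BorelSpace C(Θ, ℝ)]
    (u : Ω → C(Θ, ℝ)) (hm : ∀ θ, Measurable fun x => u x θ) : Measurable u := by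
  obtain ⟨t, ht⟩ := exists_dense_seq Θ
  apply aux_measurable_of_dist
  intro g
  have heq : (fun x => dist (u x) g) = fun x => ⨆ k, dist (u x (t k)) (g (t k)) := by
    funext x
    exact aux_dist_eq_iSup_dense ht (u x) g
  rw [heq]
  exact Measurable.iSup fun k => (hm (t k)).dist measurable_const

lemma aux_half {Ω N Θ : Type*} [MeasurableSpace Ω] [MetricSpace Θ] [CompactSpace Θ] [Nonempty Θ]
    [MeasurableSpace N] (ℙ : Measure N) [IsProbabilityMeasure ℙ]
    (Q : Measure Ω) [IsProbabilityMeasure Q] (c : ℝ)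
    (φ : Ω → Θ → ℝ) (hφmeas : ∀ θ, Measurable fun x => φ x θ)
    (hφcont : ∀ x, Continuous fun θ => φ x θ)
    (ψ : Ω → ℝ) (hψ : Measurable ψ) (hψbound : ∀ x θ, |φ x θ| ≤ ψ x)
    (hψQ : Integrable (fun x => Real.exp (|c| * ψ x)) Q)
    (X : ℕ → N → Ω) (hX : ∀ i, Measurable (X i))
    (hXiid : ProbabilityTheory.iIndepFun X ℙ)
    (hXlaw : ∀ i, Measure.map (X i) ℙ = Q) :
    ∃ (F : C(Θ, ℝ)) (m : ℝ), 0 < m ∧ (∀ θ : Θ, m ≤ F θ) ∧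
      (∀ θ : Θ, F θ = ∫ x, Real.exp (c * φ x θ) ∂Q) ∧
      ∀ᵐ ω ∂ℙ, ∀ δ : ℝ, 0 < δ → ∀ᶠ n : ℕ in atTop, ∀ θ : Θ,
        |(n : ℝ)⁻¹ * ∑ i ∈ Finset.range n, Real.exp (c * φ (X i ω) θ) - F θ| ≤ δ := by
  borelize C(Θ, ℝ)
  have hψ0 : ∀ x, 0 ≤ ψ x := fun x => le_trans (abs_nonneg _) (hψbound x (Classical.arbitrary Θ))
  have hcont1 : ∀ x : Ω, Continuous fun θ => Real.exp (c * φ x θ) :=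
    fun x => Real.continuous_exp.comp (continuous_const.mul (hφcont x))
  set Φ : Ω → C(Θ, ℝ) := fun x => ⟨fun θ => Real.exp (c * φ x θ), hcont1 x⟩ with hΦdef
  have hΦ : Measurable Φ := by
    apply aux_measurable_continuousMap
    intro θ
    exact ((hφmeas θ).const_mul c).exp
  have hptbound : ∀ (x : Ω) (θ : Θ), ‖Φ x θ‖ ≤ Real.exp (|c| * ψ x) := by
    intro x θ
    simp only [hΦdef, ContinuousMap.coe_mk, Real.norm_eq_abs, Real.abs_exp]
    apply Real.exp_le_exp.2
    calc c * φ x θ ≤ |c * φ x θ| := le_abs_self _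
      _ = |c| * |φ x θ| := abs_mul _ _
      _ ≤ |c| * ψ x := mul_le_mul_of_nonneg_left (hψbound x θ) (abs_nonneg _)
  have hnorm : ∀ x : Ω, ‖Φ x‖ ≤ Real.exp (|c| * ψ x) :=
    fun x => (ContinuousMap.norm_le _ (Real.exp_nonneg _)).2 (hptbound x)
  have hgQ : Integrable (fun ω => Real.exp (|c| * ψ (X 0 ω))) ℙ := by
    have h1 : Integrable (fun x => Real.exp (|c| * ψ x)) (Measure.map (X 0) ℙ) := by
      rwa [hXlaw 0]
    exact (integrable_map_measure ((hψ.const_mul |c|).exp.aestronglyMeasurable)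
      (hX 0).aemeasurable).1 h1
  have hint : Integrable (fun ω => Φ (X 0 ω)) ℙ :=
    Integrable.mono' hgQ ((hΦ.comp (hX 0)).aestronglyMeasurable)
      (Eventually.of_forall fun ω => hnorm _)
  have hindep : Pairwise (Function.onFun (ProbabilityTheory.IndepFun · · ℙ) fun i ω => Φ (X i ω)) :=
    fun i j hij => ((hXiid.indepFun hij).comp hΦ hΦ)
  have hident : ∀ i, ProbabilityTheory.IdentDistrib (fun ω => Φ (X i ω)) (fun ω => Φ (X 0 ω)) ℙ ℙ :=
    fun i => (⟨(hX i).aemeasurable, (hX 0).aemeasurable, by rw [hXlaw i, hXlaw 0]⟩ :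
      ProbabilityTheory.IdentDistrib (X i) (X 0) ℙ ℙ).comp hΦ
  have hslln := ProbabilityTheory.strong_law_ae (μ := ℙ) (fun i ω => Φ (X i ω)) hint hindep hident
  set F : C(Θ, ℝ) := ∫ ω, Φ (X 0 ω) ∂ℙ with hFdef
  have hFeval : ∀ θ : Θ, F θ = ∫ x, Real.exp (c * φ x θ) ∂Q := by
    intro θ
    have h1 : F θ = ∫ ω, Φ (X 0 ω) θ ∂ℙ :=
      ((ContinuousMap.evalCLM ℝ θ).integral_comp_comm hint).symm
    rw [h1]
    have h2 : (fun ω => Φ (X 0 ω) θ) = fun ω => Real.exp (c * φ (X 0 ω) θ) := rfl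
    rw [h2, ← hXlaw 0]
    exact (integral_map (hX 0).aemeasurable
      (((hφmeas θ).const_mul c).exp.aestronglyMeasurable)).symm
  have hnegint : Integrable (fun x => Real.exp (-(|c| * ψ x))) Q := by
    apply Integrable.mono' (integrable_const 1) ((hψ.const_mul |c|).neg.exp.aestronglyMeasurable)
    apply Eventually.of_forall
    intro x
    rw [Real.norm_eq_abs, Real.abs_exp]
    exact Real.exp_le_one_iff.2 (neg_nonpos.2 (mul_nonneg (abs_nonneg c) (hψ0 x)))
  have hcQ : 0 < ∫ x, Real.exp (-(|c| * ψ x)) ∂Q := by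
    rw [integral_pos_iff_support_of_nonneg (fun x => (Real.exp_pos _).le) hnegint]
    have : Function.support (fun x => Real.exp (-(|c| * ψ x))) = Set.univ := by
      ext x; simp [Real.exp_ne_zero]
    rw [this]
    simp
  have hintθ : ∀ θ : Θ, Integrable (fun x => Real.exp (c * φ x θ)) Q := by
    intro θ
    apply Integrable.mono' hψQ (((hφmeas θ).const_mul c).exp.aestronglyMeasurable)
    apply Eventually.of_forall
    intro x
    exact hptbound x θ
  have hFlow : ∀ θ : Θ, (∫ x, Real.exp (-(|c| * ψ x)) ∂Q) ≤ F θ := by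
    intro θ
    rw [hFeval θ]
    apply integral_mono hnegint (hintθ θ)
    intro x
    apply Real.exp_le_exp.2
    have h1 : |c * φ x θ| ≤ |c| * ψ x := by
      rw [abs_mul]; exact mul_le_mul_of_nonneg_left (hψbound x θ) (abs_nonneg _)
    linarith [(abs_le.1 h1).1]
  refine ⟨F, ∫ x, Real.exp (-(|c| * ψ x)) ∂Q, hcQ, hFlow, hFeval, ?_⟩
  filter_upwards [hslln] with ω hω
  intro δ hδ
  have h1 := (Metric.tendsto_atTop.1 hω) δ hδ
  obtain ⟨M, hM⟩ := h1
  rw [eventually_atTop]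
  refine ⟨M, fun n hn θ => ?_⟩
  have h2 := hM n hn
  have h3 : dist (((n : ℝ)⁻¹ • ∑ i ∈ Finset.range n, Φ (X i ω)) θ) (F θ) ≤
      dist ((n : ℝ)⁻¹ • ∑ i ∈ Finset.range n, Φ (X i ω)) F :=
    ContinuousMap.dist_apply_le_dist θ
  have h4 : (((n : ℝ)⁻¹ • ∑ i ∈ Finset.range n, Φ (X i ω)) θ : ℝ) =
      (n : ℝ)⁻¹ * ∑ i ∈ Finset.range n, Real.exp (c * φ (X i ω) θ) := by
    simp [hΦdef]
  rw [h4, Real.dist_eq] at h3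
  linarith [le_of_lt (lt_of_le_of_lt h3 h2)]

/-- For a compact parameter space `Θ`, `φ(·,θ)` measurable and continuous in
`θ`, uniformly bounded by `ψ` with `e^{|α-1|ψ} ∈ L¹(Q)` and `e^{|α|ψ} ∈ L¹(P)`, the
empirical Rényi–Donsker–Varadhan estimator built from iid `Q`-samples `X_i` and iid
`P`-samples `Y_i` converges in probability to the population value
`sup_θ {(1/(α-1)) log ∫ e^{(α-1)φ_θ} dQ - (1/α) log ∫ e^{αφ_θ} dP}`. -/
theorem renyi_estimator_consistency_fixed_k
    {Ω N Θ : Type*} [MeasurableSpace Ω] [MetricSpace Θ] [CompactSpace Θ]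
    [MeasurableSpace N] (ℙ : Measure N) [IsProbabilityMeasure ℙ]
    (Q P : Measure Ω) [IsProbabilityMeasure Q] [IsProbabilityMeasure P]
    {α : ℝ} (hα0 : α ≠ 0) (hα1 : α ≠ 1)
    (φ : Ω → Θ → ℝ) (hφmeas : ∀ θ, Measurable fun x => φ x θ)
    (hφcont : ∀ x, Continuous fun θ => φ x θ)
    (ψ : Ω → ℝ) (hψ : Measurable ψ) (hψbound : ∀ x θ, |φ x θ| ≤ ψ x)
    (hψQ : Integrable (fun x => Real.exp (|α - 1| * ψ x)) Q)
    (hψP : Integrable (fun x => Real.exp (|α| * ψ x)) P)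
    (X Y : ℕ → N → Ω) (hX : ∀ i, Measurable (X i)) (hY : ∀ i, Measurable (Y i))
    (hXiid : ProbabilityTheory.iIndepFun X ℙ)
    (hYiid : ProbabilityTheory.iIndepFun Y ℙ)
    (hXlaw : ∀ i, Measure.map (X i) ℙ = Q) (hYlaw : ∀ i, Measure.map (Y i) ℙ = P) :
    ∀ ε : ℝ, 0 < ε →
      Tendsto (fun n : ℕ => ℙ {ω : N |
          ε ≤ |(⨆ θ : Θ,
              ((α - 1)⁻¹ * Real.log ((n : ℝ)⁻¹ *
                  ∑ i ∈ Finset.range n, Real.exp ((α - 1) * φ (X i ω) θ))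
                - α⁻¹ * Real.log ((n : ℝ)⁻¹ *
                    ∑ i ∈ Finset.range n, Real.exp (α * φ (Y i ω) θ))))
            - (⨆ θ : Θ,
              ((α - 1)⁻¹ * Real.log (∫ x, Real.exp ((α - 1) * φ x θ) ∂Q)
                - α⁻¹ * Real.log (∫ x, Real.exp (α * φ x θ) ∂P)))| })
        atTop (𝓝 0) := by
  rcases isEmpty_or_nonempty Θ with hΘ | hΘ
  · intro ε hε
    have hset : ∀ n : ℕ, {ω : N |
        ε ≤ |(⨆ θ : Θ,
            ((α - 1)⁻¹ * Real.log ((n : ℝ)⁻¹ *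
                ∑ i ∈ Finset.range n, Real.exp ((α - 1) * φ (X i ω) θ))
              - α⁻¹ * Real.log ((n : ℝ)⁻¹ *
                  ∑ i ∈ Finset.range n, Real.exp (α * φ (Y i ω) θ))))
          - (⨆ θ : Θ,
            ((α - 1)⁻¹ * Real.log (∫ x, Real.exp ((α - 1) * φ x θ) ∂Q)
              - α⁻¹ * Real.log (∫ x, Real.exp (α * φ x θ) ∂P)))| } = ∅ := by
      intro n
      ext ω
      simp only [Set.mem_setOf_eq, Set.mem_empty_iff_false, iff_false, not_le,
        Real.iSup_of_isEmpty, sub_zero, abs_zero]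
      exact hε
    simp only [hset, measure_empty]
    exact tendsto_const_nhds
  · have hc1 : α - 1 ≠ 0 := sub_ne_zero.2 hα1
    have ha : (0 : ℝ) < |(α - 1)⁻¹| := abs_pos.2 (inv_ne_zero hc1)
    have hb : (0 : ℝ) < |α⁻¹| := abs_pos.2 (inv_ne_zero hα0)
    obtain ⟨FQ, mQ, hmQ, hFQlow, hFQeval, haeQ⟩ :=
      aux_half ℙ Q (α - 1) φ hφmeas hφcont ψ hψ hψbound hψQ X hX hXiid hXlaw
    obtain ⟨FP, mP, hmP, hFPlow, hFPeval, haeP⟩ :=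
      aux_half ℙ P α φ hφmeas hφcont ψ hψ hψbound hψP Y hY hYiid hYlaw
    obtain ⟨t, ht⟩ := exists_dense_seq Θ
    -- continuity in θ of the empirical criterion
    have hcontE : ∀ (n : ℕ) (ω : N), Continuous fun θ : Θ =>
        ((α - 1)⁻¹ * Real.log ((n : ℝ)⁻¹ *
            ∑ i ∈ Finset.range n, Real.exp ((α - 1) * φ (X i ω) θ))
          - α⁻¹ * Real.log ((n : ℝ)⁻¹ *
              ∑ i ∈ Finset.range n, Real.exp (α * φ (Y i ω) θ))) := by
      intro n ω
      rcases Nat.eq_zero_or_pos n with hn | hn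
      · subst hn
        simp only [Finset.range_zero, Finset.sum_empty, mul_zero, Real.log_zero, sub_zero,
          Nat.cast_zero]
        exact continuous_const
      · have hlog : ∀ (c : ℝ) (Z : ℕ → N → Ω), Continuous fun θ : Θ =>
            Real.log ((n : ℝ)⁻¹ * ∑ i ∈ Finset.range n, Real.exp (c * φ (Z i ω) θ)) := by
          intro c Z
          have hv : Continuous fun θ : Θ =>
              (n : ℝ)⁻¹ * ∑ i ∈ Finset.range n, Real.exp (c * φ (Z i ω) θ) :=
            continuous_const.mul (continuous_finset_sum _ fun i _ =>
              Real.continuous_exp.comp (continuous_const.mul (hφcont _)))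
          have hvpos : ∀ θ : Θ,
              0 < (n : ℝ)⁻¹ * ∑ i ∈ Finset.range n, Real.exp (c * φ (Z i ω) θ) := by
            intro θ
            exact mul_pos (inv_pos.2 (Nat.cast_pos.2 hn))
              (Finset.sum_pos (fun i _ => Real.exp_pos _) (Finset.nonempty_range_iff.2 hn.ne'))
          exact hv.log fun θ => (hvpos θ).ne'
        exact (continuous_const.mul (hlog (α - 1) X)).sub (continuous_const.mul (hlog α Y))
    -- measurability of the empirical criterion
    have hmeasE : ∀ n : ℕ, AEStronglyMeasurable (fun ω : N => ⨆ θ : Θ,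
        ((α - 1)⁻¹ * Real.log ((n : ℝ)⁻¹ *
            ∑ i ∈ Finset.range n, Real.exp ((α - 1) * φ (X i ω) θ))
          - α⁻¹ * Real.log ((n : ℝ)⁻¹ *
              ∑ i ∈ Finset.range n, Real.exp (α * φ (Y i ω) θ)))) ℙ := by
      intro n
      have hrw : (fun ω : N => ⨆ θ : Θ,
          ((α - 1)⁻¹ * Real.log ((n : ℝ)⁻¹ *
              ∑ i ∈ Finset.range n, Real.exp ((α - 1) * φ (X i ω) θ))
            - α⁻¹ * Real.log ((n : ℝ)⁻¹ *
                ∑ i ∈ Finset.range n, Real.exp (α * φ (Y i ω) θ)))) = fun ω : N => ⨆ k : ℕ,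
          ((α - 1)⁻¹ * Real.log ((n : ℝ)⁻¹ *
              ∑ i ∈ Finset.range n, Real.exp ((α - 1) * φ (X i ω) (t k)))
            - α⁻¹ * Real.log ((n : ℝ)⁻¹ *
                ∑ i ∈ Finset.range n, Real.exp (α * φ (Y i ω) (t k)))) :=
        funext fun ω => aux_ciSup_dense ht (hcontE n ω)
      rw [hrw]
      apply Measurable.aestronglyMeasurable
      apply Measurable.iSup
      intro k
      apply Measurable.sub
      · exact (((Finset.measurable_sum _ fun i _ =>
          (((hφmeas (t k)).comp (hX i)).const_mul _).exp).const_mul _).log).const_mul _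
      · exact (((Finset.measurable_sum _ fun i _ =>
          (((hφmeas (t k)).comp (hY i)).const_mul _).exp).const_mul _).log).const_mul _
    -- almost sure convergence
    have hae : ∀ᵐ ω ∂ℙ, Tendsto (fun n : ℕ => ⨆ θ : Θ,
        ((α - 1)⁻¹ * Real.log ((n : ℝ)⁻¹ *
            ∑ i ∈ Finset.range n, Real.exp ((α - 1) * φ (X i ω) θ))
          - α⁻¹ * Real.log ((n : ℝ)⁻¹ *
              ∑ i ∈ Finset.range n, Real.exp (α * φ (Y i ω) θ)))) atTop
        (𝓝 (⨆ θ : Θ,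
          ((α - 1)⁻¹ * Real.log (∫ x, Real.exp ((α - 1) * φ x θ) ∂Q)
            - α⁻¹ * Real.log (∫ x, Real.exp (α * φ x θ) ∂P)))) := by
      filter_upwards [haeQ, haeP] with ω hQω hPω
      simp only [← hFQeval, ← hFPeval]
      rw [Metric.tendsto_atTop]
      intro ε' hε'
      have hδQpos : (0 : ℝ) < min (mQ / 2) (ε' * mQ / (8 * |(α - 1)⁻¹|)) :=
        lt_min (half_pos hmQ) (by positivity)
      have hδPpos : (0 : ℝ) < min (mP / 2) (ε' * mP / (8 * |α⁻¹|)) :=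
        lt_min (half_pos hmP) (by positivity)
      obtain ⟨N1, hN1⟩ := eventually_atTop.1 (hQω _ hδQpos)
      obtain ⟨N2, hN2⟩ := eventually_atTop.1 (hPω _ hδPpos)
      refine ⟨max N1 N2, fun n hn => ?_⟩
      have hfn := hN1 n (le_trans (le_max_left _ _) hn)
      have hgn := hN2 n (le_trans (le_max_right _ _) hn)
      rw [Real.dist_eq]
      have hδQ1 : min (mQ / 2) (ε' * mQ / (8 * |(α - 1)⁻¹|)) ≤ mQ / 2 := min_le_left _ _
      have hδQ2 : min (mQ / 2) (ε' * mQ / (8 * |(α - 1)⁻¹|)) ≤ ε' * mQ / (8 * |(α - 1)⁻¹|) :=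
        min_le_right _ _
      have hδP1 : min (mP / 2) (ε' * mP / (8 * |α⁻¹|)) ≤ mP / 2 := min_le_left _ _
      have hδP2 : min (mP / 2) (ε' * mP / (8 * |α⁻¹|)) ≤ ε' * mP / (8 * |α⁻¹|) := min_le_right _ _
      have hflow : ∀ θ : Θ, mQ / 2 ≤
          (n : ℝ)⁻¹ * ∑ i ∈ Finset.range n, Real.exp ((α - 1) * φ (X i ω) θ) := by
        intro θ
        have h1 := (abs_le.1 (hfn θ)).1
        have h2 := hFQlow θ
        linarith
      have hglow : ∀ θ : Θ, mP / 2 ≤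
          (n : ℝ)⁻¹ * ∑ i ∈ Finset.range n, Real.exp (α * φ (Y i ω) θ) := by
        intro θ
        have h1 := (abs_le.1 (hgn θ)).1
        have h2 := hFPlow θ
        linarith
      have hlogf : ∀ θ : Θ,
          |Real.log ((n : ℝ)⁻¹ * ∑ i ∈ Finset.range n, Real.exp ((α - 1) * φ (X i ω) θ))
            - Real.log (FQ θ)| ≤ min (mQ / 2) (ε' * mQ / (8 * |(α - 1)⁻¹|)) / (mQ / 2) := by
        intro θ
        refine le_trans (aux_abs_log_sub_log (half_pos hmQ) (hflow θ)
          (le_trans (half_le_self hmQ.le) (hFQlow θ))) ?_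
        exact (div_le_div_iff_of_pos_right (half_pos hmQ)).2 (hfn θ)
      have hlogg : ∀ θ : Θ,
          |Real.log ((n : ℝ)⁻¹ * ∑ i ∈ Finset.range n, Real.exp (α * φ (Y i ω) θ))
            - Real.log (FP θ)| ≤ min (mP / 2) (ε' * mP / (8 * |α⁻¹|)) / (mP / 2) := by
        intro θ
        refine le_trans (aux_abs_log_sub_log (half_pos hmP) (hglow θ)
          (le_trans (half_le_self hmP.le) (hFPlow θ))) ?_
        exact (div_le_div_iff_of_pos_right (half_pos hmP)).2 (hgn θ)
      have hptw : ∀ θ : Θ,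
          |((α - 1)⁻¹ * Real.log ((n : ℝ)⁻¹ *
              ∑ i ∈ Finset.range n, Real.exp ((α - 1) * φ (X i ω) θ))
            - α⁻¹ * Real.log ((n : ℝ)⁻¹ *
                ∑ i ∈ Finset.range n, Real.exp (α * φ (Y i ω) θ)))
          - ((α - 1)⁻¹ * Real.log (FQ θ) - α⁻¹ * Real.log (FP θ))| ≤
            |(α - 1)⁻¹| * (min (mQ / 2) (ε' * mQ / (8 * |(α - 1)⁻¹|)) / (mQ / 2))
            + |α⁻¹| * (min (mP / 2) (ε' * mP / (8 * |α⁻¹|)) / (mP / 2)) := by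
        intro θ
        have e1 : ((α - 1)⁻¹ * Real.log ((n : ℝ)⁻¹ *
              ∑ i ∈ Finset.range n, Real.exp ((α - 1) * φ (X i ω) θ))
            - α⁻¹ * Real.log ((n : ℝ)⁻¹ *
                ∑ i ∈ Finset.range n, Real.exp (α * φ (Y i ω) θ)))
          - ((α - 1)⁻¹ * Real.log (FQ θ) - α⁻¹ * Real.log (FP θ))
          = (α - 1)⁻¹ * (Real.log ((n : ℝ)⁻¹ *
              ∑ i ∈ Finset.range n, Real.exp ((α - 1) * φ (X i ω) θ)) - Real.log (FQ θ))
            + -(α⁻¹ * (Real.log ((n : ℝ)⁻¹ *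
              ∑ i ∈ Finset.range n, Real.exp (α * φ (Y i ω) θ)) - Real.log (FP θ))) := by
          ring
        rw [e1]
        refine le_trans (abs_add_le _ _) ?_
        rw [abs_neg, abs_mul, abs_mul]
        have k1 := mul_le_mul_of_nonneg_left (hlogf θ) (abs_nonneg ((α - 1)⁻¹))
        have k2 := mul_le_mul_of_nonneg_left (hlogg θ) (abs_nonneg (α⁻¹))
        linarith
      have hBcont : Continuous fun θ : Θ =>
          ((α - 1)⁻¹ * Real.log (FQ θ) - α⁻¹ * Real.log (FP θ)) := by
        have h1 : Continuous fun θ : Θ => Real.log (FQ θ) :=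
          FQ.continuous.log fun θ => (lt_of_lt_of_le hmQ (hFQlow θ)).ne'
        have h2 : Continuous fun θ : Θ => Real.log (FP θ) :=
          FP.continuous.log fun θ => (lt_of_lt_of_le hmP (hFPlow θ)).ne'
        exact (continuous_const.mul h1).sub (continuous_const.mul h2)
      refine lt_of_le_of_lt (aux_abs_ciSup_sub ((isCompact_range (hcontE n ω)).bddAbove)
        ((isCompact_range hBcont).bddAbove) hptw) ?_
      have k1 : |(α - 1)⁻¹| * (min (mQ / 2) (ε' * mQ / (8 * |(α - 1)⁻¹|)) / (mQ / 2)) ≤ ε' / 4 := by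
        have h3 : |(α - 1)⁻¹| * (min (mQ / 2) (ε' * mQ / (8 * |(α - 1)⁻¹|)) / (mQ / 2))
            = 2 * |(α - 1)⁻¹| * min (mQ / 2) (ε' * mQ / (8 * |(α - 1)⁻¹|)) / mQ := by
          field_simp
        rw [h3, div_le_iff₀ hmQ]
        calc 2 * |(α - 1)⁻¹| * min (mQ / 2) (ε' * mQ / (8 * |(α - 1)⁻¹|))
            ≤ 2 * |(α - 1)⁻¹| * (ε' * mQ / (8 * |(α - 1)⁻¹|)) := by gcongr
          _ = ε' / 4 * mQ := by field_simp; ring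
      have k2 : |α⁻¹| * (min (mP / 2) (ε' * mP / (8 * |α⁻¹|)) / (mP / 2)) ≤ ε' / 4 := by
        have h3 : |α⁻¹| * (min (mP / 2) (ε' * mP / (8 * |α⁻¹|)) / (mP / 2))
            = 2 * |α⁻¹| * min (mP / 2) (ε' * mP / (8 * |α⁻¹|)) / mP := by
          field_simp
        rw [h3, div_le_iff₀ hmP]
        calc 2 * |α⁻¹| * min (mP / 2) (ε' * mP / (8 * |α⁻¹|))
            ≤ 2 * |α⁻¹| * (ε' * mP / (8 * |α⁻¹|)) := by gcongr
          _ = ε' / 4 * mP := by field_simp; ring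
      linarith
    intro ε hε
    have H := tendstoInMeasure_of_tendsto_ae (μ := ℙ) hmeasE hae
    simpa only [Real.dist_eq] using (tendstoInMeasure_iff_dist.1 H) ε hε
end
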